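/- arXiv:2002.06266 — 7 statements merged into one kernel-verified Lean document; each statement's English description precedes it below -/
import Mathlib

section
/- For every t ∈ [0,T], the iterated ordinary integral J_n admits the decomposition J_n(t) = Σ_{k=1}^{n} (−1)^{k+1} J_{n−k}(t) (w(t)^k / k!) P_k(t) + Σ_{k=1}^{n} (−1)^{k} ∫_0^t J_{n−k}(s) (w(s)^k / k!) P_k'(s) ds. -/
open MeasureTheory Set

namespace L41

lemma intOn_cont_mul {T : ℝ} {c h : ℝ → ℝ} (hc : ContinuousOn c (Icc 0 T))
    (hh : IntegrableOn h (Icc 0 T)) :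
    IntegrableOn (fun s => c s * h s) (Icc 0 T) := by
  rcases (isCompact_Icc : IsCompact (Icc (0:ℝ) T)).exists_bound_of_continuousOn hc with ⟨C, hC⟩
  exact Integrable.bdd_mul hh (hc.aestronglyMeasurable measurableSet_Icc)
    ((ae_restrict_iff' measurableSet_Icc).2 (ae_of_all _ fun x hx => hC x hx))

lemma intOn_shape {T : ℝ} {v : ℝ → ℝ} (hv : IntegrableOn v (Icc 0 T)) {c g : ℝ → ℝ}
    (hc : ContinuousOn c (Icc 0 T)) (heq : ∀ s, g s = c s * v s) :
    IntegrableOn g (Icc 0 T) := by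
  rw [show g = fun s => c s * v s from funext heq]
  exact intOn_cont_mul hc hv

lemma II {T t : ℝ} (ht : t ∈ Icc (0:ℝ) T) {h : ℝ → ℝ} (hh : IntegrableOn h (Icc 0 T)) :
    IntervalIntegrable h volume 0 t := by
  apply IntegrableOn.intervalIntegrable
  rw [uIcc_of_le ht.1]
  exact hh.mono_set (Icc_subset_Icc le_rfl ht.2)

lemma II' {T r t : ℝ} (hr : r ∈ Icc (0:ℝ) T) (ht : t ∈ Icc (0:ℝ) T) (hrt : r ≤ t)
    {h : ℝ → ℝ} (hh : IntegrableOn h (Icc 0 T)) :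
    IntervalIntegrable h volume r t := by
  apply IntegrableOn.intervalIntegrable
  rw [uIcc_of_le hrt]
  exact hh.mono_set (Icc_subset_Icc hr.1 ht.2)

lemma fubini_core {t : ℝ} {g h : ℝ → ℝ}
    (hg : IntegrableOn g (Ioc 0 t)) (hh : IntegrableOn h (Ioc 0 t)) :
    ∫ s in Ioc (0:ℝ) t, h s * ∫ r in Ioc (0:ℝ) s, g r
      = ∫ r in Ioc (0:ℝ) t, g r * ∫ s in Ioc r t, h s := by
  set μ := volume.restrict (Ioc (0:ℝ) t) with hμ
  set F : ℝ × ℝ → ℝ :=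
    fun p => Set.indicator {q : ℝ × ℝ | q.1 ≤ q.2} (fun q => g q.1 * h q.2) p with hF
  have hmeas : MeasurableSet {q : ℝ × ℝ | q.1 ≤ q.2} :=
    measurableSet_le measurable_fst measurable_snd
  have hFint : Integrable F (μ.prod μ) := (Integrable.mul_prod hg hh).indicator hmeas
  have swap : (∫ r, ∫ s, F (r, s) ∂μ ∂μ) = ∫ s, ∫ r, F (r, s) ∂μ ∂μ :=
    MeasureTheory.integral_integral_swap hFint
  have hL : (∫ r, ∫ s, F (r, s) ∂μ ∂μ) = ∫ r in Ioc (0:ℝ) t, g r * ∫ s in Ioc r t, h s := by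
    rw [hμ]
    refine setIntegral_congr_fun measurableSet_Ioc fun r hr => ?_
    have h1 : (fun s => F (r, s)) = fun s => (Ici r).indicator (fun s' => g r * h s') s := by
      funext s
      simp [hF, Set.indicator_apply, Set.mem_Ici]
    rw [h1, ← hμ, integral_indicator measurableSet_Ici, hμ,
      Measure.restrict_restrict measurableSet_Ici]
    have h2 : Ici r ∩ Ioc (0:ℝ) t = Icc r t := by
      ext x
      simp only [mem_inter_iff, mem_Ici, mem_Ioc, mem_Icc]
      exact ⟨fun hx => ⟨hx.1, hx.2.2⟩, fun hx => ⟨hx.1, lt_of_lt_of_le hr.1 hx.1, hx.2⟩⟩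
    rw [h2, integral_Icc_eq_integral_Ioc, integral_const_mul]
  have hR : (∫ s, ∫ r, F (r, s) ∂μ ∂μ) = ∫ s in Ioc (0:ℝ) t, h s * ∫ r in Ioc (0:ℝ) s, g r := by
    rw [hμ]
    refine setIntegral_congr_fun measurableSet_Ioc fun s hs => ?_
    have h1 : (fun r => F (r, s)) = fun r => (Iic s).indicator (fun r' => g r' * h s) r := by
      funext r
      simp [hF, Set.indicator_apply, Set.mem_Iic]
    rw [h1, ← hμ, integral_indicator measurableSet_Iic, hμ,
      Measure.restrict_restrict measurableSet_Iic]
    have h2 : Iic s ∩ Ioc (0:ℝ) t = Ioc (0:ℝ) s := by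
      ext x
      simp only [mem_inter_iff, mem_Iic, mem_Ioc]
      exact ⟨fun hx => ⟨hx.2.1, hx.1⟩, fun hx => ⟨hx.2, hx.1, hx.2.trans hs.2⟩⟩
    rw [h2, integral_mul_const, mul_comm]
  rw [← hL, swap, hR]

/-- `G` is the primitive of `g` on `[0,T]`. -/
structure Ind (T : ℝ) (g G : ℝ → ℝ) : Prop where
  int : IntegrableOn g (Icc 0 T)
  eq : ∀ t ∈ Icc (0:ℝ) T, G t = ∫ s in (0:ℝ)..t, g s

lemma Ind.contOn {T : ℝ} (hT : 0 ≤ T) {g G : ℝ → ℝ} (h : Ind T g G) :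
    ContinuousOn G (Icc 0 T) := by
  have h1 : IntegrableOn g (uIcc 0 T) := by rw [uIcc_of_le hT]; exact h.int
  have := intervalIntegral.continuousOn_primitive_interval (a := 0) (b := T) (μ := volume) h1
  rw [uIcc_of_le hT] at this
  exact this.congr h.eq

lemma Ind.smul {T : ℝ} {g G : ℝ → ℝ} (h : Ind T g G) (c : ℝ) :
    Ind T (fun s => c * g s) (fun s => c * G s) := by
  refine ⟨h.int.const_mul c, fun t ht => ?_⟩
  rw [h.eq t ht, intervalIntegral.integral_const_mul]

lemma Ind.mul {T : ℝ} (hT : 0 ≤ T) {g₁ G₁ g₂ G₂ : ℝ → ℝ}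
    (h₁ : Ind T g₁ G₁) (h₂ : Ind T g₂ G₂) :
    Ind T (fun s => g₁ s * G₂ s + G₁ s * g₂ s) (fun s => G₁ s * G₂ s) := by
  have c₁ := h₁.contOn hT
  have c₂ := h₂.contOn hT
  have i₁ : IntegrableOn (fun s => g₁ s * G₂ s) (Icc 0 T) := by
    have := intOn_cont_mul c₂ h₁.int
    exact this.congr_fun (fun x _ => mul_comm _ _) measurableSet_Icc
  have i₂ : IntegrableOn (fun s => G₁ s * g₂ s) (Icc 0 T) := intOn_cont_mul c₁ h₂.int
  refine ⟨i₁.add i₂, fun t ht => ?_⟩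
  have h0t : (0:ℝ) ≤ t := ht.1
  have sub' : Ioc (0:ℝ) t ⊆ Icc 0 T := fun x hx => ⟨hx.1.le, hx.2.trans ht.2⟩
  rw [intervalIntegral.integral_add (II ht i₁) (II ht i₂)]
  have e1 : (∫ s in (0:ℝ)..t, G₁ s * g₂ s)
      = G₁ t * G₂ t - ∫ s in (0:ℝ)..t, g₁ s * G₂ s := by
    rw [intervalIntegral.integral_of_le h0t]
    have hcg : (∀ s ∈ Ioc (0:ℝ) t, G₁ s * g₂ s = g₂ s * ∫ r in Ioc (0:ℝ) s, g₁ r) := by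
      intro s hs
      rw [h₁.eq s (sub' hs), intervalIntegral.integral_of_le hs.1.le, mul_comm]
    rw [setIntegral_congr_fun measurableSet_Ioc hcg,
      fubini_core (h₁.int.mono_set sub') (h₂.int.mono_set sub')]
    have hsub : (∀ r ∈ Ioc (0:ℝ) t, g₁ r * ∫ s in Ioc r t, g₂ s
        = g₁ r * G₂ t - g₁ r * G₂ r) := by
      intro r hr
      have hIoc : (∫ s in Ioc r t, g₂ s) = G₂ t - G₂ r := by
        rw [← intervalIntegral.integral_of_le hr.2, h₂.eq t ht, h₂.eq r (sub' hr),
          intervalIntegral.integral_interval_sub_left (II ht h₂.int) (II (sub' hr) h₂.int)]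
      rw [hIoc, mul_sub]
    rw [setIntegral_congr_fun measurableSet_Ioc hsub,
      integral_sub ((h₁.int.mono_set sub').mul_const _) (i₁.mono_set sub'),
      integral_mul_const, h₁.eq t ht, intervalIntegral.integral_of_le h0t,
      intervalIntegral.integral_of_le h0t]
  rw [e1]
  ring

lemma Ind.parts {T : ℝ} (hT : 0 ≤ T) {g G : ℝ → ℝ} (h : Ind T g G) {u u' : ℝ → ℝ}
    (hu : ∀ x ∈ Icc (0:ℝ) T, HasDerivWithinAt u (u' x) (Icc 0 T) x)
    (hu' : ContinuousOn u' (Icc 0 T)) {t : ℝ} (ht : t ∈ Icc (0:ℝ) T) :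
    G t * u t = (∫ s in (0:ℝ)..t, g s * u s) + ∫ s in (0:ℝ)..t, G s * u' s := by
  have h0t : (0:ℝ) ≤ t := ht.1
  have sub' : Ioc (0:ℝ) t ⊆ Icc 0 T := fun x hx => ⟨hx.1.le, hx.2.trans ht.2⟩
  have ucont : ContinuousOn u (Icc 0 T) := fun x hx => (hu x hx).continuousWithinAt
  have hu'int : IntegrableOn u' (Icc 0 T) := hu'.integrableOn_Icc
  have e2 : (∫ s in (0:ℝ)..t, G s * u' s)
      = G t * u t - ∫ s in (0:ℝ)..t, g s * u s := by
    rw [intervalIntegral.integral_of_le h0t]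
    have hcg : (∀ s ∈ Ioc (0:ℝ) t, G s * u' s = u' s * ∫ r in Ioc (0:ℝ) s, g r) := by
      intro s hs
      rw [h.eq s (sub' hs), intervalIntegral.integral_of_le hs.1.le, mul_comm]
    rw [setIntegral_congr_fun measurableSet_Ioc hcg,
      fubini_core (h.int.mono_set sub') (hu'int.mono_set sub')]
    have hsub : (∀ r ∈ Ioc (0:ℝ) t, g r * ∫ s in Ioc r t, u' s
        = g r * u t - g r * u r) := by
      intro r hr
      have hIoc : (∫ s in Ioc r t, u' s) = u t - u r := by
        rw [← intervalIntegral.integral_of_le hr.2]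
        refine intervalIntegral.integral_eq_sub_of_hasDeriv_right_of_le hr.2
          (ucont.mono (Icc_subset_Icc hr.1.le ht.2)) (fun x hx => ?_)
          (II' (sub' hr) ht hr.2 hu'int)
        have hx' : x ∈ Icc (0:ℝ) T := ⟨(hr.1.trans hx.1).le, (hx.2.trans_le ht.2).le⟩
        have hnhds : Icc (0:ℝ) T ∈ nhds x :=
          Icc_mem_nhds (hr.1.trans hx.1) (hx.2.trans_le ht.2)
        exact ((hu x hx').hasDerivAt hnhds).hasDerivWithinAt
      rw [hIoc, mul_sub]
    rw [setIntegral_congr_fun measurableSet_Ioc hsub,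
      integral_sub ((h.int.mono_set sub').mul_const _)
        ((intOn_cont_mul ucont h.int).congr_fun (fun x _ => mul_comm _ _)
          measurableSet_Icc |>.mono_set sub'),
      integral_mul_const, h.eq t ht, intervalIntegral.integral_of_le h0t,
      intervalIntegral.integral_of_le h0t]
  rw [e2]
  ring


end L41

/-- Lemma 4.1 of the paper (pathwise): decomposition of the iterated ordinary
integral `J n` in terms of `J (n-k)`, powers of `w`, and the products
`P k = ∏_{l=1}^k f_{n+1-l}` and their derivatives. -/
theorem stmt0
    (T : ℝ) (hT : 0 < T) (n : ℕ) (hn : 1 ≤ n)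
    (f : ℕ → ℝ → ℝ)
    (hf : ∀ i, 1 ≤ i → i ≤ n → ContDiffOn ℝ 1 (f i) (Set.Icc 0 T))
    (v : ℝ → ℝ) (hv : IntegrableOn v (Set.Icc 0 T))
    (w : ℝ → ℝ) (hw : ∀ t, w t = ∫ s in (0:ℝ)..t, v s)
    (J : ℕ → ℝ → ℝ)
    (hJ0 : ∀ t, J 0 t = 1)
    (hJ : ∀ k, 1 ≤ k → k ≤ n → ∀ t,
      J k t = ∫ s in (0:ℝ)..t, f k s * J (k - 1) s * v s)
    (P : ℕ → ℝ → ℝ)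
    (hP : ∀ k t, P k t = ∏ l ∈ Finset.Icc 1 k, f (n + 1 - l) t)
    (P' : ℕ → ℝ → ℝ)
    (hP' : ∀ k, 1 ≤ k → k ≤ n → ∀ t ∈ Set.Icc (0:ℝ) T,
      HasDerivWithinAt (P k) (P' k t) (Set.Icc 0 T) t) :
    ∀ t ∈ Set.Icc (0:ℝ) T,
      J n t
        = (∑ k ∈ Finset.Icc 1 n,
            (-1 : ℝ) ^ (k + 1) * J (n - k) t * (w t ^ k / (Nat.factorial k : ℝ))
              * P k t)
        + ∑ k ∈ Finset.Icc 1 n,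
            (-1 : ℝ) ^ k *
              ∫ s in (0:ℝ)..t,
                J (n - k) s * (w s ^ k / (Nat.factorial k : ℝ)) * P' k s := by
  intro t ht
  have hT' : (0:ℝ) ≤ T := hT.le
  have Indw : L41.Ind T v w := ⟨hv, fun s _ => hw s⟩
  have wCont : ContinuousOn w (Set.Icc 0 T) := Indw.contOn hT'
  -- facts about J
  have JF : ∀ k, k ≤ n → ContinuousOn (J k) (Set.Icc 0 T) ∧
      (1 ≤ k → L41.Ind T (fun s => f k s * J (k - 1) s * v s) (J k)) := by
    intro k
    induction k with
    | zero =>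
      intro _
      exact ⟨continuousOn_const.congr fun s _ => hJ0 s, by omega⟩
    | succ k ih =>
      intro hk
      have hk' : k ≤ n := by omega
      obtain ⟨ck, -⟩ := ih hk'
      have hfk : ContinuousOn (f (k + 1)) (Set.Icc 0 T) :=
        (hf (k + 1) (by omega) hk).continuousOn
      have hint : IntegrableOn (fun s => f (k + 1) s * J (k + 1 - 1) s * v s)
          (Set.Icc 0 T) :=
        L41.intOn_shape hv (c := fun s => f (k + 1) s * J k s) (hfk.mul ck)
          fun s => by simp only [Nat.add_sub_cancel]
      have ind : L41.Ind T (fun s => f (k + 1) s * J (k + 1 - 1) s * v s) (J (k + 1)) :=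
        ⟨hint, fun s _ => hJ (k + 1) (by omega) hk s⟩
      exact ⟨ind.contOn hT', fun _ => ind⟩
  -- powers of w
  have Pw : ∀ k : ℕ, L41.Ind T (fun s => ((k : ℝ) + 1) * w s ^ k * v s)
      (fun s => w s ^ (k + 1)) := by
    intro k
    induction k with
    | zero =>
      simp only [Nat.cast_zero, zero_add, pow_zero, mul_one, one_mul, pow_one]
      exact Indw
    | succ k ih =>
      have hmul := ih.mul hT' Indw
      have e1 : (fun s => (((k:ℝ) + 1) * w s ^ k * v s) * w s + w s ^ (k + 1) * v s)
          = fun s => (((k + 1 : ℕ) : ℝ) + 1) * w s ^ (k + 1) * v s := by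
        funext s; push_cast; ring
      have e2 : (fun s => w s ^ (k + 1) * w s) = fun s => w s ^ (k + 1 + 1) := by
        funext s; ring
      rw [e1, e2] at hmul
      exact hmul
  have PwS : ∀ k, 1 ≤ k → L41.Ind T
      (fun s => w s ^ (k - 1) / ((k - 1).factorial : ℝ) * v s)
      (fun s => w s ^ k / (k.factorial : ℝ)) := by
    intro k hk
    obtain ⟨m, rfl⟩ : ∃ m, k = m + 1 := ⟨k - 1, by omega⟩
    have hfac : (((m + 1).factorial : ℝ)) = ((m : ℝ) + 1) * (m.factorial : ℝ) := by
      rw [Nat.factorial_succ]; push_cast; ring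
    have hm0 : ((m.factorial : ℝ)) ≠ 0 := by
      exact_mod_cast m.factorial_ne_zero
    have hm1 : ((m : ℝ) + 1) ≠ 0 := by positivity
    have := (Pw m).smul (1 / ((m + 1).factorial : ℝ))
    have e1 : (fun s => 1 / (((m + 1).factorial : ℝ)) * (((m : ℝ) + 1) * w s ^ m * v s))
        = fun s => w s ^ (m + 1 - 1) / (((m + 1 - 1).factorial : ℝ)) * v s := by
      funext s
      simp only [Nat.add_sub_cancel]
      rw [hfac]
      field_simp
    have e2 : (fun s => 1 / (((m + 1).factorial : ℝ)) * w s ^ (m + 1))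
        = fun s => w s ^ (m + 1) / (((m + 1).factorial : ℝ)) := by
      funext s; ring
    rw [e1, e2] at this
    exact this
  -- facts about P
  have prodCD : ∀ s : Finset ℕ,
      (∀ l ∈ s, ContDiffOn ℝ 1 (f (n + 1 - l)) (Set.Icc 0 T)) →
      ContDiffOn ℝ 1 (fun x => ∏ l ∈ s, f (n + 1 - l) x) (Set.Icc 0 T) := by
    intro s
    induction s using Finset.cons_induction with
    | empty => intro _; simpa using contDiffOn_const
    | cons a s ha ih =>
      intro hs
      simp only [Finset.prod_cons]
      exact (hs a (Finset.mem_cons_self a s)).mul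
        (ih fun l hl => hs l (Finset.mem_cons_of_mem hl))
  have PCD : ∀ k, 1 ≤ k → k ≤ n → ContDiffOn ℝ 1 (P k) (Set.Icc 0 T) := by
    intro k h1 h2
    rw [show P k = fun x => ∏ l ∈ Finset.Icc 1 k, f (n + 1 - l) x from funext (hP k)]
    refine prodCD _ fun l hl => ?_
    rw [Finset.mem_Icc] at hl
    exact hf (n + 1 - l) (by omega) (by omega)
  have PCont : ∀ k, 1 ≤ k → k ≤ n → ContinuousOn (P k) (Set.Icc 0 T) :=
    fun k h1 h2 => (PCD k h1 h2).continuousOn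
  have P'Cont : ∀ k, 1 ≤ k → k ≤ n → ContinuousOn (P' k) (Set.Icc 0 T) := by
    intro k h1 h2
    have hud : UniqueDiffOn ℝ (Set.Icc (0:ℝ) T) := uniqueDiffOn_Icc hT
    exact ((PCD k h1 h2).continuousOn_derivWithin hud le_rfl).congr
      fun x hx => ((hP' k h1 h2 x hx).derivWithin (hud x hx)).symm
  have Psucc : ∀ k, 1 ≤ k → k ≤ n → ∀ s, P (k + 1) s = P k s * f (n - k) s := by
    intro k h1 h2 s
    rw [hP (k + 1) s, hP k s, Finset.prod_Icc_succ_top (by omega : 1 ≤ k + 1)]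
    congr 2
    omega
  -- abbreviations
  set B : ℕ → ℝ := fun k => J (n - k) t * (w t ^ k / (Nat.factorial k : ℝ)) * P k t
    with hB
  set C : ℕ → ℝ := fun k => ∫ s in (0:ℝ)..t,
      J (n - k) s * (w s ^ k / (Nat.factorial k : ℝ)) * P' k s with hC
  set A : ℕ → ℝ := fun k => ∫ s in (0:ℝ)..t,
      J (n - k) s * (w s ^ (k - 1) / ((k - 1).factorial : ℝ)) * v s * P k s with hA
  -- the integration-by-parts step, 1 ≤ k < n
  have step : ∀ k, 1 ≤ k → k < n → A k = B k - C k - A (k + 1) := by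
    intro k hk1 hkn
    have hj1 : 1 ≤ n - k := by omega
    have hjn : n - k ≤ n := by omega
    have IndJk := (JF (n - k) hjn).2 hj1
    have Indfull := IndJk.mul hT' (PwS k hk1)
    have parts := Indfull.parts hT' (fun x hx => hP' k hk1 hkn.le x hx)
      (P'Cont k hk1 hkn.le) ht
    -- integrability of the two pieces
    have Jcont' : ContinuousOn (J (n - k - 1)) (Set.Icc 0 T) := (JF (n - k - 1) (by omega)).1
    have Jcont : ContinuousOn (J (n - k)) (Set.Icc 0 T) := (JF (n - k) hjn).1
    have fcont : ContinuousOn (f (n - k)) (Set.Icc 0 T) := (hf (n - k) hj1 hjn).continuousOn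
    have Pkcont := PCont k hk1 hkn.le
    have t1int : IntegrableOn
        (fun s => f (n - k) s * J (n - k - 1) s * v s * (w s ^ k / (k.factorial : ℝ)) * P k s)
        (Set.Icc 0 T) :=
      L41.intOn_shape hv (((fcont.mul Jcont').mul
        ((wCont.pow k).div_const _)).mul Pkcont) fun s => by simp only [Pi.mul_apply, Pi.pow_apply]; ring
    have t2int : IntegrableOn
        (fun s => J (n - k) s * (w s ^ (k - 1) / ((k - 1).factorial : ℝ)) * v s * P k s)
        (Set.Icc 0 T) :=
      L41.intOn_shape hv ((Jcont.mul
        ((wCont.pow (k - 1)).div_const _)).mul Pkcont) fun s => by simp only [Pi.mul_apply, Pi.pow_apply]; ring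
    have e : (∫ s in (0:ℝ)..t,
          (f (n - k) s * J (n - k - 1) s * v s * (w s ^ k / (k.factorial : ℝ))
            + J (n - k) s * (w s ^ (k - 1) / ((k - 1).factorial : ℝ) * v s)) * P k s)
        = (∫ s in (0:ℝ)..t,
            f (n - k) s * J (n - k - 1) s * v s * (w s ^ k / (k.factorial : ℝ)) * P k s)
          + ∫ s in (0:ℝ)..t,
            J (n - k) s * (w s ^ (k - 1) / ((k - 1).factorial : ℝ)) * v s * P k s := by
      rw [← intervalIntegral.integral_add (L41.II ht t1int) (L41.II ht t2int)]
      exact intervalIntegral.integral_congr fun s _ => by ring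
    have eA1 : (∫ s in (0:ℝ)..t,
          f (n - k) s * J (n - k - 1) s * v s * (w s ^ k / (k.factorial : ℝ)) * P k s)
        = A (k + 1) := by
      have h1 : n - (k + 1) = n - k - 1 := by omega
      have h2 : k + 1 - 1 = k := by omega
      simp only [hA, h1, h2]
      refine (intervalIntegral.integral_congr fun s _ => ?_).symm
      rw [Psucc k hk1 hkn.le s]
      ring
    have eA2 : (∫ s in (0:ℝ)..t,
          J (n - k) s * (w s ^ (k - 1) / ((k - 1).factorial : ℝ)) * v s * P k s)
        = A k := by
      simp only [hA]
    rw [e, eA1, eA2] at parts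
    simp only [hB, hC]
    linarith [parts]
  -- the last step, k = n
  have last : A n = B n - C n := by
    have Indn := PwS n hn
    have parts := Indn.parts hT' (fun x hx => hP' n hn le_rfl x hx)
      (P'Cont n hn le_rfl) ht
    have eB : B n = w t ^ n / (n.factorial : ℝ) * P n t := by
      simp only [hB, Nat.sub_self, hJ0, one_mul]
    have eA : A n = ∫ s in (0:ℝ)..t,
        w s ^ (n - 1) / ((n - 1).factorial : ℝ) * v s * P n s := by
      simp only [hA, Nat.sub_self]
      exact intervalIntegral.integral_congr fun s _ => by rw [hJ0]; ring
    have eC : C n = ∫ s in (0:ℝ)..t, w s ^ n / (n.factorial : ℝ) * P' n s := by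
      simp only [hC, Nat.sub_self]
      exact intervalIntegral.integral_congr fun s _ => by rw [hJ0]; ring
    rw [eB, eA, eC] at *
    linarith [parts]
  -- telescoping
  have tele : ∀ m, m < n → A (n - m)
      = ∑ j ∈ Finset.Icc (n - m) n, (-1:ℝ) ^ (j - (n - m)) * (B j - C j) := by
    intro m
    induction m with
    | zero =>
      intro _
      simp only [Nat.sub_zero, Finset.Icc_self, Finset.sum_singleton, Nat.sub_self,
        pow_zero, one_mul]
      exact last
    | succ m ih =>
      intro hm
      have hmn : m < n := by omega
      have hk1 : 1 ≤ n - (m + 1) := by omega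
      have hkn : n - (m + 1) < n := by omega
      have hks : n - (m + 1) + 1 = n - m := by omega
      rw [step (n - (m + 1)) hk1 hkn, hks, ih hmn]
      rw [Finset.Icc_eq_cons_Ioc (le_of_lt hkn), Finset.sum_cons]
      have hIoc : Finset.Ioc (n - (m + 1)) n = Finset.Icc (n - m) n := by
        rw [← Finset.Icc_add_one_left_eq_Ioc]
        congr 1
      simp only [Nat.sub_self, pow_zero, one_mul, hIoc]
      have hterm : ∀ j ∈ Finset.Icc (n - m) n,
          (-1:ℝ) ^ (j - (n - (m + 1))) * (B j - C j)
            = -((-1:ℝ) ^ (j - (n - m)) * (B j - C j)) := by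
        intro j hj
        rw [Finset.mem_Icc] at hj
        rw [show j - (n - (m + 1)) = (j - (n - m)) + 1 from by omega, pow_succ]
        ring
      rw [Finset.sum_congr rfl hterm, Finset.sum_neg_distrib]
      ring
  -- J n t = A 1
  have hA1 : J n t = A 1 := by
    rw [hJ n hn le_rfl t]
    simp only [hA]
    refine intervalIntegral.integral_congr fun s _ => ?_
    have hP1 : P 1 s = f n s := by
      rw [hP 1 s]
      simp
    rw [hP1]
    simp [Nat.factorial]
    ring
  -- conclude
  have htele := tele (n - 1) (by omega)
  rw [show n - (n - 1) = 1 from by omega] at htele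
  rw [hA1, htele, ← Finset.sum_add_distrib]
  refine Finset.sum_congr rfl fun j hj => ?_
  rw [Finset.mem_Icc] at hj
  simp only [hB, hC]
  have e1 : (-1:ℝ) ^ (j + 1) = (-1) ^ (j - 1) := by
    have h := pow_add (-1:ℝ) (j - 1) 2
    rw [show j - 1 + 2 = j + 1 from by omega] at h
    simpa using h
  have e2 : (-1:ℝ) ^ j = (-1) ^ (j - 1) * (-1) := by
    have h := pow_succ (-1:ℝ) (j - 1)
    rwa [show j - 1 + 1 = j from by omega] at h
  rw [e1, e2]
  ring
end

section
/- Define H_k(t) = ∫_0^t (w(s)^k / k!) P_k(s) f_{n−k}(s) J_{n−k−1}(s) v(s) ds for 1 ≤ k ≤ n−1, and set H_n(t) = 0. Then for every k with 1 ≤ k ≤ n−1 and every t ∈ [0,T], H_k(t) = J_{n−k−1}(t) (w(t)^{k+1} / (k+1)!) P_{k+1}(t) − ∫_0^t J_{n−k−1}(s) (w(s)^{k+1} / (k+1)!) P_{k+1}'(s) ds − H_{k+1}(t). -/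
open MeasureTheory


lemma intOn_mul {T : ℝ} {g u : ℝ → ℝ} (hg : ContinuousOn g (Set.Icc 0 T))
    (hu : IntegrableOn u (Set.Icc 0 T)) :
    IntegrableOn (fun x => g x * u x) (Set.Icc 0 T) :=
  hu.continuousOn_mul hg isCompact_Icc

lemma prim_split {φ : ℝ → ℝ} {y t : ℝ} (hy : 0 ≤ y) (hyt : y ≤ t)
    (h1 : IntegrableOn φ (Set.Ioc 0 y)) (h2 : IntegrableOn φ (Set.Ioc y t)) :
    ∫ x in Set.Ioc y t, φ x = (∫ x in Set.Ioc 0 t, φ x) - ∫ x in Set.Ioc 0 y, φ x := by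
  have := setIntegral_union (Set.Ioc_disjoint_Ioc_of_le (a := (0:ℝ)) (b := y) (c := y) (d := t) le_rfl)
    measurableSet_Ioc h1 h2 (f := φ) (μ := volume)
  rw [Set.Ioc_union_Ioc_eq_Ioc hy hyt] at this
  linarith

/-- Product rule for primitives, via Fubini. -/
lemma prod_primitive {T : ℝ} {φ ψ : ℝ → ℝ} (hφ : IntegrableOn φ (Set.Icc 0 T))
    (hψ : IntegrableOn ψ (Set.Icc 0 T)) {t : ℝ} (ht : t ∈ Set.Icc (0:ℝ) T) :
    (∫ x in Set.Ioc 0 t, φ x) * (∫ x in Set.Ioc 0 t, ψ x)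
      = ∫ x in Set.Ioc 0 t,
          (φ x * (∫ y in Set.Ioc 0 x, ψ y) + ψ x * (∫ y in Set.Ioc 0 x, φ y)) := by
  obtain ⟨ht0, htT⟩ := ht
  have hsub : Set.Ioc (0:ℝ) t ⊆ Set.Icc 0 T :=
    (Set.Ioc_subset_Icc_self).trans (Set.Icc_subset_Icc le_rfl htT)
  have hφt : IntegrableOn φ (Set.Ioc 0 t) := hφ.mono_set hsub
  have hψt : IntegrableOn ψ (Set.Ioc 0 t) := hψ.mono_set hsub
  set μ := volume.restrict (Set.Ioc (0:ℝ) t) with hμ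
  set S : Set (ℝ × ℝ) := {p | 0 < p.2 ∧ p.2 ≤ p.1} with hSdef
  have hS : MeasurableSet S :=
    (measurableSet_lt measurable_const measurable_snd).inter
      (measurableSet_le measurable_snd measurable_fst)
  set F : ℝ × ℝ → ℝ := S.indicator (fun p => φ p.1 * ψ p.2) with hFdef
  have hmul : Integrable (fun p : ℝ × ℝ => φ p.1 * ψ p.2) (μ.prod μ) := hφt.mul_prod hψt
  have hF : Integrable F (μ.prod μ) := hmul.indicator hS
  set Fp : ℝ → ℝ := fun r => ∫ x in Set.Ioc 0 r, φ x with hFp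
  set Gp : ℝ → ℝ := fun r => ∫ x in Set.Ioc 0 r, ψ x with hGp
  have hFpc : ContinuousOn Fp (Set.Icc 0 T) := intervalIntegral.continuousOn_primitive hφ
  have hGpc : ContinuousOn Gp (Set.Icc 0 T) := intervalIntegral.continuousOn_primitive hψ
  have E1 : (∫ x, (∫ y, F (x, y) ∂μ) ∂μ) = ∫ x in Set.Ioc 0 t, φ x * Gp x := by
    refine setIntegral_congr_fun measurableSet_Ioc (fun x hx => ?_)
    have h1 : (fun y => F (x, y)) = fun y => φ x * (Set.Ioc 0 x).indicator ψ y := by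
      funext y
      simp only [hFdef, Set.indicator_apply, hSdef, Set.mem_setOf_eq, Set.mem_Ioc]
      by_cases h : 0 < y ∧ y ≤ x <;> simp [h]
    rw [h1, integral_const_mul, hμ, setIntegral_indicator measurableSet_Ioc,
      Set.Ioc_inter_Ioc]
    simp [min_eq_right hx.2]
    exact Or.inl rfl
  have E2 : (∫ y, (∫ x, F (x, y) ∂μ) ∂μ)
      = ∫ y in Set.Ioc 0 t, ψ y * (Fp t - Fp y) := by
    refine setIntegral_congr_fun measurableSet_Ioc (fun y hy => ?_)
    have h1 : (fun x => F (x, y)) = fun x => ψ y * (Set.Ici y).indicator φ x := by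
      funext x
      simp only [hFdef, Set.indicator_apply, hSdef, Set.mem_setOf_eq, Set.mem_Ici]
      by_cases h : y ≤ x <;> simp [h, hy.1, mul_comm]
    rw [h1, integral_const_mul, hμ, setIntegral_indicator measurableSet_Ici]
    have h2 : Set.Ioc 0 t ∩ Set.Ici y = Set.Icc y t := by
      ext x
      simp only [Set.mem_inter_iff, Set.mem_Ioc, Set.mem_Ici, Set.mem_Icc]
      constructor
      · rintro ⟨⟨_, h2⟩, h3⟩; exact ⟨h3, h2⟩
      · rintro ⟨h1, h2⟩; exact ⟨⟨lt_of_lt_of_le hy.1 h1, h2⟩, h1⟩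
    rw [h2, integral_Icc_eq_integral_Ioc,
      prim_split hy.1.le hy.2 (hφt.mono_set (Set.Ioc_subset_Ioc le_rfl hy.2))
        (hφt.mono_set (Set.Ioc_subset_Ioc hy.1.le le_rfl))]
  have swap := integral_integral_swap (f := fun x y => F (x, y)) (μ := μ) (ν := μ)
    (by exact hF)
  rw [E1, E2] at swap
  -- integrabilities
  have hψF : IntegrableOn (fun y => ψ y * Fp y) (Set.Ioc 0 t) :=
    ((intOn_mul hFpc hψ).mono_set hsub).congr_fun (fun y _ => mul_comm _ _) measurableSet_Ioc
  have hφG : IntegrableOn (fun x => φ x * Gp x) (Set.Ioc 0 t) :=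
    ((intOn_mul hGpc hφ).mono_set hsub).congr_fun (fun y _ => mul_comm _ _) measurableSet_Ioc
  have expand : ∫ y in Set.Ioc 0 t, ψ y * (Fp t - Fp y)
      = (∫ y in Set.Ioc 0 t, ψ y) * Fp t - ∫ y in Set.Ioc 0 t, ψ y * Fp y := by
    rw [show (fun y => ψ y * (Fp t - Fp y)) = fun y => ψ y * Fp t - ψ y * Fp y by
      funext y; ring]
    rw [integral_sub (hψt.mul_const _) hψF, integral_mul_const]
  rw [expand] at swap
  rw [integral_add hφG hψF]
  show Fp t * Gp t = _
  linarith [swap]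

/-- FTC within `Icc 0 T`. -/
lemma ftc_within {T : ℝ} {B B' : ℝ → ℝ}
    (hB : ∀ x ∈ Set.Icc (0:ℝ) T, HasDerivWithinAt B (B' x) (Set.Icc 0 T) x)
    (hB'c : ContinuousOn B' (Set.Icc 0 T)) {s : ℝ} (hs : s ∈ Set.Icc (0:ℝ) T) :
    ∫ x in Set.Ioc 0 s, B' x = B s - B 0 := by
  obtain ⟨hs0, hsT⟩ := hs
  have hIcc : Set.Icc (0:ℝ) s ⊆ Set.Icc 0 T := Set.Icc_subset_Icc le_rfl hsT
  have hBc : ContinuousOn B (Set.Icc 0 T) := fun x hx => (hB x hx).continuousWithinAt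
  rw [← intervalIntegral.integral_of_le hs0]
  apply intervalIntegral.integral_eq_sub_of_hasDeriv_right_of_le hs0 (hBc.mono hIcc)
  · intro x hx
    have hxm : Set.Icc (0:ℝ) T ∈ nhds x := by
      apply Icc_mem_nhds hx.1 (lt_of_lt_of_le hx.2 hsT)
    exact (((hB x ⟨hx.1.le, hx.2.le.trans hsT⟩).hasDerivAt hxm)).hasDerivWithinAt
  · apply ContinuousOn.intervalIntegrable
    apply hB'c.mono
    rwa [Set.uIcc_of_le hs0]

/-- primitive times C¹ function. -/
lemma primitive_mul_C1 {T : ℝ} {α A B B' : ℝ → ℝ}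
    (hα : IntegrableOn α (Set.Icc 0 T))
    (hA : ∀ x ∈ Set.Icc (0:ℝ) T, A x = ∫ y in Set.Ioc 0 x, α y)
    (hB : ∀ x ∈ Set.Icc (0:ℝ) T, HasDerivWithinAt B (B' x) (Set.Icc 0 T) x)
    (hB'c : ContinuousOn B' (Set.Icc 0 T)) {t : ℝ} (ht : t ∈ Set.Icc (0:ℝ) T) :
    A t * B t = ∫ x in Set.Ioc 0 t, (α x * B x + A x * B' x) := by
  obtain ⟨ht0, htT⟩ := ht
  have hsub : Set.Ioc (0:ℝ) t ⊆ Set.Icc 0 T :=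
    Set.Ioc_subset_Icc_self.trans (Set.Icc_subset_Icc le_rfl htT)
  have hBc : ContinuousOn B (Set.Icc 0 T) := fun x hx => (hB x hx).continuousWithinAt
  have hB'i : IntegrableOn B' (Set.Icc 0 T) := hB'c.integrableOn_Icc
  set C : ℝ → ℝ := fun s => ∫ x in Set.Ioc 0 s, B' x with hC
  have hCc : ContinuousOn C (Set.Icc 0 T) := intervalIntegral.continuousOn_primitive hB'i
  have hApc : ContinuousOn A (Set.Icc 0 T) :=
    (intervalIntegral.continuousOn_primitive hα).congr hA
  have key := prod_primitive hα hB'i ⟨ht0, htT⟩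
  rw [← hA t ⟨ht0, htT⟩] at key
  -- key : A t * C t = ∫ (α x * C x + B' x * (∫_{Ioc 0 x} α))
  have key2 : A t * C t = ∫ x in Set.Ioc 0 t, (α x * C x + B' x * A x) := by
    rw [key]
    refine setIntegral_congr_fun measurableSet_Ioc (fun x hx => ?_)
    rw [← hA x (hsub hx)]
  have hCt : C t = B t - B 0 := ftc_within hB hB'c ⟨ht0, htT⟩
  have hABsplit : A t * B t = A t * B 0 + A t * C t := by rw [hCt]; ring
  have hconst : A t * B 0 = ∫ x in Set.Ioc 0 t, α x * B 0 := by
    rw [integral_mul_const, ← hA t ⟨ht0, htT⟩]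
  -- integrabilities
  have i1 : IntegrableOn (fun x => α x * B 0) (Set.Ioc 0 t) :=
    ((hα.mono_set hsub).mul_const _)
  have i2 : IntegrableOn (fun x => α x * C x) (Set.Ioc 0 t) :=
    ((intOn_mul hCc hα).mono_set hsub).congr_fun (fun x _ => mul_comm _ _) measurableSet_Ioc
  have i3 : IntegrableOn (fun x => B' x * A x) (Set.Ioc 0 t) :=
    ((intOn_mul hApc hB'i).mono_set hsub).congr_fun (fun x _ => mul_comm _ _) measurableSet_Ioc
  have i23 : IntegrableOn (fun x => α x * C x + B' x * A x) (Set.Ioc 0 t) := i2.add i3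
  rw [hABsplit, hconst, key2, ← integral_add i1 i23]
  refine setIntegral_congr_fun measurableSet_Ioc (fun x hx => ?_)
  have hBx : B x = B 0 + C x := by
    have h : C x = B x - B 0 := ftc_within hB hB'c (hsub hx)
    linarith
  rw [hBx]; ring

lemma pow_primitive {T : ℝ} {v w : ℝ → ℝ} (hv : IntegrableOn v (Set.Icc 0 T))
    (hw : ∀ s ∈ Set.Icc (0:ℝ) T, w s = ∫ x in Set.Ioc 0 s, v x) (m : ℕ) :
    ∀ t ∈ Set.Icc (0:ℝ) T,
      w t ^ (m + 1) / (Nat.factorial (m + 1) : ℝ)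
        = ∫ x in Set.Ioc 0 t, w x ^ m / (Nat.factorial m : ℝ) * v x := by
  have hwc : ContinuousOn w (Set.Icc 0 T) :=
    (intervalIntegral.continuousOn_primitive hv).congr hw
  induction m with
  | zero =>
    intro t ht
    simp only [zero_add, pow_one, Nat.factorial_one, Nat.cast_one, div_one, pow_zero,
      Nat.factorial_zero, one_mul]
    exact hw t ht
  | succ m ih =>
    intro t ht
    have hsub : Set.Ioc (0:ℝ) t ⊆ Set.Icc 0 T :=
      Set.Ioc_subset_Icc_self.trans (Set.Icc_subset_Icc le_rfl ht.2)
    have hφ : IntegrableOn (fun x => w x ^ m / (Nat.factorial m : ℝ) * v x)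
        (Set.Icc 0 T) := intOn_mul ((hwc.pow m).div_const _) hv
    have key := prod_primitive hφ hv ht
    rw [← ih t ht, ← hw t ht] at key
    have hne : (Nat.factorial (m+1) : ℝ) ≠ 0 := Nat.cast_ne_zero.2 (Nat.factorial_ne_zero _)
    have hnem : (Nat.factorial m : ℝ) ≠ 0 := Nat.cast_ne_zero.2 (Nat.factorial_ne_zero _)
    have hfac : (Nat.factorial (m+1) : ℝ) = ((m:ℝ)+1) * (Nat.factorial m : ℝ) := by
      rw [Nat.factorial_succ]; push_cast; ring
    have key2 : w t ^ (m+1) / (Nat.factorial (m+1) : ℝ) * w t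
        = ((m:ℝ)+2) * ∫ x in Set.Ioc 0 t,
            w x ^ (m+1) / (Nat.factorial (m+1) : ℝ) * v x := by
      rw [key, ← integral_const_mul]
      refine setIntegral_congr_fun measurableSet_Ioc (fun x hx => ?_)
      rw [← hw x (hsub hx), ← ih x (hsub hx)]
      rw [hfac]
      field_simp
      ring
    have h2 : ((m:ℝ)+2) ≠ 0 := by positivity
    have hfac2 : (Nat.factorial (m+2) : ℝ) = ((m:ℝ)+2) * (Nat.factorial (m+1) : ℝ) := by
      rw [Nat.factorial_succ]; push_cast; ring
    set I := ∫ x in Set.Ioc 0 t, w x ^ (m+1) / (Nat.factorial (m+1) : ℝ) * v x with hI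
    have key3 : w t ^ (m+1) * w t = ((m:ℝ)+2) * I * (Nat.factorial (m+1) : ℝ) := by
      field_simp at key2 ⊢
      linarith
    have h2 : ((m:ℝ)+2) ≠ 0 := by positivity
    rw [show m + 1 + 1 = m + 2 from rfl, hfac2, div_eq_iff (mul_ne_zero h2 hne), pow_succ]
    linarith

/-- Iteration step in the proof of Lemma 4.1 for the auxiliary integrals
`H k (t) = ∫₀ᵗ (w s)^k/k! · P k s · f_{n-k}(s) J_{n-k-1}(s) v(s) ds` (with
`H n = 0`):
`H k t = J (n-k-1) t · w t^(k+1)/(k+1)! · P (k+1) t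
          - ∫₀ᵗ J (n-k-1) s · w s^(k+1)/(k+1)! · P' (k+1) s ds - H (k+1) t`. -/
theorem stmt3
    (T : ℝ) (hT : 0 < T) (n : ℕ) (hn : 2 ≤ n)
    (f : ℕ → ℝ → ℝ)
    (hf : ∀ i, 1 ≤ i → i ≤ n → ContDiffOn ℝ 1 (f i) (Set.Icc 0 T))
    (v : ℝ → ℝ) (hv : IntegrableOn v (Set.Icc 0 T))
    (w : ℝ → ℝ) (hw : ∀ t, w t = ∫ s in (0:ℝ)..t, v s)
    (J : ℕ → ℝ → ℝ)
    (hJ0 : ∀ t, J 0 t = 1)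
    (hJ : ∀ k, 1 ≤ k → k ≤ n → ∀ t,
      J k t = ∫ s in (0:ℝ)..t, f k s * J (k - 1) s * v s)
    (P : ℕ → ℝ → ℝ)
    (hP : ∀ k t, P k t = ∏ l ∈ Finset.Icc 1 k, f (n + 1 - l) t)
    (P' : ℕ → ℝ → ℝ)
    (hP' : ∀ k, 1 ≤ k → k ≤ n → ∀ t ∈ Set.Icc (0:ℝ) T,
      HasDerivWithinAt (P k) (P' k t) (Set.Icc 0 T) t)
    (H : ℕ → ℝ → ℝ)
    (hH : ∀ k, 1 ≤ k → k + 1 ≤ n → ∀ t,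
      H k t = ∫ s in (0:ℝ)..t,
        (w s ^ k / (Nat.factorial k : ℝ)) * P k s
          * (f (n - k) s * J (n - k - 1) s * v s))
    (hHn : ∀ t, H n t = 0) :
    ∀ k, 1 ≤ k → k + 1 ≤ n → ∀ t ∈ Set.Icc (0:ℝ) T,
      H k t
        = J (n - k - 1) t * (w t ^ (k + 1) / (Nat.factorial (k + 1) : ℝ))
            * P (k + 1) t
          - (∫ s in (0:ℝ)..t,
              J (n - k - 1) s * (w s ^ (k + 1) / (Nat.factorial (k + 1) : ℝ))
                * P' (k + 1) s)
          - H (k + 1) t := by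
  intro k hk1 hk2 t ht
  obtain ⟨ht0, htT⟩ := ht
  set m := n - k - 1 with hm
  have hsubt : Set.Ioc (0:ℝ) t ⊆ Set.Icc 0 T :=
    Set.Ioc_subset_Icc_self.trans (Set.Icc_subset_Icc le_rfl htT)
  -- w as primitive on Icc
  have hwIcc : ∀ s ∈ Set.Icc (0:ℝ) T, w s = ∫ x in Set.Ioc 0 s, v x := fun s hs => by
    rw [hw s, intervalIntegral.integral_of_le hs.1]
  have hwc : ContinuousOn w (Set.Icc 0 T) :=
    (intervalIntegral.continuousOn_primitive hv).congr hwIcc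
  have hfc : ∀ i, 1 ≤ i → i ≤ n → ContinuousOn (f i) (Set.Icc 0 T) :=
    fun i h1 h2 => (hf i h1 h2).continuousOn
  -- continuity of the J's
  have hJc : ∀ j, j ≤ n → ContinuousOn (J j) (Set.Icc 0 T) := by
    intro j
    induction j with
    | zero => exact fun _ => continuousOn_const.congr (fun x _ => hJ0 x)
    | succ i ih =>
      intro hin
      have hint : IntegrableOn (fun x => f (i + 1) x * J (i + 1 - 1) x * v x)
          (Set.Icc 0 T) :=
        intOn_mul ((hfc (i + 1) (by omega) hin).mul (ih (by omega))) hv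
      refine (intervalIntegral.continuousOn_primitive hint).congr ?_
      intro x hx
      rw [hJ (i + 1) (by omega) hin x, intervalIntegral.integral_of_le hx.1]
  have hJprim : ∀ j, 1 ≤ j → j ≤ n → ∀ s, 0 ≤ s →
      J j s = ∫ x in Set.Ioc 0 s, f j x * J (j - 1) x * v x := by
    intro j h1 h2 s hs
    rw [hJ j h1 h2 s, intervalIntegral.integral_of_le hs]
  -- smoothness of the P's
  have hPcd : ∀ j, j ≤ n → ContDiffOn ℝ 1 (P j) (Set.Icc 0 T) := by
    intro j
    induction j with
    | zero =>
      intro _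
      exact (contDiffOn_const (c := (1:ℝ))).congr (fun x _ => by rw [hP]; simp)
    | succ i ih =>
      intro hin
      have heq : ∀ x, P (i + 1) x = P i x * f (n - i) x := by
        intro x
        rw [hP, hP, Finset.prod_Icc_succ_top (by omega : 1 ≤ i + 1)]
        have : n + 1 - (i + 1) = n - i := by omega
        rw [this]
      exact ((ih (by omega)).mul (hf (n - i) (by omega) (by omega))).congr
        (fun x _ => heq x)
  have hP1eq : ∀ x, P (k + 1) x = P k x * f (n - k) x := by
    intro x
    rw [hP, hP, Finset.prod_Icc_succ_top (by omega : 1 ≤ k + 1)]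
    have : n + 1 - (k + 1) = n - k := by omega
    rw [this]
  have hPk1c : ContinuousOn (P (k + 1)) (Set.Icc 0 T) :=
    (hPcd (k + 1) (by omega)).continuousOn
  have hP'c : ContinuousOn (P' (k + 1)) (Set.Icc 0 T) := by
    refine ((hPcd (k + 1) (by omega)).continuousOn_derivWithin
      (uniqueDiffOn_Icc hT) le_rfl).congr ?_
    intro x hx
    exact ((hP' (k + 1) (by omega) (by omega) x hx).derivWithin
      (uniqueDiffOn_Icc hT x hx)).symm
  -- the auxiliary functions
  set q : ℝ → ℝ := fun x =>
    if m = 0 then 0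
    else f m x * J (m - 1) x * (w x ^ (k + 1) / (Nat.factorial (k + 1) : ℝ))
    with hqdef
  have hqc : ContinuousOn q (Set.Icc 0 T) := by
    by_cases h : m = 0
    · simp only [hqdef, h, if_true]
      exact continuousOn_const
    · simp only [hqdef, if_neg h]
      exact ((hfc m (by omega) (by omega)).mul (hJc (m - 1) (by omega))).mul
        ((hwc.pow (k + 1)).div_const _)
  set α : ℝ → ℝ := fun x =>
    (q x + w x ^ k / (Nat.factorial k : ℝ) * J m x) * v x with hαdef
  have hαi : IntegrableOn α (Set.Icc 0 T) :=
    intOn_mul (hqc.add (((hwc.pow k).div_const _).mul (hJc m (by omega)))) hv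
  set A : ℝ → ℝ := fun s =>
    J m s * (w s ^ (k + 1) / (Nat.factorial (k + 1) : ℝ)) with hAdef
  have hAc : ContinuousOn A (Set.Icc 0 T) :=
    (hJc m (by omega)).mul ((hwc.pow (k + 1)).div_const _)
  have hA : ∀ s ∈ Set.Icc (0:ℝ) T, A s = ∫ x in Set.Ioc 0 s, α x := by
    intro s hs
    have hsub : Set.Ioc (0:ℝ) s ⊆ Set.Icc 0 T :=
      Set.Ioc_subset_Icc_self.trans (Set.Icc_subset_Icc le_rfl hs.2)
    by_cases h : m = 0
    · have e1 : A s = w s ^ (k + 1) / (Nat.factorial (k + 1) : ℝ) := by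
        simp only [hAdef, h, hJ0]; ring
      rw [e1, pow_primitive hv hwIcc k s hs]
      refine setIntegral_congr_fun measurableSet_Ioc (fun x _ => ?_)
      simp only [hαdef, hqdef, h, if_true, hJ0]
      ring
    · have h1m : 1 ≤ m := by omega
      have hmn : m ≤ n := by omega
      have hφm : IntegrableOn (fun x => f m x * J (m - 1) x * v x) (Set.Icc 0 T) :=
        intOn_mul ((hfc m h1m hmn).mul (hJc (m - 1) (by omega))) hv
      have hψk : IntegrableOn (fun x => w x ^ k / (Nat.factorial k : ℝ) * v x)
          (Set.Icc 0 T) := intOn_mul ((hwc.pow k).div_const _) hv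
      have key := prod_primitive hφm hψk hs
      rw [← hJprim m h1m hmn s hs.1, ← pow_primitive hv hwIcc k s hs] at key
      simp only [hAdef]
      rw [key]
      refine setIntegral_congr_fun measurableSet_Ioc (fun x hx => ?_)
      rw [← pow_primitive hv hwIcc k x (hsub hx), ← hJprim m h1m hmn x (hsub hx).1]
      simp only [hαdef, hqdef, if_neg h]
      ring
  -- main identity from the product rules
  have main := primitive_mul_C1 hαi hA (hP' (k + 1) (by omega) (by omega)) hP'c
    ⟨ht0, htT⟩
  -- split the integral
  have hP'i : IntegrableOn (P' (k + 1)) (Set.Icc 0 T) := hP'c.integrableOn_Icc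
  have iqP : IntegrableOn (fun x => q x * P (k + 1) x * v x) (Set.Ioc 0 t) :=
    (intOn_mul (hqc.mul hPk1c) hv).mono_set hsubt
  have iuP : IntegrableOn
      (fun x => w x ^ k / (Nat.factorial k : ℝ) * J m x * P (k + 1) x * v x)
      (Set.Ioc 0 t) :=
    (intOn_mul ((((hwc.pow k).div_const _).mul (hJc m (by omega))).mul hPk1c)
      hv).mono_set hsubt
  have iAP' : IntegrableOn (fun x => A x * P' (k + 1) x) (Set.Ioc 0 t) :=
    ((intOn_mul hAc hP'i).mono_set hsubt).congr_fun (fun x _ => rfl)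
      measurableSet_Ioc
  have split : (∫ x in Set.Ioc 0 t, (α x * P (k + 1) x + A x * P' (k + 1) x))
      = (∫ x in Set.Ioc 0 t, q x * P (k + 1) x * v x)
        + ((∫ x in Set.Ioc 0 t,
            w x ^ k / (Nat.factorial k : ℝ) * J m x * P (k + 1) x * v x)
          + ∫ x in Set.Ioc 0 t, A x * P' (k + 1) x) := by
    have i23 : IntegrableOn
        (fun x => w x ^ k / (Nat.factorial k : ℝ) * J m x * P (k + 1) x * v x
          + A x * P' (k + 1) x) (Set.Ioc 0 t) := iuP.add iAP'
    rw [← integral_add iuP iAP', ← integral_add iqP i23]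
    refine setIntegral_congr_fun measurableSet_Ioc (fun x _ => ?_)
    simp only [hαdef, Pi.add_apply]
    ring
  -- identify the pieces with H (k+1) and H k
  have hq_int : (∫ x in Set.Ioc 0 t, q x * P (k + 1) x * v x) = H (k + 1) t := by
    by_cases h : m = 0
    · have hz : ∀ x ∈ Set.Ioc (0:ℝ) t, q x * P (k + 1) x * v x = 0 := by
        intro x _; simp [hqdef, h]
      rw [setIntegral_congr_fun measurableSet_Ioc hz, integral_zero,
        show k + 1 = n from by omega, hHn t]
    · rw [hH (k + 1) (by omega) (by omega) t, intervalIntegral.integral_of_le ht0]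
      refine setIntegral_congr_fun measurableSet_Ioc (fun x _ => ?_)
      have e : n - (k + 1) = m := by omega
      rw [e]
      simp only [hqdef, if_neg h]
      ring
  have hu_int : (∫ x in Set.Ioc 0 t,
      w x ^ k / (Nat.factorial k : ℝ) * J m x * P (k + 1) x * v x) = H k t := by
    rw [hH k hk1 hk2 t, intervalIntegral.integral_of_le ht0]
    refine setIntegral_congr_fun measurableSet_Ioc (fun x _ => ?_)
    rw [hP1eq x, ← hm]
    ring
  have hint_eq : (∫ x in Set.Ioc 0 t, A x * P' (k + 1) x)
      = ∫ s in (0:ℝ)..t,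
          J m s * (w s ^ (k + 1) / (Nat.factorial (k + 1) : ℝ)) * P' (k + 1) s := by
    rw [intervalIntegral.integral_of_le ht0]
  have hAt : A t * P (k + 1) t
      = J m t * (w t ^ (k + 1) / (Nat.factorial (k + 1) : ℝ)) * P (k + 1) t := by
    simp only [hAdef]
  rw [split, hq_int, hu_int, hint_eq, hAt] at main
  linarith
end

section
/- Let (w_j)_{j≥1} and w be continuous real-valued functions on [0,T] such that sup_{t∈[0,T]} |w_j(t) − w(t)| → 0 as j → ∞. Then sup_{t∈[0,T]} |Φ_n[w_j](t) − Φ_n[w](t)| → 0 as j → ∞. -/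
open MeasureTheory Filter


lemma my_unif_const {ι : Type*} {l : Filter ι} {s : Set ℝ} (g : ℝ → ℝ) :
    TendstoUniformlyOn (fun _ : ι => g) g l s :=
  fun u hu => Eventually.of_forall fun _ x _ => refl_mem_uniformity hu

lemma my_unif_sum {ι : Type*} {l : Filter ι} {s : Set ℝ} {K : Finset ℕ}
    {F : ℕ → ι → ℝ → ℝ} {f : ℕ → ℝ → ℝ}
    (h : ∀ k ∈ K, TendstoUniformlyOn (F k) (f k) l s) :
    TendstoUniformlyOn (fun i x => ∑ k ∈ K, F k i x) (fun x => ∑ k ∈ K, f k x) l s := by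
  classical
  induction K using Finset.induction_on with
  | empty => simpa using my_unif_const (fun _ : ℝ => (0:ℝ))
  | @insert a K ha ih =>
    have h1 := h a (Finset.mem_insert_self a K)
    have h2 := ih (fun k hk => h k (Finset.mem_insert_of_mem hk))
    have h3 := h1.add h2
    have e1 : (fun i x => ∑ k ∈ insert a K, F k i x)
        = (F a + fun i x => ∑ k ∈ K, F k i x) := by
      funext i x; simp [Finset.sum_insert ha]
    have e2 : (fun x => ∑ k ∈ insert a K, f k x)
        = (f a + fun x => ∑ k ∈ K, f k x) := by
      funext x; simp [Finset.sum_insert ha]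
    rw [e1, e2]; exact h3

lemma my_unif_mul {ι : Type*} {l : Filter ι} {s : Set ℝ} {F G : ι → ℝ → ℝ} {f g : ℝ → ℝ}
    {Cf Cg : ℝ}
    (hF : TendstoUniformlyOn F f l s) (hG : TendstoUniformlyOn G g l s)
    (hfb : ∀ x ∈ s, |f x| ≤ Cf) (hgb : ∀ x ∈ s, |g x| ≤ Cg) :
    TendstoUniformlyOn (fun i x => F i x * G i x) (fun x => f x * g x) l s := by
  rw [Metric.tendstoUniformlyOn_iff] at hF hG ⊢
  intro ε hε
  set Cf' : ℝ := max Cf 0 + 1 with hCf'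
  set Cg' : ℝ := max Cg 0 + 1 with hCg'
  have hCfpos : (0:ℝ) < Cf' := by positivity
  have hCgpos : (0:ℝ) < Cg' := by positivity
  have hdpos : (0:ℝ) < Cf' + Cg' + 1 := by positivity
  set δ : ℝ := min 1 (ε / (Cf' + Cg' + 1)) with hδdef
  have hδpos : 0 < δ := lt_min one_pos (by positivity)
  have hδ1 : δ ≤ 1 := min_le_left _ _
  have hδ2 : δ * (Cf' + Cg' + 1) ≤ ε := by
    have := min_le_right 1 (ε / (Cf' + Cg' + 1))
    calc δ * (Cf' + Cg' + 1) ≤ (ε / (Cf' + Cg' + 1)) * (Cf' + Cg' + 1) := by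
          exact mul_le_mul_of_nonneg_right this hdpos.le
      _ = ε := div_mul_cancel₀ ε hdpos.ne'
  filter_upwards [hF δ hδpos, hG δ hδpos] with i hFi hGi
  intro x hx
  have h1 : |f x - F i x| < δ := by simpa [Real.dist_eq] using hFi x hx
  have h2 : |g x - G i x| < δ := by simpa [Real.dist_eq] using hGi x hx
  have hg' : |g x| ≤ Cg' := le_trans (hgb x hx) (by simp [hCg']; linarith [le_max_left Cg (0:ℝ)])
  have hF' : |F i x| ≤ Cf' := by
    have e : F i x = f x - (f x - F i x) := by ring
    rw [e]
    calc |f x - (f x - F i x)| ≤ |f x| + |f x - F i x| := abs_sub _ _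
      _ ≤ Cf + δ := add_le_add (hfb x hx) h1.le
      _ ≤ Cf' := by have := le_max_left Cf (0:ℝ); simp only [hCf']; linarith
  rw [Real.dist_eq]
  have e : f x * g x - F i x * G i x = (f x - F i x) * g x + F i x * (g x - G i x) := by ring
  calc |f x * g x - F i x * G i x|
      = |(f x - F i x) * g x + F i x * (g x - G i x)| := by rw [e]
    _ ≤ |(f x - F i x) * g x| + |F i x * (g x - G i x)| := abs_add_le _ _
    _ = |f x - F i x| * |g x| + |F i x| * |g x - G i x| := by rw [abs_mul, abs_mul]
    _ ≤ δ * Cg' + Cf' * δ := add_le_add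
        (mul_le_mul h1.le hg' (abs_nonneg _) hδpos.le)
        (mul_le_mul hF' h2.le (abs_nonneg _) hCfpos.le)
    _ ≤ δ * (Cf' + Cg' + 1) - δ := by ring_nf; nlinarith
    _ < ε := by linarith

lemma my_bdd {a b : ℝ} {f : ℝ → ℝ} (hf : ContinuousOn f (Set.Icc a b)) :
    ∃ C, ∀ x ∈ Set.Icc a b, |f x| ≤ C := by
  simpa [Real.norm_eq_abs] using isCompact_Icc.exists_bound_of_continuousOn hf

lemma my_unif_mul_cont {ι : Type*} {l : Filter ι} {a b : ℝ} {F G : ι → ℝ → ℝ} {f g : ℝ → ℝ}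
    (hF : TendstoUniformlyOn F f l (Set.Icc a b)) (hG : TendstoUniformlyOn G g l (Set.Icc a b))
    (hf : ContinuousOn f (Set.Icc a b)) (hg : ContinuousOn g (Set.Icc a b)) :
    TendstoUniformlyOn (fun i x => F i x * G i x) (fun x => f x * g x) l (Set.Icc a b) := by
  obtain ⟨Cf, hCf⟩ := my_bdd hf
  obtain ⟨Cg, hCg⟩ := my_bdd hg
  exact my_unif_mul hF hG hCf hCg

lemma my_unif_pow_cont {ι : Type*} {l : Filter ι} {a b : ℝ} {F : ι → ℝ → ℝ} {f : ℝ → ℝ}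
    (hF : TendstoUniformlyOn F f l (Set.Icc a b)) (hf : ContinuousOn f (Set.Icc a b)) (k : ℕ) :
    TendstoUniformlyOn (fun i x => F i x ^ k) (fun x => f x ^ k) l (Set.Icc a b) := by
  induction k with
  | zero => simpa using my_unif_const (fun _ : ℝ => (1:ℝ))
  | succ m ih =>
    have := my_unif_mul_cont ih hF (hf.pow m) hf
    simpa [pow_succ] using this

lemma my_unif_int {ι : Type*} {l : Filter ι} {T : ℝ} (hT : 0 ≤ T) {G : ι → ℝ → ℝ} {g : ℝ → ℝ}
    (hGc : ∀ i, ContinuousOn (G i) (Set.Icc 0 T)) (hgc : ContinuousOn g (Set.Icc 0 T))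
    (h : TendstoUniformlyOn G g l (Set.Icc 0 T)) :
    TendstoUniformlyOn (fun i t => ∫ s in (0:ℝ)..t, G i s) (fun t => ∫ s in (0:ℝ)..t, g s)
      l (Set.Icc 0 T) := by
  rw [Metric.tendstoUniformlyOn_iff] at h ⊢
  intro ε hε
  have hδpos : (0:ℝ) < ε / (2 * (T + 1)) := by positivity
  filter_upwards [h (ε / (2 * (T + 1))) hδpos] with i hi
  intro t ht
  have hsub : Set.uIcc 0 t ⊆ Set.Icc 0 T := by
    rw [Set.uIcc_of_le ht.1]; exact Set.Icc_subset_Icc le_rfl ht.2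
  have hint1 : IntervalIntegrable g volume 0 t := (hgc.mono hsub).intervalIntegrable
  have hint2 : IntervalIntegrable (G i) volume 0 t := ((hGc i).mono hsub).intervalIntegrable
  rw [Real.dist_eq, ← intervalIntegral.integral_sub hint1 hint2]
  have hbound : ∀ x ∈ Set.uIoc 0 t, ‖g x - G i x‖ ≤ ε / (2 * (T + 1)) := by
    intro x hx
    have hx' : x ∈ Set.Icc 0 T := hsub (Set.uIoc_subset_uIcc hx)
    simpa [Real.dist_eq, Real.norm_eq_abs] using (hi x hx').le
  have hle := intervalIntegral.norm_integral_le_of_norm_le_const hbound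
  rw [Real.norm_eq_abs] at hle
  have h2 : |t - 0| ≤ T := by rw [sub_zero, abs_of_nonneg ht.1]; exact ht.2
  calc |∫ s in (0:ℝ)..t, (g s - G i s)| ≤ ε / (2 * (T + 1)) * |t - 0| := hle
    _ ≤ ε / (2 * (T + 1)) * T := mul_le_mul_of_nonneg_left h2 hδpos.le
    _ < ε := by rw [div_mul_eq_mul_div, div_lt_iff₀ (by linarith)]; nlinarith

/-- Deterministic stability (uniform version): if `w_j → w` uniformly on
`[0,T]`, then `Φ_n[w_j] → Φ_n[w]` uniformly on `[0,T]`. -/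
theorem stmt6
    (T : ℝ) (hT : 0 < T) (n : ℕ) (hn : 1 ≤ n)
    (f : ℕ → ℝ → ℝ)
    (hf : ∀ i, 1 ≤ i → i ≤ n → ContDiffOn ℝ 1 (f i) (Set.Icc 0 T))
    (fd : ℕ → ℕ → ℝ → ℝ)
    (hfd : ∀ j k, 1 ≤ k → k ≤ j → j ≤ n → ∀ t ∈ Set.Icc (0:ℝ) T,
      HasDerivWithinAt (fun s => ∏ l ∈ Finset.Icc 1 k, f (j + 1 - l) s)
        (fd j k t) (Set.Icc 0 T) t)
    (Φ : (ℝ → ℝ) → ℕ → ℝ → ℝ)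
    (hΦ0 : ∀ u t, Φ u 0 t = 1)
    (hΦ : ∀ u : ℝ → ℝ, ContinuousOn u (Set.Icc 0 T) →
      ∀ j, 1 ≤ j → j ≤ n → ∀ t ∈ Set.Icc (0:ℝ) T,
      Φ u j t
        = (∑ k ∈ Finset.Icc 1 j,
            (-1 : ℝ) ^ (k + 1) * Φ u (j - k) t
              * (u t ^ k / (Nat.factorial k : ℝ))
              * ∏ l ∈ Finset.Icc 1 k, f (j + 1 - l) t)
        + ∑ k ∈ Finset.Icc 1 j,
            (-1 : ℝ) ^ k *
              ∫ s in (0:ℝ)..t,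
                Φ u (j - k) s * (u s ^ k / (Nat.factorial k : ℝ)) * fd j k s)
    (ws : ℕ → ℝ → ℝ) (hws : ∀ j, ContinuousOn (ws j) (Set.Icc 0 T))
    (w : ℝ → ℝ) (hw : ContinuousOn w (Set.Icc 0 T))
    (hconv : TendstoUniformlyOn ws w atTop (Set.Icc 0 T)) :
    TendstoUniformlyOn (fun j => Φ (ws j) n) (Φ w n) atTop (Set.Icc 0 T) := by
  have hud : UniqueDiffOn ℝ (Set.Icc (0:ℝ) T) := uniqueDiffOn_Icc hT
  -- continuity of the derivatives fd j k
  have hfdc : ∀ j k, 1 ≤ k → k ≤ j → j ≤ n → ContinuousOn (fd j k) (Set.Icc 0 T) := by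
    intro j k hk1 hkj hjn
    have hprod : ContDiffOn ℝ 1 (fun s => ∏ l ∈ Finset.Icc 1 k, f (j + 1 - l) s)
        (Set.Icc 0 T) := by
      apply contDiffOn_prod
      intro l hl
      rw [Finset.mem_Icc] at hl
      exact hf (j + 1 - l) (by omega) (by omega)
    have heq : Set.EqOn (fd j k)
        (derivWithin (fun s => ∏ l ∈ Finset.Icc 1 k, f (j + 1 - l) s) (Set.Icc 0 T))
        (Set.Icc 0 T) := by
      intro t ht
      exact ((hfd j k hk1 hkj hjn t ht).derivWithin (hud t ht)).symm
    exact (hprod.continuousOn_derivWithin hud le_rfl).congr heq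
  -- continuity of the products of f's
  have hPc : ∀ j k, 1 ≤ k → k ≤ j → j ≤ n →
      ContinuousOn (fun t => ∏ l ∈ Finset.Icc 1 k, f (j + 1 - l) t) (Set.Icc 0 T) := by
    intro j k hk1 hkj hjn
    apply continuousOn_finset_prod
    intro l hl
    rw [Finset.mem_Icc] at hl
    exact (hf (j + 1 - l) (by omega) (by omega)).continuousOn
  -- continuity of Φ u j  for continuous u
  have hΦc : ∀ u, ContinuousOn u (Set.Icc 0 T) → ∀ j, j ≤ n →
      ContinuousOn (Φ u j) (Set.Icc 0 T) := by
    intro u hu j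
    induction j using Nat.strong_induction_on with
    | _ j ih =>
      intro hjn
      rcases Nat.eq_zero_or_pos j with h0 | h1
      · subst h0
        have : Φ u 0 = fun _ => (1:ℝ) := funext (hΦ0 u)
        rw [this]; exact continuousOn_const
      · apply ContinuousOn.congr ?_ (fun t ht => hΦ u hu j h1 hjn t ht)
        apply ContinuousOn.add
        · apply continuousOn_finset_sum
          intro k hk
          rw [Finset.mem_Icc] at hk
          exact ((continuousOn_const.mul (ih (j - k) (by omega) (by omega))).mul
            ((hu.pow k).div_const _)).mul (hPc j k hk.1 hk.2 hjn)
        · apply continuousOn_finset_sum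
          intro k hk
          rw [Finset.mem_Icc] at hk
          have hg : ContinuousOn
              (fun s => Φ u (j - k) s * (u s ^ k / (Nat.factorial k : ℝ)) * fd j k s)
              (Set.Icc 0 T) :=
            ((ih (j - k) (by omega) (by omega)).mul ((hu.pow k).div_const _)).mul
              (hfdc j k hk.1 hk.2 hjn)
          have hint : IntegrableOn
              (fun s => Φ u (j - k) s * (u s ^ k / (Nat.factorial k : ℝ)) * fd j k s)
              (Set.uIcc 0 T) volume := by
            rw [Set.uIcc_of_le hT.le]
            exact hg.integrableOn_Icc
          have hcont := intervalIntegral.continuousOn_primitive_interval hint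
          rw [Set.uIcc_of_le hT.le] at hcont
          exact continuousOn_const.mul hcont
  -- main induction
  have key : ∀ j, j ≤ n → TendstoUniformlyOn (fun i => Φ (ws i) j) (Φ w j) atTop
      (Set.Icc 0 T) := by
    intro j
    induction j using Nat.strong_induction_on with
    | _ j ih =>
      intro hjn
      rcases Nat.eq_zero_or_pos j with h0 | h1
      · subst h0
        have e1 : (fun i => Φ (ws i) 0) = fun _ => Φ w 0 := by
          funext i t; rw [hΦ0, hΦ0]
        rw [e1]; exact my_unif_const _
      · -- uniform convergence of the two sums
        have hA : TendstoUniformlyOn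
            (fun i t => ∑ k ∈ Finset.Icc 1 j,
              (-1 : ℝ) ^ (k + 1) * Φ (ws i) (j - k) t
                * (ws i t ^ k / (Nat.factorial k : ℝ))
                * ∏ l ∈ Finset.Icc 1 k, f (j + 1 - l) t)
            (fun t => ∑ k ∈ Finset.Icc 1 j,
              (-1 : ℝ) ^ (k + 1) * Φ w (j - k) t
                * (w t ^ k / (Nat.factorial k : ℝ))
                * ∏ l ∈ Finset.Icc 1 k, f (j + 1 - l) t)
            atTop (Set.Icc 0 T) := by
          apply my_unif_sum
          intro k hk
          rw [Finset.mem_Icc] at hk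
          have hΦjk : ContinuousOn (Φ w (j - k)) (Set.Icc 0 T) :=
            hΦc w hw (j - k) (by omega)
          have h1 : TendstoUniformlyOn
              (fun i t => (-1 : ℝ) ^ (k + 1) * Φ (ws i) (j - k) t)
              (fun t => (-1 : ℝ) ^ (k + 1) * Φ w (j - k) t) atTop (Set.Icc 0 T) :=
            my_unif_mul_cont (my_unif_const _) (ih (j - k) (by omega) (by omega))
              continuousOn_const hΦjk
          have h2 : TendstoUniformlyOn
              (fun i t => ws i t ^ k / (Nat.factorial k : ℝ))
              (fun t => w t ^ k / (Nat.factorial k : ℝ)) atTop (Set.Icc 0 T) := by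
            have := my_unif_mul_cont (my_unif_pow_cont hconv hw k)
              (my_unif_const (fun _ => ((Nat.factorial k : ℝ))⁻¹)) (hw.pow k)
              continuousOn_const
            simpa [div_eq_mul_inv] using this
          have h12 := my_unif_mul_cont h1 h2 (continuousOn_const.mul hΦjk)
            ((hw.pow k).div_const _)
          exact my_unif_mul_cont h12 (my_unif_const _)
            ((continuousOn_const.mul hΦjk).mul ((hw.pow k).div_const _))
            (hPc j k hk.1 hk.2 hjn)
        have hB : TendstoUniformlyOn
            (fun i t => ∑ k ∈ Finset.Icc 1 j,
              (-1 : ℝ) ^ k *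
                ∫ s in (0:ℝ)..t,
                  Φ (ws i) (j - k) s * (ws i s ^ k / (Nat.factorial k : ℝ)) * fd j k s)
            (fun t => ∑ k ∈ Finset.Icc 1 j,
              (-1 : ℝ) ^ k *
                ∫ s in (0:ℝ)..t,
                  Φ w (j - k) s * (w s ^ k / (Nat.factorial k : ℝ)) * fd j k s)
            atTop (Set.Icc 0 T) := by
          apply my_unif_sum
          intro k hk
          rw [Finset.mem_Icc] at hk
          have hΦjk : ContinuousOn (Φ w (j - k)) (Set.Icc 0 T) :=
            hΦc w hw (j - k) (by omega)
          have h2 : TendstoUniformlyOn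
              (fun i t => ws i t ^ k / (Nat.factorial k : ℝ))
              (fun t => w t ^ k / (Nat.factorial k : ℝ)) atTop (Set.Icc 0 T) := by
            have := my_unif_mul_cont (my_unif_pow_cont hconv hw k)
              (my_unif_const (fun _ => ((Nat.factorial k : ℝ))⁻¹)) (hw.pow k)
              continuousOn_const
            simpa [div_eq_mul_inv] using this
          have h12 := my_unif_mul_cont (ih (j - k) (by omega) (by omega)) h2
            hΦjk ((hw.pow k).div_const _)
          have hg : TendstoUniformlyOn
              (fun i s => Φ (ws i) (j - k) s * (ws i s ^ k / (Nat.factorial k : ℝ)) * fd j k s)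
              (fun s => Φ w (j - k) s * (w s ^ k / (Nat.factorial k : ℝ)) * fd j k s)
              atTop (Set.Icc 0 T) :=
            my_unif_mul_cont h12 (my_unif_const _)
              (hΦjk.mul ((hw.pow k).div_const _)) (hfdc j k hk.1 hk.2 hjn)
          have hgc : ∀ i, ContinuousOn
              (fun s => Φ (ws i) (j - k) s * (ws i s ^ k / (Nat.factorial k : ℝ)) * fd j k s)
              (Set.Icc 0 T) := fun i =>
            ((hΦc (ws i) (hws i) (j - k) (by omega)).mul
              (((hws i).pow k).div_const _)).mul (hfdc j k hk.1 hk.2 hjn)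
          have hglc : ContinuousOn
              (fun s => Φ w (j - k) s * (w s ^ k / (Nat.factorial k : ℝ)) * fd j k s)
              (Set.Icc 0 T) :=
            (hΦjk.mul ((hw.pow k).div_const _)).mul (hfdc j k hk.1 hk.2 hjn)
          have hint := my_unif_int hT.le hgc hglc hg
          have hprimc : ContinuousOn
              (fun t => ∫ s in (0:ℝ)..t,
                Φ w (j - k) s * (w s ^ k / (Nat.factorial k : ℝ)) * fd j k s)
              (Set.Icc 0 T) := by
            have hi2 : IntegrableOn
                (fun s => Φ w (j - k) s * (w s ^ k / (Nat.factorial k : ℝ)) * fd j k s)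
                (Set.uIcc 0 T) volume := by
              rw [Set.uIcc_of_le hT.le]; exact hglc.integrableOn_Icc
            have h' := intervalIntegral.continuousOn_primitive_interval hi2
            rwa [Set.uIcc_of_le hT.le] at h'
          exact my_unif_mul_cont (my_unif_const _) hint continuousOn_const hprimc
        have hAB := hA.add hB
        have hmain : TendstoUniformlyOn
            (fun i t =>
              (∑ k ∈ Finset.Icc 1 j,
                (-1 : ℝ) ^ (k + 1) * Φ (ws i) (j - k) t
                  * (ws i t ^ k / (Nat.factorial k : ℝ))
                  * ∏ l ∈ Finset.Icc 1 k, f (j + 1 - l) t)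
              + ∑ k ∈ Finset.Icc 1 j,
                (-1 : ℝ) ^ k *
                  ∫ s in (0:ℝ)..t,
                    Φ (ws i) (j - k) s * (ws i s ^ k / (Nat.factorial k : ℝ)) * fd j k s)
            (fun t =>
              (∑ k ∈ Finset.Icc 1 j,
                (-1 : ℝ) ^ (k + 1) * Φ w (j - k) t
                  * (w t ^ k / (Nat.factorial k : ℝ))
                  * ∏ l ∈ Finset.Icc 1 k, f (j + 1 - l) t)
              + ∑ k ∈ Finset.Icc 1 j,
                (-1 : ℝ) ^ k *
                  ∫ s in (0:ℝ)..t,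
                    Φ w (j - k) s * (w s ^ k / (Nat.factorial k : ℝ)) * fd j k s)
            atTop (Set.Icc 0 T) := hAB
        refine (hmain.congr ?_).congr_right ?_
        · exact Eventually.of_forall fun i t ht => (hΦ (ws i) (hws i) j h1 hjn t ht).symm
        · exact fun t ht => (hΦ w hw j h1 hjn t ht).symm
  exact key n le_rfl
end

section
/- Let (w_j)_{j≥1} and w be continuous real-valued functions on [0,T] such that w_j(t) → w(t) as j → ∞ for every t ∈ [0,T], and such that there exists K > 0 with |w_j(t)| ≤ K for all j ≥ 1 and all t ∈ [0,T]. Then Φ_n[w_j](t) → Φ_n[w](t) as j → ∞ for every t ∈ [0,T]. -/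
open MeasureTheory Filter

lemma stmt7_aux_prod {S : Set ℝ} (g : ℕ → ℝ → ℝ) (s : Finset ℕ)
    (h : ∀ i ∈ s, ContDiffOn ℝ 1 (g i) S) :
    ContDiffOn ℝ 1 (fun x => ∏ i ∈ s, g i x) S := by
  classical
  induction s using Finset.induction_on with
  | empty => simpa using contDiffOn_const
  | insert a s hi ihs =>
    simp only [Finset.prod_insert hi]
    exact (h a (Finset.mem_insert_self a s)).mul
      (ihs fun i hi' => h i (Finset.mem_insert_of_mem hi'))

/-- Deterministic stability (pointwise version, hypotheses (H2)-(H3)): if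
`w_j(t) → w(t)` for every `t ∈ [0,T]` and the `w_j` are uniformly bounded by
`K` on `[0,T]`, then `Φ_n[w_j](t) → Φ_n[w](t)` for every `t ∈ [0,T]`. -/
theorem stmt7
    (T : ℝ) (hT : 0 < T) (n : ℕ) (hn : 1 ≤ n)
    (f : ℕ → ℝ → ℝ)
    (hf : ∀ i, 1 ≤ i → i ≤ n → ContDiffOn ℝ 1 (f i) (Set.Icc 0 T))
    (fd : ℕ → ℕ → ℝ → ℝ)
    (hfd : ∀ j k, 1 ≤ k → k ≤ j → j ≤ n → ∀ t ∈ Set.Icc (0:ℝ) T,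
      HasDerivWithinAt (fun s => ∏ l ∈ Finset.Icc 1 k, f (j + 1 - l) s)
        (fd j k t) (Set.Icc 0 T) t)
    (Φ : (ℝ → ℝ) → ℕ → ℝ → ℝ)
    (hΦ0 : ∀ u t, Φ u 0 t = 1)
    (hΦ : ∀ u : ℝ → ℝ, ContinuousOn u (Set.Icc 0 T) →
      ∀ j, 1 ≤ j → j ≤ n → ∀ t ∈ Set.Icc (0:ℝ) T,
      Φ u j t
        = (∑ k ∈ Finset.Icc 1 j,
            (-1 : ℝ) ^ (k + 1) * Φ u (j - k) t
              * (u t ^ k / (Nat.factorial k : ℝ))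
              * ∏ l ∈ Finset.Icc 1 k, f (j + 1 - l) t)
        + ∑ k ∈ Finset.Icc 1 j,
            (-1 : ℝ) ^ k *
              ∫ s in (0:ℝ)..t,
                Φ u (j - k) s * (u s ^ k / (Nat.factorial k : ℝ)) * fd j k s)
    (ws : ℕ → ℝ → ℝ) (hws : ∀ j, ContinuousOn (ws j) (Set.Icc 0 T))
    (w : ℝ → ℝ) (hw : ContinuousOn w (Set.Icc 0 T))
    (hconv : ∀ t ∈ Set.Icc (0:ℝ) T,
      Tendsto (fun j => ws j t) atTop (nhds (w t)))
    (K : ℝ) (hK : 0 < K)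
    (hbound : ∀ j, ∀ t ∈ Set.Icc (0:ℝ) T, |ws j t| ≤ K) :
    ∀ t ∈ Set.Icc (0:ℝ) T,
      Tendsto (fun j => Φ (ws j) n t) atTop (nhds (Φ w n t)) := by
  set S : Set ℝ := Set.Icc (0:ℝ) T with hS
  have hUD : UniqueDiffOn ℝ S := uniqueDiffOn_Icc hT
  -- `w` is bounded by `K`
  have hwK : ∀ t ∈ S, |w t| ≤ K := by
    intro t ht
    exact le_of_tendsto ((hconv t ht).abs)
      (Filter.Eventually.of_forall fun j => hbound j t ht)
  -- products of the `f`'s are C¹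
  have hPcd : ∀ m k, 1 ≤ k → k ≤ m → m ≤ n →
      ContDiffOn ℝ 1 (fun s => ∏ l ∈ Finset.Icc 1 k, f (m + 1 - l) s) S := by
    intro m k hk1 hkm hmn
    refine stmt7_aux_prod _ _ fun l hl => ?_
    rw [Finset.mem_Icc] at hl
    exact hf (m + 1 - l) (by omega) (by omega)
  -- `fd m k` is continuous on `S`
  have hfdc : ∀ m k, 1 ≤ k → k ≤ m → m ≤ n → ContinuousOn (fd m k) S := by
    intro m k hk1 hkm hmn
    have h1 : ContinuousOn
        (derivWithin (fun s => ∏ l ∈ Finset.Icc 1 k, f (m + 1 - l) s) S) S :=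
      (hPcd m k hk1 hkm hmn).continuousOn_derivWithin hUD le_rfl
    exact h1.congr fun t ht =>
      (((hfd m k hk1 hkm hmn t ht).derivWithin (hUD t ht))).symm
  -- primitives of continuous functions are continuous
  have hprim : ∀ g : ℝ → ℝ, ContinuousOn g S →
      ContinuousOn (fun t => ∫ s in (0:ℝ)..t, g s) S := by
    intro g hg
    have h1 : IntegrableOn g (Set.uIcc 0 T) := by
      rw [Set.uIcc_of_le hT.le]; exact hg.integrableOn_Icc
    have := intervalIntegral.continuousOn_primitive_interval h1
    rwa [Set.uIcc_of_le hT.le] at this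
  -- inclusion of the integration interval
  have hsub : ∀ t ∈ S, Set.uIoc (0:ℝ) t ⊆ S := by
    intro t ht s hs
    rw [Set.uIoc_of_le ht.1] at hs
    exact ⟨hs.1.le, hs.2.trans ht.2⟩
  -- main induction
  have main : ∀ m, m ≤ n →
      (∀ u, ContinuousOn u S → ContinuousOn (Φ u m) S) ∧
      (∃ C, ∀ u, ContinuousOn u S → (∀ t ∈ S, |u t| ≤ K) →
        ∀ t ∈ S, |Φ u m t| ≤ C) ∧
      (∀ t ∈ S, Tendsto (fun j => Φ (ws j) m t) atTop (nhds (Φ w m t))) := by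
    intro m
    induction m using Nat.strong_induction_on with
    | _ m ih =>
      intro hmn
      rcases Nat.eq_zero_or_pos m with hm0 | hm1
      · subst hm0
        refine ⟨fun u hu => ?_, ⟨1, fun u hu huK t ht => ?_⟩, fun t ht => ?_⟩
        · exact continuousOn_const.congr fun t _ => hΦ0 u t
        · rw [hΦ0]; simp
        · simp only [hΦ0]; exact tendsto_const_nhds
      -- inductive step, `1 ≤ m`
      -- bounds from induction hypothesis
      have ihC : ∀ k : ℕ, ∃ C, 0 ≤ C ∧ (1 ≤ k → k ≤ m →
          ∀ u, ContinuousOn u S → (∀ t ∈ S, |u t| ≤ K) →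
            ∀ t ∈ S, |Φ u (m - k) t| ≤ C) := by
        intro k
        by_cases h : 1 ≤ k ∧ k ≤ m
        · obtain ⟨C, hC⟩ := (ih (m - k) (by omega) (by omega)).2.1
          exact ⟨max C 0, le_max_right _ _, fun _ _ u hu huK t ht =>
            (hC u hu huK t ht).trans (le_max_left _ _)⟩
        · exact ⟨0, le_rfl, fun h1 h2 => absurd ⟨h1, h2⟩ h⟩
      choose C hC0 hCb using ihC
      -- bounds on products of `f`'s
      have ihP : ∀ k : ℕ, ∃ B, 0 ≤ B ∧ (1 ≤ k → k ≤ m →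
          ∀ t ∈ S, |∏ l ∈ Finset.Icc 1 k, f (m + 1 - l) t| ≤ B) := by
        intro k
        by_cases h : 1 ≤ k ∧ k ≤ m
        · obtain ⟨B, hB⟩ := isCompact_Icc.exists_bound_of_continuousOn
            ((hPcd m k h.1 h.2 hmn).continuousOn)
          exact ⟨max B 0, le_max_right _ _, fun _ _ t ht =>
            (hB t ht).trans (le_max_left _ _)⟩
        · exact ⟨0, le_rfl, fun h1 h2 => absurd ⟨h1, h2⟩ h⟩
      choose BP hBP0 hBPb using ihP
      -- bounds on `fd m k`
      have ihF : ∀ k : ℕ, ∃ B, 0 ≤ B ∧ (1 ≤ k → k ≤ m →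
          ∀ t ∈ S, |fd m k t| ≤ B) := by
        intro k
        by_cases h : 1 ≤ k ∧ k ≤ m
        · obtain ⟨B, hB⟩ := isCompact_Icc.exists_bound_of_continuousOn
            (hfdc m k h.1 h.2 hmn)
          exact ⟨max B 0, le_max_right _ _, fun _ _ t ht =>
            (hB t ht).trans (le_max_left _ _)⟩
        · exact ⟨0, le_rfl, fun h1 h2 => absurd ⟨h1, h2⟩ h⟩
      choose BF hBF0 hBFb using ihF
      -- continuity of the integrand
      have hGcont : ∀ u, ContinuousOn u S → ∀ k ∈ Finset.Icc 1 m,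
          ContinuousOn (fun s => Φ u (m - k) s *
            (u s ^ k / (Nat.factorial k : ℝ)) * fd m k s) S := by
        intro u hu k hk
        rw [Finset.mem_Icc] at hk
        exact (((ih (m - k) (by omega) (by omega)).1 u hu).mul
          ((hu.pow k).div_const _)).mul (hfdc m k hk.1 hk.2 hmn)
      -- continuity of `Φ u m`
      have hcont : ∀ u, ContinuousOn u S → ContinuousOn (Φ u m) S := by
        intro u hu
        have hRHS : ContinuousOn (fun t =>
            (∑ k ∈ Finset.Icc 1 m,
              (-1 : ℝ) ^ (k + 1) * Φ u (m - k) t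
                * (u t ^ k / (Nat.factorial k : ℝ))
                * ∏ l ∈ Finset.Icc 1 k, f (m + 1 - l) t)
            + ∑ k ∈ Finset.Icc 1 m,
              (-1 : ℝ) ^ k *
                ∫ s in (0:ℝ)..t,
                  Φ u (m - k) s * (u s ^ k / (Nat.factorial k : ℝ)) * fd m k s) S := by
          refine ContinuousOn.add ?_ ?_
          · refine continuousOn_finset_sum _ fun k hk => ?_
            rw [Finset.mem_Icc] at hk
            exact ((continuousOn_const.mul
              ((ih (m - k) (by omega) (by omega)).1 u hu)).mul
              ((hu.pow k).div_const _)).mul (hPcd m k hk.1 hk.2 hmn).continuousOn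
          · refine continuousOn_finset_sum _ fun k hk => ?_
            exact continuousOn_const.mul (hprim _ (hGcont u hu k hk))
        exact hRHS.congr fun t ht => hΦ u hu m hm1 hmn t ht
      refine ⟨hcont, ?_, ?_⟩
      -- uniform bound
      · refine ⟨∑ k ∈ Finset.Icc 1 m,
            (C k * (K ^ k / (Nat.factorial k : ℝ)) * BP k
              + C k * (K ^ k / (Nat.factorial k : ℝ)) * BF k * T),
          fun u hu huK t ht => ?_⟩
        rw [hΦ u hu m hm1 hmn t ht]
        have habs : ∀ k ∈ Finset.Icc 1 m,
            |(-1 : ℝ) ^ (k + 1) * Φ u (m - k) t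
                * (u t ^ k / (Nat.factorial k : ℝ))
                * ∏ l ∈ Finset.Icc 1 k, f (m + 1 - l) t
              + (-1 : ℝ) ^ k *
                ∫ s in (0:ℝ)..t,
                  Φ u (m - k) s * (u s ^ k / (Nat.factorial k : ℝ)) * fd m k s|
            ≤ C k * (K ^ k / (Nat.factorial k : ℝ)) * BP k
              + C k * (K ^ k / (Nat.factorial k : ℝ)) * BF k * T := by
          intro k hk
          rw [Finset.mem_Icc] at hk
          have hfac : (0:ℝ) < (Nat.factorial k : ℝ) := by
            exact_mod_cast Nat.factorial_pos k
          have hpow : ∀ s ∈ S, |u s ^ k / (Nat.factorial k : ℝ)|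
              ≤ K ^ k / (Nat.factorial k : ℝ) := by
            intro s hs
            rw [abs_div, abs_pow, abs_of_pos hfac]
            exact div_le_div_of_nonneg_right
              (pow_le_pow_left₀ (abs_nonneg _) (huK s hs) k) hfac.le
          refine (abs_add_le _ _).trans (add_le_add ?_ ?_)
          · rw [abs_mul, abs_mul, abs_mul, abs_pow, abs_neg, abs_one, one_pow,
              one_mul]
            refine mul_le_mul (mul_le_mul
              (hCb k hk.1 hk.2 u hu huK t ht) (hpow t ht) (abs_nonneg _)
              (hC0 k)) (hBPb k hk.1 hk.2 t ht) (abs_nonneg _)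
              (mul_nonneg (hC0 k) (by positivity))
          · rw [abs_mul, abs_pow, abs_neg, abs_one, one_pow, one_mul]
            have hle : ∀ s ∈ Set.uIoc (0:ℝ) t,
                ‖Φ u (m - k) s * (u s ^ k / (Nat.factorial k : ℝ)) * fd m k s‖
                ≤ C k * (K ^ k / (Nat.factorial k : ℝ)) * BF k := by
              intro s hs
              have hs' : s ∈ S := hsub t ht hs
              rw [Real.norm_eq_abs, abs_mul, abs_mul]
              refine mul_le_mul (mul_le_mul
                (hCb k hk.1 hk.2 u hu huK s hs') (hpow s hs') (abs_nonneg _)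
                (hC0 k)) (hBFb k hk.1 hk.2 s hs') (abs_nonneg _)
                (mul_nonneg (hC0 k) (by positivity))
            have := intervalIntegral.norm_integral_le_of_norm_le_const hle
            rw [Real.norm_eq_abs] at this
            refine this.trans ?_
            have : |t - 0| ≤ T := by
              rw [sub_zero, abs_of_nonneg ht.1]; exact ht.2
            exact mul_le_mul_of_nonneg_left this (mul_nonneg (mul_nonneg (hC0 k) (by positivity)) (hBF0 k))
        calc |∑ k ∈ Finset.Icc 1 m, _ + ∑ k ∈ Finset.Icc 1 m, _|
            = |∑ k ∈ Finset.Icc 1 m,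
                ((-1 : ℝ) ^ (k + 1) * Φ u (m - k) t
                  * (u t ^ k / (Nat.factorial k : ℝ))
                  * ∏ l ∈ Finset.Icc 1 k, f (m + 1 - l) t
                + (-1 : ℝ) ^ k *
                  ∫ s in (0:ℝ)..t,
                    Φ u (m - k) s * (u s ^ k / (Nat.factorial k : ℝ)) * fd m k s)| := by
              rw [Finset.sum_add_distrib]
          _ ≤ _ := (Finset.abs_sum_le_sum_abs _ _).trans
              (Finset.sum_le_sum habs)
      -- convergence
      · intro t ht
        have hrw : ∀ j, Φ (ws j) m t
            = (∑ k ∈ Finset.Icc 1 m,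
                (-1 : ℝ) ^ (k + 1) * Φ (ws j) (m - k) t
                  * (ws j t ^ k / (Nat.factorial k : ℝ))
                  * ∏ l ∈ Finset.Icc 1 k, f (m + 1 - l) t)
              + ∑ k ∈ Finset.Icc 1 m,
                (-1 : ℝ) ^ k *
                  ∫ s in (0:ℝ)..t,
                    Φ (ws j) (m - k) s * (ws j s ^ k / (Nat.factorial k : ℝ))
                      * fd m k s :=
          fun j => hΦ (ws j) (hws j) m hm1 hmn t ht
        rw [hΦ w hw m hm1 hmn t ht]
        simp only [hrw]
        refine Tendsto.add (tendsto_finset_sum _ fun k hk => ?_)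
          (tendsto_finset_sum _ fun k hk => ?_)
        · rw [Finset.mem_Icc] at hk
          exact ((tendsto_const_nhds.mul
            ((ih (m - k) (by omega) (by omega)).2.2 t ht)).mul
            (((hconv t ht).pow k).div_const _)).mul tendsto_const_nhds
        · rw [Finset.mem_Icc] at hk
          refine Tendsto.const_mul _ ?_
          refine intervalIntegral.tendsto_integral_filter_of_dominated_convergence
            (fun _ => C k * (K ^ k / (Nat.factorial k : ℝ)) * BF k)
            (Filter.Eventually.of_forall fun j => ?_)
            (Filter.Eventually.of_forall fun j => ?_)
            intervalIntegrable_const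
            ?_
          · exact ((hGcont (ws j) (hws j) k (Finset.mem_Icc.2 hk)).mono
              (hsub t ht)).aestronglyMeasurable measurableSet_uIoc
          · refine Filter.Eventually.of_forall fun s hs => ?_
            have hs' : s ∈ S := hsub t ht hs
            have hfac : (0:ℝ) < (Nat.factorial k : ℝ) := by
              exact_mod_cast Nat.factorial_pos k
            rw [Real.norm_eq_abs, abs_mul, abs_mul]
            refine mul_le_mul (mul_le_mul
              (hCb k hk.1 hk.2 (ws j) (hws j) (hbound j) s hs') ?_ (abs_nonneg _)
              (hC0 k)) (hBFb k hk.1 hk.2 s hs') (abs_nonneg _)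
              (mul_nonneg (hC0 k) (by positivity))
            rw [abs_div, abs_pow, abs_of_pos hfac]
            exact div_le_div_of_nonneg_right
              (pow_le_pow_left₀ (abs_nonneg _) (hbound j s hs') k) hfac.le
          · refine Filter.Eventually.of_forall fun s hs => ?_
            have hs' : s ∈ S := hsub t ht hs
            exact (((ih (m - k) (by omega) (by omega)).2.2 s hs').mul
              (((hconv s hs').pow k).div_const _)).mul tendsto_const_nhds
  exact (main n le_rfl).2.2
end

section
/- For every K > 0 there exists a constant C > 0, depending only on n, T, K and the functions f_1,…,f_n, such that for every continuous w : [0,T] → ℝ with sup_{t∈[0,T]} |w(t)| ≤ K one has sup_{t∈[0,T]} |Φ_j[w](t)| ≤ C for all 0 ≤ j ≤ n. -/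
open MeasureTheory

/-- Uniform boundedness component of the induction hypothesis (H̄_j): for every
`K > 0` there is a constant `C > 0` (depending only on `n`, `T`, `K` and the
`f_i`) bounding `Φ_j[w]` on `[0,T]` for all `0 ≤ j ≤ n`, uniformly over all
continuous `w` bounded by `K` on `[0,T]`. -/
theorem stmt8
    (T : ℝ) (hT : 0 < T) (n : ℕ) (hn : 1 ≤ n)
    (f : ℕ → ℝ → ℝ)
    (hf : ∀ i, 1 ≤ i → i ≤ n → ContDiffOn ℝ 1 (f i) (Set.Icc 0 T))
    (fd : ℕ → ℕ → ℝ → ℝ)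
    (hfd : ∀ j k, 1 ≤ k → k ≤ j → j ≤ n → ∀ t ∈ Set.Icc (0:ℝ) T,
      HasDerivWithinAt (fun s => ∏ l ∈ Finset.Icc 1 k, f (j + 1 - l) s)
        (fd j k t) (Set.Icc 0 T) t)
    (Φ : (ℝ → ℝ) → ℕ → ℝ → ℝ)
    (hΦ0 : ∀ u t, Φ u 0 t = 1)
    (hΦ : ∀ u : ℝ → ℝ, ContinuousOn u (Set.Icc 0 T) →
      ∀ j, 1 ≤ j → j ≤ n → ∀ t ∈ Set.Icc (0:ℝ) T,
      Φ u j t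
        = (∑ k ∈ Finset.Icc 1 j,
            (-1 : ℝ) ^ (k + 1) * Φ u (j - k) t
              * (u t ^ k / (Nat.factorial k : ℝ))
              * ∏ l ∈ Finset.Icc 1 k, f (j + 1 - l) t)
        + ∑ k ∈ Finset.Icc 1 j,
            (-1 : ℝ) ^ k *
              ∫ s in (0:ℝ)..t,
                Φ u (j - k) s * (u s ^ k / (Nat.factorial k : ℝ)) * fd j k s)
    : ∀ K : ℝ, 0 < K → ∃ C : ℝ, 0 < C ∧
      ∀ w : ℝ → ℝ, ContinuousOn w (Set.Icc 0 T) →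
        (∀ t ∈ Set.Icc (0:ℝ) T, |w t| ≤ K) →
        ∀ j ≤ n, ∀ t ∈ Set.Icc (0:ℝ) T, |Φ w j t| ≤ C := by
  intro K hK
  have hIcc : IsCompact (Set.Icc (0:ℝ) T) := isCompact_Icc
  have hUD : UniqueDiffOn ℝ (Set.Icc (0:ℝ) T) := uniqueDiffOn_Icc hT
  -- bound on the f i
  have hbnd : ∀ i : ℕ, ∃ B : ℝ, 0 ≤ B ∧
      (1 ≤ i → i ≤ n → ∀ t ∈ Set.Icc (0:ℝ) T, |f i t| ≤ B) := by
    intro i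
    by_cases hi : 1 ≤ i ∧ i ≤ n
    · obtain ⟨B, hB⟩ := hIcc.exists_bound_of_continuousOn (hf i hi.1 hi.2).continuousOn
      exact ⟨|B|, abs_nonneg _, fun _ _ t ht => (hB t ht).trans (le_abs_self B)⟩
    · exact ⟨0, le_rfl, fun h1 h2 => absurd ⟨h1, h2⟩ hi⟩
  choose B hB0 hB using hbnd
  set F : ℝ := 1 + ∑ i ∈ Finset.Icc 1 n, B i with hFdef
  have hF1 : (1:ℝ) ≤ F := by
    have : 0 ≤ ∑ i ∈ Finset.Icc 1 n, B i := Finset.sum_nonneg fun i _ => hB0 i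
    simp [hFdef]; linarith
  have hBF : ∀ i, 1 ≤ i → i ≤ n → B i ≤ F := by
    intro i h1 h2
    have : B i ≤ ∑ i ∈ Finset.Icc 1 n, B i :=
      Finset.single_le_sum (fun i _ => hB0 i) (Finset.mem_Icc.2 ⟨h1, h2⟩)
    linarith
  -- bound on the fd j k
  have hdbnd : ∀ j k : ℕ, ∃ D : ℝ, 0 ≤ D ∧
      (1 ≤ k → k ≤ j → j ≤ n → ∀ t ∈ Set.Icc (0:ℝ) T, |fd j k t| ≤ D) := by
    intro j k
    by_cases hjk : 1 ≤ k ∧ k ≤ j ∧ j ≤ n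
    · obtain ⟨hk1, hkj, hjn⟩ := hjk
      have hp : ContDiffOn ℝ 1 (fun s => ∏ l ∈ Finset.Icc 1 k, f (j + 1 - l) s)
          (Set.Icc 0 T) := by
        apply contDiffOn_prod
        intro l hl
        rw [Finset.mem_Icc] at hl
        have h1 : 1 ≤ j + 1 - l := by omega
        have h2 : j + 1 - l ≤ n := by omega
        exact hf _ h1 h2
      have hderivcont : ContinuousOn
          (derivWithin (fun s => ∏ l ∈ Finset.Icc 1 k, f (j + 1 - l) s) (Set.Icc 0 T))
          (Set.Icc 0 T) := hp.continuousOn_derivWithin hUD le_rfl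
      obtain ⟨D, hD⟩ := hIcc.exists_bound_of_continuousOn hderivcont
      refine ⟨|D|, abs_nonneg _, fun _ _ _ t ht => ?_⟩
      have heq : fd j k t
          = derivWithin (fun s => ∏ l ∈ Finset.Icc 1 k, f (j + 1 - l) s) (Set.Icc 0 T) t :=
        ((hfd j k hk1 hkj hjn t ht).derivWithin (hUD t ht)).symm
      rw [heq]
      exact (hD t ht).trans (le_abs_self D)
    · refine ⟨0, le_rfl, fun h1 h2 h3 => absurd ⟨h1, h2, h3⟩ hjk⟩
  choose D hD0 hD using hdbnd
  set Mfd : ℝ := ∑ j ∈ Finset.Icc 1 n, ∑ k ∈ Finset.Icc 1 n, D j k with hMdef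
  have hMfd0 : 0 ≤ Mfd :=
    Finset.sum_nonneg fun j _ => Finset.sum_nonneg fun k _ => hD0 j k
  have hDM : ∀ j k, 1 ≤ k → k ≤ j → j ≤ n → D j k ≤ Mfd := by
    intro j k hk1 hkj hjn
    have h1 : D j k ≤ ∑ k ∈ Finset.Icc 1 n, D j k :=
      Finset.single_le_sum (fun k _ => hD0 j k) (Finset.mem_Icc.2 ⟨hk1, by omega⟩)
    have h2 : ∑ k ∈ Finset.Icc 1 n, D j k ≤ Mfd :=
      Finset.single_le_sum (f := fun j => ∑ k ∈ Finset.Icc 1 n, D j k)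
        (fun j _ => Finset.sum_nonneg fun k _ => hD0 j k)
        (Finset.mem_Icc.2 ⟨by omega, hjn⟩)
    linarith
  set Kp : ℝ := (max 1 K) ^ n with hKpdef
  have hKp1 : (1:ℝ) ≤ Kp := one_le_pow₀ (le_max_left 1 K)
  have hKp0 : (0:ℝ) ≤ Kp := by linarith
  have hKk : ∀ k : ℕ, 1 ≤ k → k ≤ n → K ^ k ≤ Kp := by
    intro k hk1 hkn
    calc K ^ k ≤ (max 1 K) ^ k :=
          pow_le_pow_left₀ hK.le (le_max_right 1 K) k
      _ ≤ (max 1 K) ^ n := pow_le_pow_right₀ (le_max_left 1 K) hkn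
  have hF0 : (0:ℝ) ≤ F := by linarith
  have hFn1 : (1:ℝ) ≤ F ^ n := one_le_pow₀ hF1
  -- the constant
  set A : ℝ := 1 + n * (Kp * (F ^ n + Mfd * T)) with hAdef
  have hA1 : (1:ℝ) ≤ A := by
    have h1 : (0:ℝ) ≤ F ^ n + Mfd * T := by positivity
    have h2 : (0:ℝ) ≤ Kp * (F ^ n + Mfd * T) := by positivity
    have h3 : (0:ℝ) ≤ (n:ℝ) := Nat.cast_nonneg n
    nlinarith
  have hA0 : (0:ℝ) ≤ A := by linarith
  refine ⟨A ^ n, by positivity, ?_⟩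
  intro w hw hwK
  -- the key bound, by strong induction
  have key : ∀ j, j ≤ n → ∀ t ∈ Set.Icc (0:ℝ) T, |Φ w j t| ≤ A ^ j := by
    intro j
    induction j using Nat.strong_induction_on with
    | _ j ih =>
      intro hjn t ht
      rcases Nat.eq_zero_or_pos j with hj0 | hj1
      · subst hj0; simp [hΦ0]
      · rw [hΦ w hw j hj1 hjn t ht]
        -- bound each summand
        have hterm1 : ∀ k ∈ Finset.Icc 1 j,
            |(-1 : ℝ) ^ (k + 1) * Φ w (j - k) t * (w t ^ k / (Nat.factorial k : ℝ))
              * ∏ l ∈ Finset.Icc 1 k, f (j + 1 - l) t|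
            ≤ A ^ (j - 1) * (Kp * F ^ n) := by
          intro k hk
          rw [Finset.mem_Icc] at hk
          obtain ⟨hk1, hkj⟩ := hk
          have hΦb : |Φ w (j - k) t| ≤ A ^ (j - k) :=
            ih (j - k) (by omega) (by omega) t ht
          have hwb : |w t ^ k / (Nat.factorial k : ℝ)| ≤ Kp := by
            rw [abs_div, abs_pow]
            have h1 : |w t| ^ k ≤ K ^ k := pow_le_pow_left₀ (abs_nonneg _) (hwK t ht) k
            have h2 : (1:ℝ) ≤ |(Nat.factorial k : ℝ)| := by
              rw [abs_of_nonneg (by positivity)]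
              exact_mod_cast Nat.one_le_iff_ne_zero.2 (Nat.factorial_ne_zero k)
            calc |w t| ^ k / |(Nat.factorial k : ℝ)| ≤ |w t| ^ k :=
                  div_le_self (by positivity) h2
              _ ≤ K ^ k := h1
              _ ≤ Kp := hKk k hk1 (by omega)
          have hprodb : |∏ l ∈ Finset.Icc 1 k, f (j + 1 - l) t| ≤ F ^ n := by
            rw [Finset.abs_prod]
            calc ∏ l ∈ Finset.Icc 1 k, |f (j + 1 - l) t|
                ≤ ∏ l ∈ Finset.Icc 1 k, F := by
                  apply Finset.prod_le_prod (fun l _ => abs_nonneg _)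
                  intro l hl
                  rw [Finset.mem_Icc] at hl
                  have h1 : 1 ≤ j + 1 - l := by omega
                  have h2 : j + 1 - l ≤ n := by omega
                  exact (hB _ h1 h2 t ht).trans (hBF _ h1 h2)
              _ = F ^ k := by rw [Finset.prod_const, Nat.card_Icc]; norm_num
              _ ≤ F ^ n := pow_le_pow_right₀ hF1 (by omega)
          have hApow : A ^ (j - k) ≤ A ^ (j - 1) := pow_le_pow_right₀ hA1 (by omega)
          calc |(-1 : ℝ) ^ (k + 1) * Φ w (j - k) t * (w t ^ k / (Nat.factorial k : ℝ))
                * ∏ l ∈ Finset.Icc 1 k, f (j + 1 - l) t|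
              = |Φ w (j - k) t| * |w t ^ k / (Nat.factorial k : ℝ)|
                * |∏ l ∈ Finset.Icc 1 k, f (j + 1 - l) t| := by
                rw [abs_mul, abs_mul, abs_mul, abs_pow, abs_neg, abs_one, one_pow, one_mul]
            _ ≤ A ^ (j - k) * Kp * F ^ n := by
                apply mul_le_mul (mul_le_mul hΦb hwb (abs_nonneg _) (by positivity))
                  hprodb (abs_nonneg _) (by positivity)
            _ ≤ A ^ (j - 1) * Kp * F ^ n :=
                mul_le_mul_of_nonneg_right (mul_le_mul_of_nonneg_right hApow hKp0)
                  (pow_nonneg hF0 n)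
            _ = A ^ (j - 1) * (Kp * F ^ n) := by ring
        have hterm2 : ∀ k ∈ Finset.Icc 1 j,
            |(-1 : ℝ) ^ k *
              ∫ s in (0:ℝ)..t,
                Φ w (j - k) s * (w s ^ k / (Nat.factorial k : ℝ)) * fd j k s|
            ≤ A ^ (j - 1) * (Kp * (Mfd * T)) := by
          intro k hk
          rw [Finset.mem_Icc] at hk
          obtain ⟨hk1, hkj⟩ := hk
          have hint : ‖∫ s in (0:ℝ)..t,
              Φ w (j - k) s * (w s ^ k / (Nat.factorial k : ℝ)) * fd j k s‖
              ≤ (A ^ (j - k) * Kp * Mfd) * |t - 0| := by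
            apply intervalIntegral.norm_integral_le_of_norm_le_const
            intro s hs
            have hsIcc : s ∈ Set.Icc (0:ℝ) T := by
              rw [Set.uIoc_of_le ht.1] at hs
              exact ⟨hs.1.le, hs.2.trans ht.2⟩
            have hΦb : |Φ w (j - k) s| ≤ A ^ (j - k) :=
              ih (j - k) (by omega) (by omega) s hsIcc
            have hwb : |w s ^ k / (Nat.factorial k : ℝ)| ≤ Kp := by
              rw [abs_div, abs_pow]
              have h1 : |w s| ^ k ≤ K ^ k := pow_le_pow_left₀ (abs_nonneg _) (hwK s hsIcc) k
              have h2 : (1:ℝ) ≤ |(Nat.factorial k : ℝ)| := by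
                rw [abs_of_nonneg (by positivity)]
                exact_mod_cast Nat.one_le_iff_ne_zero.2 (Nat.factorial_ne_zero k)
              calc |w s| ^ k / |(Nat.factorial k : ℝ)| ≤ |w s| ^ k :=
                    div_le_self (by positivity) h2
                _ ≤ K ^ k := h1
                _ ≤ Kp := hKk k hk1 (by omega)
            have hfdb : |fd j k s| ≤ Mfd :=
              (hD j k hk1 hkj hjn s hsIcc).trans (hDM j k hk1 hkj hjn)
            show ‖Φ w (j - k) s * (w s ^ k / (Nat.factorial k : ℝ)) * fd j k s‖
                ≤ A ^ (j - k) * Kp * Mfd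
            rw [Real.norm_eq_abs, abs_mul, abs_mul]
            exact mul_le_mul (mul_le_mul hΦb hwb (abs_nonneg _) (by positivity))
              hfdb (abs_nonneg _) (by positivity)
          have hApow : A ^ (j - k) ≤ A ^ (j - 1) := pow_le_pow_right₀ hA1 (by omega)
          have htT : |t - 0| ≤ T := by
            rw [sub_zero, abs_of_nonneg ht.1]; exact ht.2
          calc |(-1 : ℝ) ^ k *
              ∫ s in (0:ℝ)..t,
                Φ w (j - k) s * (w s ^ k / (Nat.factorial k : ℝ)) * fd j k s|
              = |∫ s in (0:ℝ)..t,
                Φ w (j - k) s * (w s ^ k / (Nat.factorial k : ℝ)) * fd j k s| := by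
                rw [abs_mul, abs_pow, abs_neg, abs_one, one_pow, one_mul]
            _ ≤ (A ^ (j - k) * Kp * Mfd) * |t - 0| := by
                rw [← Real.norm_eq_abs]; exact hint
            _ ≤ (A ^ (j - 1) * Kp * Mfd) * T := by
                apply mul_le_mul _ htT (abs_nonneg _) (by positivity)
                exact mul_le_mul_of_nonneg_right
                  (mul_le_mul_of_nonneg_right hApow hKp0) hMfd0
            _ = A ^ (j - 1) * (Kp * (Mfd * T)) := by ring
        have hsum1 : |∑ k ∈ Finset.Icc 1 j,
            (-1 : ℝ) ^ (k + 1) * Φ w (j - k) t * (w t ^ k / (Nat.factorial k : ℝ))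
              * ∏ l ∈ Finset.Icc 1 k, f (j + 1 - l) t|
            ≤ j * (A ^ (j - 1) * (Kp * F ^ n)) := by
          calc _ ≤ ∑ k ∈ Finset.Icc 1 j, |(-1 : ℝ) ^ (k + 1) * Φ w (j - k) t
                * (w t ^ k / (Nat.factorial k : ℝ))
                * ∏ l ∈ Finset.Icc 1 k, f (j + 1 - l) t| := Finset.abs_sum_le_sum_abs _ _
            _ ≤ ∑ k ∈ Finset.Icc 1 j, A ^ (j - 1) * (Kp * F ^ n) :=
                Finset.sum_le_sum hterm1
            _ = j * (A ^ (j - 1) * (Kp * F ^ n)) := by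
                rw [Finset.sum_const, Nat.card_Icc]; simp [nsmul_eq_mul]
        have hsum2 : |∑ k ∈ Finset.Icc 1 j,
            (-1 : ℝ) ^ k *
              ∫ s in (0:ℝ)..t,
                Φ w (j - k) s * (w s ^ k / (Nat.factorial k : ℝ)) * fd j k s|
            ≤ j * (A ^ (j - 1) * (Kp * (Mfd * T))) := by
          calc _ ≤ ∑ k ∈ Finset.Icc 1 j, |(-1 : ℝ) ^ k *
                ∫ s in (0:ℝ)..t,
                  Φ w (j - k) s * (w s ^ k / (Nat.factorial k : ℝ)) * fd j k s| :=
                Finset.abs_sum_le_sum_abs _ _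
            _ ≤ ∑ k ∈ Finset.Icc 1 j, A ^ (j - 1) * (Kp * (Mfd * T)) :=
                Finset.sum_le_sum hterm2
            _ = j * (A ^ (j - 1) * (Kp * (Mfd * T))) := by
                rw [Finset.sum_const, Nat.card_Icc]; simp [nsmul_eq_mul]
        have hjA : A ^ j = A ^ (j - 1) * A := by
          conv_lhs => rw [show j = (j - 1) + 1 by omega]
          rw [pow_succ]
        have hjn' : (j : ℝ) ≤ (n : ℝ) := Nat.cast_le.2 hjn
        have hApow0 : (0:ℝ) ≤ A ^ (j - 1) := pow_nonneg hA0 _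
        have hfinal : (j:ℝ) * (A ^ (j - 1) * (Kp * F ^ n))
            + (j:ℝ) * (A ^ (j - 1) * (Kp * (Mfd * T))) ≤ A ^ j := by
          rw [hjA, hAdef]
          have h1 : (0:ℝ) ≤ Kp * F ^ n := by positivity
          have h2 : (0:ℝ) ≤ Kp * (Mfd * T) := by positivity
          nlinarith [mul_nonneg hApow0 h1, mul_nonneg hApow0 h2]
        exact (abs_add_le _ _).trans ((add_le_add hsum1 hsum2).trans hfinal)
  intro j hjn t ht
  exact (key j hjn t ht).trans (pow_le_pow_right₀ hA1 hjn)
end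

section
/- For each j ≥ 1 let v_j : [0,T] → ℝ be integrable, set w_j(t) = ∫_0^t v_j(s) ds, and let J_n^{(j)} denote the iterated ordinary integrals built from f_1,…,f_n and v_j (J_0^{(j)}(t) = 1 and J_k^{(j)}(t) = ∫_0^t f_k(s) J_{k−1}^{(j)}(s) v_j(s) ds). Suppose w : [0,T] → ℝ is continuous and sup_{t∈[0,T]} |w_j(t) − w(t)| → 0 as j → ∞. Then sup_{t∈[0,T]} |J_n^{(j)}(t) − Φ_n[w](t)| → 0 as j → ∞. -/
open MeasureTheory Filter Set intervalIntegral


/-- continuity of the primitive on `[0,b]`. -/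
lemma myPrimCont {b : ℝ} {g : ℝ → ℝ} (hg : IntegrableOn g (Set.Icc 0 b)) :
    ContinuousOn (fun t => ∫ s in (0:ℝ)..t, g s) (Set.Icc 0 b) := by
  refine (intervalIntegral.continuousOn_primitive (μ := volume) hg).congr ?_
  intro x hx
  simp [intervalIntegral.integral_of_le hx.1]

/-- Fubini swap for primitives. -/
lemma mySwap {t : ℝ} (ht : 0 ≤ t) {φ ψ : ℝ → ℝ}
    (hφ : IntegrableOn φ (Set.Icc 0 t)) (hψ : IntegrableOn ψ (Set.Icc 0 t)) :
    ∫ s in (0:ℝ)..t, ψ s * ∫ r in (0:ℝ)..s, φ r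
      = ∫ r in (0:ℝ)..t, φ r * ∫ s in r..t, ψ s := by
  have hφ' : IntegrableOn φ (Set.Ioc 0 t) := hφ.mono_set Set.Ioc_subset_Icc_self
  have hψ' : IntegrableOn ψ (Set.Ioc 0 t) := hψ.mono_set Set.Ioc_subset_Icc_self
  have hmeas : MeasurableSet {p : ℝ × ℝ | 0 < p.2 ∧ p.2 ≤ p.1} :=
    (measurableSet_lt measurable_const measurable_snd).inter
      (measurableSet_le measurable_snd measurable_fst)
  set F : ℝ → ℝ → ℝ := fun s r => ψ s * (Set.Ioc (0:ℝ) s).indicator φ r with hF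
  have hunc : Function.uncurry F =
      {p : ℝ × ℝ | 0 < p.2 ∧ p.2 ≤ p.1}.indicator (fun p => ψ p.1 * φ p.2) := by
    ext p
    by_cases h : 0 < p.2 ∧ p.2 ≤ p.1
    · simp [hF, Function.uncurry, Set.indicator_of_mem, h, Set.mem_Ioc, h.1, h.2]
    · have : p.2 ∉ Set.Ioc (0:ℝ) p.1 := by simpa [Set.mem_Ioc] using h
      simp [hF, Function.uncurry, Set.indicator_of_notMem this,
        Set.indicator_of_notMem (show p ∉ {p : ℝ × ℝ | 0 < p.2 ∧ p.2 ≤ p.1} from h)]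
  have hint : Integrable (Function.uncurry F)
      ((volume.restrict (Set.Ioc (0:ℝ) t)).prod (volume.restrict (Set.Ioc (0:ℝ) t))) := by
    rw [hunc]
    exact (Integrable.mul_prod hψ' hφ').indicator hmeas
  have swap := MeasureTheory.integral_integral_swap hint
  -- LHS
  have lhs : ∫ s in (0:ℝ)..t, ψ s * ∫ r in (0:ℝ)..s, φ r
      = ∫ s in Set.Ioc (0:ℝ) t, ∫ r in Set.Ioc (0:ℝ) t, F s r := by
    rw [intervalIntegral.integral_of_le ht]
    refine setIntegral_congr_fun measurableSet_Ioc ?_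
    intro s hs
    show ψ s * (∫ r in (0:ℝ)..s, φ r) = ∫ r in Set.Ioc (0:ℝ) t, F s r
    have h1 : ∫ r in Set.Ioc (0:ℝ) t, F s r = ψ s * ∫ r in Set.Ioc (0:ℝ) t,
        (Set.Ioc (0:ℝ) s).indicator φ r := by
      simp only [hF]
      rw [MeasureTheory.integral_const_mul]
    have h2 : Set.Ioc (0:ℝ) t ∩ Set.Ioc (0:ℝ) s = Set.Ioc (0:ℝ) s := by
      rw [Set.Ioc_inter_Ioc]
      simp [hs.2]
    rw [h1, setIntegral_indicator measurableSet_Ioc, h2,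
      intervalIntegral.integral_of_le hs.1.le]
  -- RHS
  have rhs : ∫ r in Set.Ioc (0:ℝ) t, ∫ s in Set.Ioc (0:ℝ) t, F s r
      = ∫ r in (0:ℝ)..t, φ r * ∫ s in r..t, ψ s := by
    rw [intervalIntegral.integral_of_le ht]
    refine setIntegral_congr_fun measurableSet_Ioc ?_
    intro r hr
    have h1 : ∀ s : ℝ, F s r = (Set.Ici r).indicator (fun s' => ψ s' * φ r) s := by
      intro s
      by_cases h : r ≤ s
      · have hmem : r ∈ Set.Ioc (0:ℝ) s := ⟨hr.1, h⟩
        simp [hF, Set.indicator_of_mem hmem, Set.indicator_of_mem (Set.mem_Ici.2 h)]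
      · have hmem : r ∉ Set.Ioc (0:ℝ) s := fun hc => h hc.2
        simp [hF, Set.indicator_of_notMem hmem,
          Set.indicator_of_notMem (show s ∉ Set.Ici r by simpa using h)]
    simp only [h1]
    rw [setIntegral_indicator measurableSet_Ici]
    have : Set.Ioc (0:ℝ) t ∩ Set.Ici r = Set.Icc r t := by
      ext x; simp only [Set.mem_inter_iff, Set.mem_Ioc, Set.mem_Ici, Set.mem_Icc]
      constructor
      · rintro ⟨⟨_, h2⟩, h3⟩; exact ⟨h3, h2⟩
      · rintro ⟨h1', h2⟩; exact ⟨⟨lt_of_lt_of_le hr.1 h1', h2⟩, h1'⟩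
    rw [this, MeasureTheory.integral_Icc_eq_integral_Ioc, ← intervalIntegral.integral_of_le hr.2,
      intervalIntegral.integral_mul_const, mul_comm]
  rw [lhs, swap, rhs]

/-- Integration by parts against a primitive. -/
lemma myL1 {t : ℝ} (ht : 0 ≤ t) {F φ ψ : ℝ → ℝ}
    (hφ : IntegrableOn φ (Set.Icc 0 t)) (hψ : IntegrableOn ψ (Set.Icc 0 t))
    (hF : ∀ s ∈ Set.Icc (0:ℝ) t, F s = F 0 + ∫ r in (0:ℝ)..s, φ r) :
    ∫ s in (0:ℝ)..t, F s * ψ s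
      = F t * (∫ s in (0:ℝ)..t, ψ s)
        - ∫ r in (0:ℝ)..t, φ r * (∫ s in (0:ℝ)..r, ψ s) := by
  have huIcc : Set.uIcc (0:ℝ) t = Set.Icc 0 t := Set.uIcc_of_le ht
  have hψi : IntervalIntegrable ψ volume 0 t := by
    rw [intervalIntegrable_iff_integrableOn_Icc_of_le ht]; exact hψ
  have hφi : IntervalIntegrable φ volume 0 t := by
    rw [intervalIntegrable_iff_integrableOn_Icc_of_le ht]; exact hφ
  have hPφc : ContinuousOn (fun s => ∫ r in (0:ℝ)..s, φ r) (Set.Icc 0 t) := myPrimCont hφ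
  have hPψc : ContinuousOn (fun s => ∫ r in (0:ℝ)..s, ψ r) (Set.Icc 0 t) := myPrimCont hψ
  have hint1 : IntegrableOn (fun s => (∫ r in (0:ℝ)..s, φ r) * ψ s) (Set.Icc 0 t) :=
    IntegrableOn.continuousOn_mul hPφc hψ isCompact_Icc
  have hint1' : IntervalIntegrable (fun s => (∫ r in (0:ℝ)..s, φ r) * ψ s) volume 0 t := by
    rw [intervalIntegrable_iff_integrableOn_Icc_of_le ht]; exact hint1
  have hint2 : IntervalIntegrable (fun r => φ r * (∫ s in (0:ℝ)..r, ψ s)) volume 0 t := by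
    rw [intervalIntegrable_iff_integrableOn_Icc_of_le ht]
    exact IntegrableOn.mul_continuousOn hφ hPψc isCompact_Icc
  have step1 : ∫ s in (0:ℝ)..t, F s * ψ s
      = ∫ s in (0:ℝ)..t, (F 0 + ∫ r in (0:ℝ)..s, φ r) * ψ s := by
    refine intervalIntegral.integral_congr ?_
    intro s hs
    rw [huIcc] at hs
    show F s * ψ s = (F 0 + ∫ r in (0:ℝ)..s, φ r) * ψ s
    rw [hF s hs]
  rw [step1]
  have step2 : ∫ s in (0:ℝ)..t, (F 0 + ∫ r in (0:ℝ)..s, φ r) * ψ s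
      = F 0 * (∫ s in (0:ℝ)..t, ψ s) + ∫ s in (0:ℝ)..t, (∫ r in (0:ℝ)..s, φ r) * ψ s := by
    have : ∀ s, (F 0 + ∫ r in (0:ℝ)..s, φ r) * ψ s
        = F 0 * ψ s + (∫ r in (0:ℝ)..s, φ r) * ψ s := fun s => by ring
    simp only [this]
    rw [intervalIntegral.integral_add (hψi.const_mul _) hint1',
      intervalIntegral.integral_const_mul]
  rw [step2]
  have step3 : ∫ s in (0:ℝ)..t, (∫ r in (0:ℝ)..s, φ r) * ψ s
      = ∫ r in (0:ℝ)..t, φ r * ∫ s in r..t, ψ s := by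
    rw [← mySwap ht hφ hψ]
    refine intervalIntegral.integral_congr fun s _ => mul_comm _ _
  rw [step3]
  have step4 : ∫ r in (0:ℝ)..t, φ r * ∫ s in r..t, ψ s
      = (∫ r in (0:ℝ)..t, φ r) * (∫ s in (0:ℝ)..t, ψ s)
        - ∫ r in (0:ℝ)..t, φ r * (∫ s in (0:ℝ)..r, ψ s) := by
    have hsub : ∀ r ∈ Set.Icc (0:ℝ) t, (∫ s in r..t, ψ s)
        = (∫ s in (0:ℝ)..t, ψ s) - ∫ s in (0:ℝ)..r, ψ s := by
      intro r hr
      have h1 : IntervalIntegrable ψ volume 0 r := by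
        rw [intervalIntegrable_iff_integrableOn_Icc_of_le hr.1]
        exact hψ.mono_set (Set.Icc_subset_Icc le_rfl hr.2)
      rw [intervalIntegral.integral_interval_sub_left hψi h1]
    have : ∫ r in (0:ℝ)..t, φ r * ∫ s in r..t, ψ s
        = ∫ r in (0:ℝ)..t, (φ r * (∫ s in (0:ℝ)..t, ψ s) - φ r * (∫ s in (0:ℝ)..r, ψ s)) := by
      refine intervalIntegral.integral_congr fun r hr => ?_
      rw [huIcc] at hr
      show φ r * (∫ s in r..t, ψ s) = _
      rw [hsub r hr, mul_sub]
    rw [this, intervalIntegral.integral_sub ((hφi.mul_const _)) hint2,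
      intervalIntegral.integral_mul_const]
  rw [step4, hF t (Set.right_mem_Icc.2 ht)]
  ring

/-- product rule for primitives. -/
lemma myL2 {t : ℝ} (ht : 0 ≤ t) {F G φ γ : ℝ → ℝ}
    (hφ : IntegrableOn φ (Set.Icc 0 t)) (hγ : IntegrableOn γ (Set.Icc 0 t))
    (hF : ∀ s ∈ Set.Icc (0:ℝ) t, F s = F 0 + ∫ r in (0:ℝ)..s, φ r)
    (hG : ∀ s ∈ Set.Icc (0:ℝ) t, G s = G 0 + ∫ r in (0:ℝ)..s, γ r) :
    F t * G t = F 0 * G 0 + ∫ s in (0:ℝ)..t, (φ s * G s + F s * γ s) := by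
  have huIcc : Set.uIcc (0:ℝ) t = Set.Icc 0 t := Set.uIcc_of_le ht
  have hGc : ContinuousOn G (Set.Icc 0 t) :=
    (continuousOn_const.add (myPrimCont hγ)).congr hG
  have hFc : ContinuousOn F (Set.Icc 0 t) :=
    (continuousOn_const.add (myPrimCont hφ)).congr hF
  have hint1 : IntervalIntegrable (fun s => φ s * G s) volume 0 t := by
    rw [intervalIntegrable_iff_integrableOn_Icc_of_le ht]
    exact IntegrableOn.mul_continuousOn hφ hGc isCompact_Icc
  have hint2 : IntervalIntegrable (fun s => F s * γ s) volume 0 t := by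
    rw [intervalIntegrable_iff_integrableOn_Icc_of_le ht]
    exact IntegrableOn.continuousOn_mul hFc hγ isCompact_Icc
  rw [intervalIntegral.integral_add hint1 hint2]
  have e2 : ∫ s in (0:ℝ)..t, F s * γ s
      = F t * (∫ s in (0:ℝ)..t, γ s) - ∫ r in (0:ℝ)..t, φ r * (∫ s in (0:ℝ)..r, γ s) :=
    myL1 ht hφ hγ hF
  have e1 : ∫ s in (0:ℝ)..t, φ s * G s
      = G 0 * (∫ s in (0:ℝ)..t, φ s) + ∫ s in (0:ℝ)..t, φ s * (∫ r in (0:ℝ)..s, γ r) := by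
    have : ∫ s in (0:ℝ)..t, φ s * G s
        = ∫ s in (0:ℝ)..t, (φ s * G 0 + φ s * (∫ r in (0:ℝ)..s, γ r)) := by
      refine intervalIntegral.integral_congr fun s hs => ?_
      rw [huIcc] at hs
      show φ s * G s = _
      rw [hG s hs]; ring
    rw [this]
    have hφi : IntervalIntegrable φ volume 0 t := by
      rw [intervalIntegrable_iff_integrableOn_Icc_of_le ht]; exact hφ
    have hint3 : IntervalIntegrable (fun s => φ s * (∫ r in (0:ℝ)..s, γ r)) volume 0 t := by
      rw [intervalIntegrable_iff_integrableOn_Icc_of_le ht]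
      exact IntegrableOn.mul_continuousOn hφ (myPrimCont hγ) isCompact_Icc
    rw [intervalIntegral.integral_add (hφi.mul_const _) hint3,
      intervalIntegral.integral_mul_const]
    ring
  rw [e1, e2, hF t (Set.right_mem_Icc.2 ht), hG t (Set.right_mem_Icc.2 ht)]
  ring


lemma myTUOrefl {s : Set ℝ} (h : ℝ → ℝ) :
    TendstoUniformlyOn (fun _ : ℕ => h) h atTop s := by
  rw [Metric.tendstoUniformlyOn_iff]
  intro ε hε
  filter_upwards with m x _
  simpa using hε

lemma myTUOmul {s : Set ℝ} {F G : ℕ → ℝ → ℝ} {f g : ℝ → ℝ} {Cf Cg : ℝ}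
    (hF : TendstoUniformlyOn F f atTop s) (hG : TendstoUniformlyOn G g atTop s)
    (hfb : ∀ x ∈ s, |f x| ≤ Cf) (hgb : ∀ x ∈ s, |g x| ≤ Cg) :
    TendstoUniformlyOn (fun m x => F m x * G m x) (fun x => f x * g x) atTop s := by
  rcases s.eq_empty_or_nonempty with rfl | ⟨x₀, hx₀⟩
  · rw [Metric.tendstoUniformlyOn_iff]
    intro ε hε
    filter_upwards with m x hx
    exact absurd hx (Set.notMem_empty x)
  have hCf : 0 ≤ Cf := le_trans (abs_nonneg _) (hfb x₀ hx₀)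
  have hCg : 0 ≤ Cg := le_trans (abs_nonneg _) (hgb x₀ hx₀)
  rw [Metric.tendstoUniformlyOn_iff] at hF hG ⊢
  intro ε hε
  have hD : 0 < Cf + Cg + 2 := by linarith
  have hδ : 0 < min 1 (ε / (Cf + Cg + 2)) := lt_min one_pos (div_pos hε hD)
  filter_upwards [hF _ hδ, hG _ hδ] with m hFm hGm x hx
  have h1 : |f x - F m x| < min 1 (ε / (Cf + Cg + 2)) := by
    rw [← Real.dist_eq]; exact hFm x hx
  have h2 : |g x - G m x| < min 1 (ε / (Cf + Cg + 2)) := by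
    rw [← Real.dist_eq]; exact hGm x hx
  rw [Real.dist_eq]
  have key : f x * g x - F m x * G m x
      = f x * (g x - G m x) + (f x - F m x) * G m x := by ring
  have hGb : |G m x| ≤ Cg + 1 := by
    have := abs_sub_abs_le_abs_sub (G m x) (g x)
    have h2' : |G m x - g x| < 1 := lt_of_lt_of_le (by rwa [abs_sub_comm]) (min_le_left _ _)
    have := hgb x hx
    linarith
  calc |f x * g x - F m x * G m x|
      ≤ |f x| * |g x - G m x| + |f x - F m x| * |G m x| := by
        rw [key]; exact le_trans (abs_add_le _ _) (by rw [abs_mul, abs_mul])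
    _ ≤ Cf * (ε / (Cf + Cg + 2)) + (ε / (Cf + Cg + 2)) * (Cg + 1) := by
        have e1 : |g x - G m x| ≤ ε / (Cf + Cg + 2) := le_trans h2.le (min_le_right _ _)
        have e2 : |f x - F m x| ≤ ε / (Cf + Cg + 2) := le_trans h1.le (min_le_right _ _)
        have hδ' : (0:ℝ) ≤ ε / (Cf + Cg + 2) := (div_pos hε hD).le
        exact add_le_add (mul_le_mul (hfb x hx) e1 (abs_nonneg _) hCf)
          (mul_le_mul e2 hGb (abs_nonneg _) hδ')
    _ < ε := by
        have heq : Cf * (ε / (Cf + Cg + 2)) + (ε / (Cf + Cg + 2)) * (Cg + 1)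
            = ε * ((Cf + Cg + 1) / (Cf + Cg + 2)) := by field_simp; ring
        rw [heq]
        exact mul_lt_of_lt_one_right hε ((div_lt_one hD).2 (by linarith))

lemma myTUOint {T : ℝ} (hT : 0 ≤ T) {H : ℕ → ℝ → ℝ} {h : ℝ → ℝ}
    (hint : ∀ m, IntegrableOn (H m) (Set.Icc 0 T)) (hintl : IntegrableOn h (Set.Icc 0 T))
    (hu : TendstoUniformlyOn H h atTop (Set.Icc 0 T)) :
    TendstoUniformlyOn (fun m t => ∫ s in (0:ℝ)..t, H m s)
      (fun t => ∫ s in (0:ℝ)..t, h s) atTop (Set.Icc 0 T) := by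
  rw [Metric.tendstoUniformlyOn_iff] at hu ⊢
  intro ε hε
  have hδ : 0 < ε / (T + 1) := div_pos hε (by linarith)
  filter_upwards [hu _ hδ] with m hm t ht
  have hhl : IntervalIntegrable h volume 0 t := by
    rw [intervalIntegrable_iff_integrableOn_Icc_of_le ht.1]
    exact hintl.mono_set (Set.Icc_subset_Icc le_rfl ht.2)
  have hHm : IntervalIntegrable (H m) volume 0 t := by
    rw [intervalIntegrable_iff_integrableOn_Icc_of_le ht.1]
    exact (hint m).mono_set (Set.Icc_subset_Icc le_rfl ht.2)
  rw [Real.dist_eq, ← intervalIntegral.integral_sub hhl hHm]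
  have hbound : ∀ x ∈ Set.uIoc (0:ℝ) t, ‖h x - H m x‖ ≤ ε / (T + 1) := by
    intro x hx
    rw [Set.uIoc_of_le ht.1] at hx
    have hx' : x ∈ Set.Icc (0:ℝ) T := ⟨hx.1.le, le_trans hx.2 ht.2⟩
    have := hm x hx'
    rw [Real.dist_eq] at this
    exact this.le
  calc |∫ s in (0:ℝ)..t, (h s - H m s)|
      ≤ ε / (T + 1) * |t - 0| := intervalIntegral.norm_integral_le_of_norm_le_const hbound
    _ = ε / (T + 1) * t := by rw [sub_zero, abs_of_nonneg ht.1]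
    _ ≤ ε / (T + 1) * T := mul_le_mul_of_nonneg_left ht.2 hδ.le
    _ < ε := by
        rw [div_mul_eq_mul_div, div_lt_iff₀ (by linarith : (0:ℝ) < T + 1)]
        nlinarith

lemma myTUOsum {s : Set ℝ} (K : Finset ℕ) (F : ℕ → ℕ → ℝ → ℝ) (f : ℕ → ℝ → ℝ)
    (h : ∀ k ∈ K, TendstoUniformlyOn (F k) (f k) atTop s) :
    TendstoUniformlyOn (fun m x => ∑ k ∈ K, F k m x) (fun x => ∑ k ∈ K, f k x) atTop s := by
  classical
  induction K using Finset.induction_on with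
  | empty => simpa using myTUOrefl (fun _ => (0:ℝ))
  | insert a K' hnot ih =>
    have h1 := h a (Finset.mem_insert_self a K')
    have h2 := ih fun k hk => h k (Finset.mem_insert_of_mem hk)
    have := h1.add h2
    simp only [Finset.sum_insert hnot]
    convert this using 1
    all_goals rfl


lemma myTUOdiv {s : Set ℝ} {F : ℕ → ℝ → ℝ} {f : ℝ → ℝ} (c : ℝ)
    (hF : TendstoUniformlyOn F f atTop s) :
    TendstoUniformlyOn (fun m x => F m x / c) (fun x => f x / c) atTop s := by
  rcases eq_or_ne c 0 with rfl | hc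
  · simp only [div_zero]
    rw [Metric.tendstoUniformlyOn_iff]
    intro ε hε
    filter_upwards with m x _
    simpa using hε
  · rw [Metric.tendstoUniformlyOn_iff] at hF ⊢
    intro ε hε
    filter_upwards [hF (ε * |c|) (mul_pos hε (abs_pos.2 hc))] with m hm x hx
    have := hm x hx
    rw [Real.dist_eq] at this ⊢
    rw [div_sub_div_same, abs_div]
    rw [div_lt_iff₀ (abs_pos.2 hc)]
    exact this


open MeasureTheory Filter in
/-- Pathwise content of the uniform-convergence part of Theorems 2.1/2.2:
if the primitives `w_j(t) = ∫₀ᵗ v_j` converge uniformly on `[0,T]` to a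
continuous `w`, then the iterated ordinary integrals `J_n^{(j)}` converge
uniformly on `[0,T]` to `Φ_n[w]` (the multiple Stratonovich integral when
`w` is a Brownian path). -/
theorem stmt9
    (T : ℝ) (hT : 0 < T) (n : ℕ) (hn : 1 ≤ n)
    (f : ℕ → ℝ → ℝ)
    (hf : ∀ i, 1 ≤ i → i ≤ n → ContDiffOn ℝ 1 (f i) (Set.Icc 0 T))
    (fd : ℕ → ℕ → ℝ → ℝ)
    (hfd : ∀ j k, 1 ≤ k → k ≤ j → j ≤ n → ∀ t ∈ Set.Icc (0:ℝ) T,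
      HasDerivWithinAt (fun s => ∏ l ∈ Finset.Icc 1 k, f (j + 1 - l) s)
        (fd j k t) (Set.Icc 0 T) t)
    (Φ : (ℝ → ℝ) → ℕ → ℝ → ℝ)
    (hΦ0 : ∀ u t, Φ u 0 t = 1)
    (hΦ : ∀ u : ℝ → ℝ, ContinuousOn u (Set.Icc 0 T) →
      ∀ j, 1 ≤ j → j ≤ n → ∀ t ∈ Set.Icc (0:ℝ) T,
      Φ u j t
        = (∑ k ∈ Finset.Icc 1 j,
            (-1 : ℝ) ^ (k + 1) * Φ u (j - k) t
              * (u t ^ k / (Nat.factorial k : ℝ))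
              * ∏ l ∈ Finset.Icc 1 k, f (j + 1 - l) t)
        + ∑ k ∈ Finset.Icc 1 j,
            (-1 : ℝ) ^ k *
              ∫ s in (0:ℝ)..t,
                Φ u (j - k) s * (u s ^ k / (Nat.factorial k : ℝ)) * fd j k s)
    (v : ℕ → ℝ → ℝ) (hv : ∀ j, IntegrableOn (v j) (Set.Icc 0 T))
    (J : ℕ → ℕ → ℝ → ℝ)
    (hJ0 : ∀ j t, J j 0 t = 1)
    (hJ : ∀ j k, 1 ≤ k → k ≤ n → ∀ t,
      J j k t = ∫ s in (0:ℝ)..t, f k s * J j (k - 1) s * v j s)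
    (w : ℝ → ℝ) (hw : ContinuousOn w (Set.Icc 0 T))
    (hconv : TendstoUniformlyOn (fun j t => ∫ s in (0:ℝ)..t, v j s) w atTop
      (Set.Icc 0 T)) :
    TendstoUniformlyOn (fun j => J j n) (Φ w n) atTop (Set.Icc 0 T) := by
  classical
  have hT0 : (0:ℝ) ≤ T := hT.le
  have hUD : UniqueDiffOn ℝ (Set.Icc (0:ℝ) T) := uniqueDiffOn_Icc hT
  have hfc : ∀ i, 1 ≤ i → i ≤ n → ContinuousOn (f i) (Set.Icc 0 T) :=
    fun i h1 h2 => (hf i h1 h2).continuousOn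
  -- continuity of the products
  have hPc : ∀ j k, k ≤ j → j ≤ n →
      ContinuousOn (fun s => ∏ l ∈ Finset.Icc 1 k, f (j + 1 - l) s) (Set.Icc 0 T) := by
    intro j k hkj hjn
    apply continuousOn_finset_prod
    intro l hl
    rw [Finset.mem_Icc] at hl
    exact hfc (j + 1 - l) (by omega) (by omega)
  have hPcd : ∀ j k, k ≤ j → j ≤ n →
      ContDiffOn ℝ 1 (fun s => ∏ l ∈ Finset.Icc 1 k, f (j + 1 - l) s) (Set.Icc 0 T) := by
    intro j k
    induction k with
    | zero => intro _ _; simpa using contDiffOn_const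
    | succ k ih =>
      intro hkj hjn
      have e : (fun s => ∏ l ∈ Finset.Icc 1 (k+1), f (j + 1 - l) s)
          = fun s => (∏ l ∈ Finset.Icc 1 k, f (j + 1 - l) s) * f (j - k) s := by
        funext s
        rw [Finset.prod_Icc_succ_top (by omega)]
        have : j + 1 - (k + 1) = j - k := by omega
        rw [this]
      rw [e]
      exact (ih (by omega) hjn).mul (hf (j - k) (by omega) (by omega))
  have hfdc : ∀ j k, 1 ≤ k → k ≤ j → j ≤ n → ContinuousOn (fd j k) (Set.Icc 0 T) := by
    intro j k h1 h2 h3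
    refine ((hPcd j k h2 h3).continuousOn_derivWithin hUD le_rfl).congr ?_
    intro t ht
    exact ((hfd j k h1 h2 h3 t ht).derivWithin (hUD t ht)).symm
  -- the product is a primitive of fd
  have hPprim : ∀ j k, 1 ≤ k → k ≤ j → j ≤ n → ∀ s ∈ Set.Icc (0:ℝ) T,
      (∏ l ∈ Finset.Icc 1 k, f (j + 1 - l) s)
        = (∏ l ∈ Finset.Icc 1 k, f (j + 1 - l) (0:ℝ)) + ∫ r in (0:ℝ)..s, fd j k r := by
    intro j k h1 h2 h3 s hs
    have hder : ∀ x ∈ Set.Ioo (0:ℝ) s,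
        HasDerivWithinAt (fun s' => ∏ l ∈ Finset.Icc 1 k, f (j + 1 - l) s')
          (fd j k x) (Set.Ioi x) x := by
      intro x hx
      exact (hfd j k h1 h2 h3 x ⟨hx.1.le, le_trans hx.2.le hs.2⟩).mono_of_mem_nhdsWithin
        (mem_nhdsWithin_of_mem_nhds (Icc_mem_nhds hx.1 (lt_of_lt_of_le hx.2 hs.2)))
    have hint : IntervalIntegrable (fd j k) volume 0 s := by
      rw [intervalIntegrable_iff_integrableOn_Icc_of_le hs.1]
      exact ((hfdc j k h1 h2 h3).mono (Set.Icc_subset_Icc le_rfl hs.2)).integrableOn_Icc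
    have := intervalIntegral.integral_eq_sub_of_hasDeriv_right_of_le hs.1
      ((hPc j k h2 h3).mono (Set.Icc_subset_Icc le_rfl hs.2)) hder hint
    linarith
  -- primitives of v
  set W : ℕ → ℝ → ℝ := fun m t => ∫ s in (0:ℝ)..t, v m s with hWdef
  have hWc : ∀ m, ContinuousOn (W m) (Set.Icc 0 T) := fun m => myPrimCont (hv m)
  have hW0 : ∀ m, W m 0 = 0 := fun m => intervalIntegral.integral_same
  -- integrability of continuous × v
  have hIntMul : ∀ m (g : ℝ → ℝ), ContinuousOn g (Set.Icc 0 T) → ∀ t ∈ Set.Icc (0:ℝ) T,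
      IntegrableOn (fun s => g s * v m s) (Set.Icc 0 t) := by
    intro m g hg t ht
    exact IntegrableOn.continuousOn_mul (hg.mono (Set.Icc_subset_Icc le_rfl ht.2))
      ((hv m).mono_set (Set.Icc_subset_Icc le_rfl ht.2)) isCompact_Icc
  -- continuity of J
  have hJc : ∀ m k, k ≤ n → ContinuousOn (J m k) (Set.Icc 0 T) := by
    intro m k
    induction k with
    | zero => intro _; exact continuousOn_const.congr fun t _ => hJ0 m t
    | succ k ih =>
      intro hk
      have e : J m (k+1) = fun t => ∫ s in (0:ℝ)..t, f (k+1) s * J m k s * v m s := by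
        funext t
        simpa using hJ m (k+1) (by omega) hk t
      rw [e]
      exact myPrimCont (hIntMul m _ ((hfc (k+1) (by omega) hk).mul (ih (by omega))) T
        (Set.right_mem_Icc.2 hT0))
  -- powers of W are iterated primitives
  have powW : ∀ (m k : ℕ), ∀ t ∈ Set.Icc (0:ℝ) T,
      (∫ s in (0:ℝ)..t, v m s * W m s ^ k) = W m t ^ (k+1) / ((k:ℝ) + 1) := by
    intro m k
    induction k with
    | zero =>
      intro t ht
      simp [hWdef]
    | succ k ih =>
      intro t ht
      have hWpc : ContinuousOn (fun s => W m s ^ k) (Set.Icc 0 T) := (hWc m).pow k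
      have hφint : IntegrableOn (fun s => ((k:ℝ)+1) * (W m s ^ k * v m s)) (Set.Icc 0 t) :=
        ((hIntMul m _ hWpc t ht)).const_mul _
      have hψint : IntegrableOn (v m) (Set.Icc 0 t) :=
        (hv m).mono_set (Set.Icc_subset_Icc le_rfl ht.2)
      have hF : ∀ s ∈ Set.Icc (0:ℝ) t, W m s ^ (k+1)
          = W m 0 ^ (k+1) + ∫ r in (0:ℝ)..s, ((k:ℝ)+1) * (W m r ^ k * v m r) := by
        intro s hs
        have hs' : s ∈ Set.Icc (0:ℝ) T := ⟨hs.1, le_trans hs.2 ht.2⟩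
        have := ih s hs'
        rw [hW0 m, zero_pow (by omega), intervalIntegral.integral_const_mul]
        have e : (∫ r in (0:ℝ)..s, W m r ^ k * v m r) = ∫ r in (0:ℝ)..s, v m r * W m r ^ k :=
          intervalIntegral.integral_congr fun r _ => mul_comm _ _
        rw [e, this]
        field_simp
        ring
      have key := myL1 ht.1 hφint hψint hF
      -- key : ∫ W^{k+1} v = W t^{k+1} * W t - ∫ (k+1) W^k v * (∫ v)
      have e1 : (∫ s in (0:ℝ)..t, v m s * W m s ^ (k+1))
          = ∫ s in (0:ℝ)..t, W m s ^ (k+1) * v m s :=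
        intervalIntegral.integral_congr fun s _ => mul_comm _ _
      have e2 : (∫ r in (0:ℝ)..t, ((k:ℝ)+1) * (W m r ^ k * v m r) * ∫ s in (0:ℝ)..r, v m s)
          = ((k:ℝ)+1) * ∫ s in (0:ℝ)..t, v m s * W m s ^ (k+1) := by
        rw [← intervalIntegral.integral_const_mul]
        refine intervalIntegral.integral_congr fun r _ => ?_
        show ((k:ℝ)+1) * (W m r ^ k * v m r) * W m r = ((k:ℝ)+1) * (v m r * W m r ^ (k+1))
        rw [pow_succ]; ring
      have hX : (((k:ℝ)+1)+1) * (∫ s in (0:ℝ)..t, v m s * W m s ^ (k+1))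
          = W m t ^ (k+1+1) := by
        rw [← e1] at key
        rw [e2] at key
        have hWt : (∫ s in (0:ℝ)..t, v m s) = W m t := rfl
        rw [hWt] at key
        rw [pow_succ]
        linarith
      push_cast
      rw [eq_div_iff (by positivity : ((k:ℝ)+1+1) ≠ 0)]
      linarith [hX]
  -- generic IBP step
  have Astep : ∀ (m k : ℕ), 1 ≤ k → ∀ (Fk φk : ℝ → ℝ),
      IntegrableOn φk (Set.Icc 0 T) →
      (∀ s ∈ Set.Icc (0:ℝ) T, Fk s = Fk 0 + ∫ r in (0:ℝ)..s, φk r) →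
      ∀ t ∈ Set.Icc (0:ℝ) T,
      (∫ s in (0:ℝ)..t, Fk s * (v m s * W m s ^ (k-1) / (Nat.factorial (k-1) : ℝ)))
        = Fk t * (W m t ^ k / (Nat.factorial k : ℝ))
          - ∫ s in (0:ℝ)..t, φk s * (W m s ^ k / (Nat.factorial k : ℝ)) := by
    intro m k h1 Fk φk hφk hFk t ht
    have hψe : (fun s => v m s * W m s ^ (k-1) / ((k-1).factorial : ℝ))
        = fun s => (W m s ^ (k-1) / ((k-1).factorial : ℝ)) * v m s := funext fun s => by ring
    have hψint : IntegrableOn (fun s => v m s * W m s ^ (k-1) / ((k-1).factorial : ℝ))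
        (Set.Icc 0 t) := by
      rw [hψe]
      exact hIntMul m _ (((hWc m).pow _).div_const _) t ht
    have hk : k - 1 + 1 = k := Nat.sub_add_cancel h1
    have hden : (((k-1:ℕ):ℝ) + 1) * ((k-1).factorial : ℝ) = (k.factorial : ℝ) := by
      have h2 : (k - 1 + 1) * (k-1).factorial = k.factorial := by
        rw [hk]; exact Nat.mul_factorial_pred (by omega)
      calc (((k-1:ℕ):ℝ) + 1) * ((k-1).factorial : ℝ)
          = (((k - 1 + 1) * (k-1).factorial : ℕ) : ℝ) := by push_cast; ring
        _ = (k.factorial : ℝ) := by rw [h2]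
    have hprim : ∀ r ∈ Set.Icc (0:ℝ) t,
        (∫ s in (0:ℝ)..r, v m s * W m s ^ (k-1) / ((k-1).factorial : ℝ))
          = W m r ^ k / (k.factorial : ℝ) := by
      intro r hr
      have hr' : r ∈ Set.Icc (0:ℝ) T := ⟨hr.1, le_trans hr.2 ht.2⟩
      rw [intervalIntegral.integral_div, powW m (k-1) r hr', hk, div_div, hden]
    have key := myL1 ht.1 (hφk.mono_set (Set.Icc_subset_Icc le_rfl ht.2)) hψint
      (fun s hs => hFk s ⟨hs.1, le_trans hs.2 ht.2⟩)
    rw [key, hprim t (Set.right_mem_Icc.2 ht.1)]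
    congr 1
    refine intervalIntegral.integral_congr fun r hr => ?_
    rw [Set.uIcc_of_le ht.1] at hr
    show φk r * _ = _
    rw [hprim r hr]
  -- identification J = Φ (W m)
  have ident : ∀ m j, j ≤ n → ∀ t ∈ Set.Icc (0:ℝ) T, J m j t = Φ (W m) j t := by
    intro m j
    induction j using Nat.strong_induction_on with
    | _ j IH =>
    intro hjn t ht
    rcases Nat.eq_zero_or_pos j with rfl | hj1
    · rw [hJ0, hΦ0]
    set g : ℕ → ℝ → ℝ := fun i t' =>
      (∏ l ∈ Finset.Icc 1 i, f (j + 1 - l) t') * J m (j - i) t'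
          * (W m t' ^ i / (Nat.factorial i : ℝ))
        - ∫ s in (0:ℝ)..t', fd j i s * J m (j - i) s * (W m s ^ i / (Nat.factorial i : ℝ))
      with hg
    have key : ∀ dd k, 1 ≤ k → k + dd = j → ∀ t' ∈ Set.Icc (0:ℝ) T,
        (∫ s in (0:ℝ)..t', (∏ l ∈ Finset.Icc 1 k, f (j + 1 - l) s) * J m (j - k) s *
            (v m s * W m s ^ (k - 1) / (Nat.factorial (k - 1) : ℝ)))
          = ∑ i ∈ Finset.range (dd + 1), (-1:ℝ) ^ i * g (k + i) t' := by
      intro dd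
      induction dd with
      | zero =>
        intro k h1 hkj t' ht'
        have hjk0 : j - k = 0 := by omega
        have hstep := Astep m k h1 (fun s => ∏ l ∈ Finset.Icc 1 k, f (j + 1 - l) s) (fd j k)
          ((hfdc j k h1 (by omega) hjn).integrableOn_Icc)
          (hPprim j k h1 (by omega) hjn) t' ht'
        have eL : (∫ s in (0:ℝ)..t', (∏ l ∈ Finset.Icc 1 k, f (j + 1 - l) s) * J m (j - k) s *
              (v m s * W m s ^ (k - 1) / (Nat.factorial (k - 1) : ℝ)))
            = ∫ s in (0:ℝ)..t', (∏ l ∈ Finset.Icc 1 k, f (j + 1 - l) s) *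
              (v m s * W m s ^ (k - 1) / (Nat.factorial (k - 1) : ℝ)) := by
          refine intervalIntegral.integral_congr fun s _ => ?_
          rw [hjk0, hJ0, mul_one]
        rw [eL, hstep, Finset.sum_range_one]
        simp only [pow_zero, one_mul, Nat.add_zero, hg, hjk0, hJ0, mul_one]
      | succ dd ihd =>
        intro k h1 hkj t' ht'
        have hq1 : 1 ≤ j - k := by omega
        have hqn : j - k ≤ n := by omega
        have hkj' : k ≤ j := by omega
        -- primitive property of P * J
        have hFk : ∀ s ∈ Set.Icc (0:ℝ) T,
            (∏ l ∈ Finset.Icc 1 k, f (j + 1 - l) s) * J m (j - k) s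
              = (∏ l ∈ Finset.Icc 1 k, f (j + 1 - l) (0:ℝ)) * J m (j - k) 0
                + ∫ r in (0:ℝ)..s,
                    (fd j k r * J m (j - k) r
                      + (∏ l ∈ Finset.Icc 1 k, f (j + 1 - l) r)
                          * (f (j - k) r * J m (j - k - 1) r * v m r)) := by
          intro s hs
          refine myL2 (F := fun r => ∏ l ∈ Finset.Icc 1 k, f (j + 1 - l) r)
            (G := J m (j - k)) (φ := fd j k)
            (γ := fun r => f (j - k) r * J m (j - k - 1) r * v m r) hs.1 ?_ ?_ ?_ ?_
          · exact ((hfdc j k h1 hkj' hjn).integrableOn_Icc).mono_set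
              (Set.Icc_subset_Icc le_rfl hs.2)
          · have e : (fun r => f (j-k) r * J m (j-k-1) r * v m r)
                = fun r => (f (j-k) r * J m (j-k-1) r) * v m r := funext fun r => rfl
            rw [e]
            exact (hIntMul m _ ((hfc (j-k) hq1 hqn).mul (hJc m (j-k-1) (by omega))) T
              (Set.right_mem_Icc.2 hT0)).mono_set (Set.Icc_subset_Icc le_rfl hs.2)
          · exact fun r hr => hPprim j k h1 hkj' hjn r ⟨hr.1, le_trans hr.2 hs.2⟩
          · intro r hr
            rw [hJ m (j-k) hq1 hqn r, hJ m (j-k) hq1 hqn 0,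
              intervalIntegral.integral_same, zero_add]
        have hφkInt : IntegrableOn (fun r =>
            fd j k r * J m (j - k) r
              + (∏ l ∈ Finset.Icc 1 k, f (j + 1 - l) r)
                  * (f (j - k) r * J m (j - k - 1) r * v m r)) (Set.Icc 0 T) := by
          refine MeasureTheory.Integrable.add ?_ ?_
          · exact ((hfdc j k h1 hkj' hjn).mul (hJc m (j-k) hqn)).integrableOn_Icc
          · have e : (fun r => (∏ l ∈ Finset.Icc 1 k, f (j + 1 - l) r)
                * (f (j - k) r * J m (j - k - 1) r * v m r))
                = fun r => ((∏ l ∈ Finset.Icc 1 k, f (j + 1 - l) r)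
                    * (f (j - k) r * J m (j - k - 1) r)) * v m r := funext fun r => by ring
            rw [e]
            exact hIntMul m _ ((hPc j k hkj' hjn).mul
              ((hfc (j-k) hq1 hqn).mul (hJc m (j-k-1) (by omega)))) T (Set.right_mem_Icc.2 hT0)
        have hstep := Astep m k h1
          (fun s => (∏ l ∈ Finset.Icc 1 k, f (j + 1 - l) s) * J m (j - k) s)
          _ hφkInt hFk t' ht'
        rw [hstep]
        -- split the φk-integral
        have hsplit : (∫ s in (0:ℝ)..t',
              (fd j k s * J m (j - k) s
                + (∏ l ∈ Finset.Icc 1 k, f (j + 1 - l) s)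
                    * (f (j - k) s * J m (j - k - 1) s * v m s))
                * (W m s ^ k / (Nat.factorial k : ℝ)))
            = (∫ s in (0:ℝ)..t', fd j k s * J m (j - k) s * (W m s ^ k / (Nat.factorial k : ℝ)))
              + ∫ s in (0:ℝ)..t', (∏ l ∈ Finset.Icc 1 (k+1), f (j + 1 - l) s)
                  * J m (j - (k+1)) s
                  * (v m s * W m s ^ ((k+1) - 1) / (Nat.factorial ((k+1) - 1) : ℝ)) := by
          have hprod : ∀ s : ℝ, (∏ l ∈ Finset.Icc 1 (k+1), f (j + 1 - l) s)
              = (∏ l ∈ Finset.Icc 1 k, f (j + 1 - l) s) * f (j - k) s := by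
            intro s
            rw [Finset.prod_Icc_succ_top (by omega)]
            have e : j + 1 - (k + 1) = j - k := by omega
            rw [e]
          have hje : j - (k + 1) = j - k - 1 := by omega
          have ee : ∀ s : ℝ, (fd j k s * J m (j - k) s
                + (∏ l ∈ Finset.Icc 1 k, f (j + 1 - l) s)
                    * (f (j - k) s * J m (j - k - 1) s * v m s))
                * (W m s ^ k / (Nat.factorial k : ℝ))
              = fd j k s * J m (j - k) s * (W m s ^ k / (Nat.factorial k : ℝ))
                + (∏ l ∈ Finset.Icc 1 (k+1), f (j + 1 - l) s) * J m (j - (k+1)) s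
                  * (v m s * W m s ^ ((k+1) - 1) / (Nat.factorial ((k+1) - 1) : ℝ)) := by
            intro s
            rw [hprod s, hje]
            simp only [Nat.succ_sub_one]
            ring
          rw [intervalIntegral.integral_congr (fun s _ => ee s)]
          refine intervalIntegral.integral_add ?_ ?_
          · rw [intervalIntegrable_iff_integrableOn_Icc_of_le ht'.1]
            exact ((((hfdc j k h1 hkj' hjn).mul (hJc m (j-k) hqn)).mul
              (((hWc m).pow k).div_const _)).integrableOn_Icc).mono_set
              (Set.Icc_subset_Icc le_rfl ht'.2)
          · rw [intervalIntegrable_iff_integrableOn_Icc_of_le ht'.1]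
            have e : (fun s => (∏ l ∈ Finset.Icc 1 (k+1), f (j + 1 - l) s)
                * J m (j - (k+1)) s
                * (v m s * W m s ^ ((k+1) - 1) / (Nat.factorial ((k+1) - 1) : ℝ)))
                = fun s => ((∏ l ∈ Finset.Icc 1 (k+1), f (j + 1 - l) s)
                    * J m (j - (k+1)) s * (W m s ^ ((k+1) - 1) / (Nat.factorial ((k+1) - 1) : ℝ)))
                      * v m s := funext fun s => by ring
            rw [e]
            exact hIntMul m _ (((hPc j (k+1) (by omega) hjn).mul
              (hJc m (j-(k+1)) (by omega))).mul (((hWc m).pow _).div_const _)) t' ht'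
        rw [hsplit]
        rw [ihd (k+1) (by omega) (by omega) t' ht']
        -- finish by sum manipulation
        conv_rhs => rw [Finset.sum_range_succ']
        have hterm : ∀ i, (-1:ℝ) ^ (i+1) * g (k + (i+1)) t'
            = -((-1:ℝ) ^ i * g (k + 1 + i) t') := by
          intro i
          have e : k + (i + 1) = k + 1 + i := by omega
          rw [e, pow_succ]
          ring
        have hsum : (∑ i ∈ Finset.range (dd+1), (-1:ℝ)^(i+1) * g (k+(i+1)) t')
            = -∑ i ∈ Finset.range (dd+1), (-1:ℝ)^i * g (k+1+i) t' := by
          rw [← Finset.sum_neg_distrib]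
          exact Finset.sum_congr rfl fun i _ => hterm i
        rw [hsum]
        simp only [pow_zero, one_mul, Nat.add_zero]
        beta_reduce
        ring
    -- conclude
    have main := key (j - 1) 1 le_rfl (by omega) t ht
    rw [show j - 1 + 1 = j from by omega] at main
    have hL : J m j t = ∫ s in (0:ℝ)..t,
        (∏ l ∈ Finset.Icc 1 1, f (j + 1 - l) s) * J m (j - 1) s *
          (v m s * W m s ^ (1 - 1) / (Nat.factorial (1 - 1) : ℝ)) := by
      rw [hJ m j hj1 hjn t]
      refine intervalIntegral.integral_congr fun s _ => ?_
      simp [Finset.Icc_self, Nat.add_sub_cancel]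
    rw [hL, main, hΦ (W m) (hWc m) j hj1 hjn t ht]
    rw [← Finset.sum_add_distrib]
    rw [← Finset.Ico_add_one_right_eq_Icc, Finset.sum_Ico_eq_sum_range]
    simp only [Nat.add_sub_cancel]
    refine Finset.sum_congr rfl fun i hi => ?_
    rw [Finset.mem_range] at hi
    have hIH : ∀ x ∈ Set.Icc (0:ℝ) T, Φ (W m) (j - (1 + i)) x = J m (j - (1 + i)) x :=
      fun x hx => (IH (j - (1 + i)) (by omega) (by omega) x hx).symm
    have hb : (∫ s in (0:ℝ)..t, Φ (W m) (j - (1 + i)) s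
          * (W m s ^ (1 + i) / (Nat.factorial (1 + i) : ℝ)) * fd j (1 + i) s)
        = ∫ s in (0:ℝ)..t, fd j (1 + i) s * J m (j - (1 + i)) s
          * (W m s ^ (1 + i) / (Nat.factorial (1 + i) : ℝ)) := by
      refine intervalIntegral.integral_congr fun s hs => ?_
      rw [Set.uIcc_of_le ht.1] at hs
      show Φ (W m) (j - (1 + i)) s * _ * _ = _
      rw [hIH s ⟨hs.1, le_trans hs.2 ht.2⟩]
      ring
    rw [hIH t ht, hb, hg]
    have hp1 : (-1:ℝ) ^ (1 + i + 1) = (-1:ℝ) ^ i := by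
      have e : 1 + i + 1 = i + 2 := by omega
      rw [e, pow_add]
      norm_num
    have hp2 : (-1:ℝ) ^ (1 + i) = -(-1:ℝ) ^ i := by
      have e : 1 + i = i + 1 := by omega
      rw [e, pow_succ]
      ring
    rw [hp1, hp2]
    ring
  -- continuity of Φ u
  have contΦ : ∀ u, ContinuousOn u (Set.Icc 0 T) → ∀ i, i ≤ n →
      ContinuousOn (Φ u i) (Set.Icc 0 T) := by
    intro u hu i
    induction i using Nat.strong_induction_on with
    | _ i IH =>
    intro hin
    rcases Nat.eq_zero_or_pos i with rfl | hi1
    · exact continuousOn_const.congr fun t _ => hΦ0 u t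
    refine ContinuousOn.congr (f := fun t =>
        (∑ k ∈ Finset.Icc 1 i,
          (-1 : ℝ) ^ (k + 1) * Φ u (i - k) t * (u t ^ k / (Nat.factorial k : ℝ))
            * ∏ l ∈ Finset.Icc 1 k, f (i + 1 - l) t)
        + ∑ k ∈ Finset.Icc 1 i,
            (-1 : ℝ) ^ k * ∫ s in (0:ℝ)..t,
              Φ u (i - k) s * (u s ^ k / (Nat.factorial k : ℝ)) * fd i k s) ?_ ?_
    · refine ContinuousOn.add ?_ ?_
      · refine continuousOn_finset_sum _ fun k hk => ?_
        rw [Finset.mem_Icc] at hk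
        exact ((continuousOn_const.mul (IH (i - k) (by omega) (by omega))).mul
          ((hu.pow k).div_const _)).mul (hPc i k (by omega) hin)
      · refine continuousOn_finset_sum _ fun k hk => ?_
        rw [Finset.mem_Icc] at hk
        refine continuousOn_const.mul (myPrimCont ?_)
        exact (((IH (i - k) (by omega) (by omega)).mul
          ((hu.pow k).div_const _)).mul (hfdc i k hk.1 hk.2 hin)).integrableOn_Icc
    · exact fun t ht => hΦ u hu i hi1 hin t ht
  -- uniform bounds from continuity
  have bound : ∀ g : ℝ → ℝ, ContinuousOn g (Set.Icc 0 T) →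
      ∃ C, ∀ x ∈ Set.Icc (0:ℝ) T, |g x| ≤ C := by
    intro g hg
    obtain ⟨C, hC⟩ := isCompact_Icc.exists_bound_of_continuousOn hg
    exact ⟨C, fun x hx => by simpa [Real.norm_eq_abs] using hC x hx⟩
  -- uniform convergence of powers of the primitives
  have hWpow : ∀ k : ℕ, TendstoUniformlyOn (fun m t => W m t ^ k)
      (fun t => w t ^ k) atTop (Set.Icc 0 T) := by
    intro k
    induction k with
    | zero =>
      refine ((myTUOrefl (fun _ => (1:ℝ))).congr ?_).congr_right ?_
      · filter_upwards with m
        intro t _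
        exact (pow_zero _).symm
      · intro t _
        exact (pow_zero _).symm
    | succ k ih =>
      obtain ⟨Cw, hCw⟩ := bound w hw
      obtain ⟨Ck, hCk⟩ := bound (fun t => w t ^ k) (hw.pow k)
      refine ((myTUOmul ih hconv hCk hCw).congr ?_).congr_right ?_
      · filter_upwards with m
        intro t _
        exact (pow_succ _ _).symm
      · intro t _
        exact (pow_succ _ _).symm
  have hWdiv : ∀ k : ℕ, TendstoUniformlyOn (fun m t => W m t ^ k / (Nat.factorial k : ℝ))
      (fun t => w t ^ k / (Nat.factorial k : ℝ)) atTop (Set.Icc 0 T) :=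
    fun k => myTUOdiv _ (hWpow k)
  -- stability
  have stab : ∀ i, i ≤ n →
      TendstoUniformlyOn (fun m => Φ (W m) i) (Φ w i) atTop (Set.Icc 0 T) := by
    intro i
    induction i using Nat.strong_induction_on with
    | _ i IH =>
    intro hin
    rcases Nat.eq_zero_or_pos i with rfl | hi1
    · refine ((myTUOrefl (fun _ => (1:ℝ))).congr ?_).congr_right ?_
      · filter_upwards with m
        intro t _
        exact (hΦ0 (W m) t).symm
      · intro t _
        exact (hΦ0 w t).symm
    have hterm1 : ∀ k ∈ Finset.Icc 1 i, TendstoUniformlyOn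
        (fun m t => (-1:ℝ) ^ (k+1) * Φ (W m) (i-k) t
          * (W m t ^ k / (Nat.factorial k : ℝ)) * ∏ l ∈ Finset.Icc 1 k, f (i + 1 - l) t)
        (fun t => (-1:ℝ) ^ (k+1) * Φ w (i-k) t
          * (w t ^ k / (Nat.factorial k : ℝ)) * ∏ l ∈ Finset.Icc 1 k, f (i + 1 - l) t)
        atTop (Set.Icc 0 T) := by
      intro k hk
      rw [Finset.mem_Icc] at hk
      have hΦc : ContinuousOn (Φ w (i-k)) (Set.Icc 0 T) := contΦ w hw (i-k) (by omega)
      obtain ⟨C0, hC0⟩ := bound _ hΦc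
      obtain ⟨C1, hC1⟩ := bound (fun t => w t ^ k / (Nat.factorial k : ℝ))
        ((hw.pow k).div_const _)
      obtain ⟨C2, hC2⟩ := bound (fun t => (-1:ℝ)^(k+1) * Φ w (i-k) t)
        (continuousOn_const.mul hΦc)
      obtain ⟨C3, hC3⟩ := bound (fun t => (-1:ℝ)^(k+1) * Φ w (i-k) t
          * (w t ^ k / (Nat.factorial k : ℝ)))
        ((continuousOn_const.mul hΦc).mul ((hw.pow k).div_const _))
      obtain ⟨C4, hC4⟩ := bound _ (hPc i k hk.2 hin)
      have a1 := myTUOmul (myTUOrefl (fun _ => (-1:ℝ)^(k+1))) (IH (i-k) (by omega) (by omega))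
        (fun x _ => by rw [abs_pow, abs_neg, abs_one, one_pow]) hC0
      have a2 := myTUOmul a1 (hWdiv k) hC2 hC1
      exact myTUOmul a2 (myTUOrefl _) hC3 hC4
    have hterm2 : ∀ k ∈ Finset.Icc 1 i, TendstoUniformlyOn
        (fun m t => (-1:ℝ) ^ k * ∫ s in (0:ℝ)..t,
          Φ (W m) (i-k) s * (W m s ^ k / (Nat.factorial k : ℝ)) * fd i k s)
        (fun t => (-1:ℝ) ^ k * ∫ s in (0:ℝ)..t,
          Φ w (i-k) s * (w s ^ k / (Nat.factorial k : ℝ)) * fd i k s)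
        atTop (Set.Icc 0 T) := by
      intro k hk
      rw [Finset.mem_Icc] at hk
      have hΦc : ContinuousOn (Φ w (i-k)) (Set.Icc 0 T) := contΦ w hw (i-k) (by omega)
      obtain ⟨C0, hC0⟩ := bound _ hΦc
      obtain ⟨C1, hC1⟩ := bound (fun t => w t ^ k / (Nat.factorial k : ℝ))
        ((hw.pow k).div_const _)
      obtain ⟨C5, hC5⟩ := bound (fun t => Φ w (i-k) t * (w t ^ k / (Nat.factorial k : ℝ)))
        (hΦc.mul ((hw.pow k).div_const _))
      obtain ⟨C6, hC6⟩ := bound _ (hfdc i k hk.1 hk.2 hin)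
      have b1 := myTUOmul (IH (i-k) (by omega) (by omega)) (hWdiv k) hC0 hC1
      have b2 := myTUOmul b1 (myTUOrefl (fd i k)) hC5 hC6
      have hintf : ∀ m, IntegrableOn (fun s =>
          Φ (W m) (i-k) s * (W m s ^ k / (Nat.factorial k : ℝ)) * fd i k s)
          (Set.Icc 0 T) := fun m =>
        (((contΦ (W m) (hWc m) (i-k) (by omega)).mul
          (((hWc m).pow k).div_const _)).mul (hfdc i k hk.1 hk.2 hin)).integrableOn_Icc
      have hintl : IntegrableOn (fun s =>
          Φ w (i-k) s * (w s ^ k / (Nat.factorial k : ℝ)) * fd i k s) (Set.Icc 0 T) :=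
        ((hΦc.mul ((hw.pow k).div_const _)).mul (hfdc i k hk.1 hk.2 hin)).integrableOn_Icc
      have b3 := myTUOint hT0 hintf hintl b2
      obtain ⟨C7, hC7⟩ := bound (fun t => ∫ s in (0:ℝ)..t,
          Φ w (i-k) s * (w s ^ k / (Nat.factorial k : ℝ)) * fd i k s) (myPrimCont hintl)
      exact myTUOmul (myTUOrefl (fun _ => (-1:ℝ)^k)) b3
        (fun x _ => by rw [abs_pow, abs_neg, abs_one, one_pow]) hC7
    have sum1 := myTUOsum (Finset.Icc 1 i) _ _ hterm1
    have sum2 := myTUOsum (Finset.Icc 1 i) _ _ hterm2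
    refine ((sum1.add sum2).congr ?_).congr_right ?_
    · filter_upwards with m
      intro t ht
      exact (hΦ (W m) (hWc m) i hi1 hin t ht).symm
    · intro t ht
      exact (hΦ w hw i hi1 hin t ht).symm
  refine (stab n le_rfl).congr ?_
  filter_upwards with m
  intro t ht
  exact (ident m n le_rfl t ht).symm
end

section
/- For each j ≥ 1 let v_j : [0,T] → ℝ be integrable, set w_j(t) = ∫_0^t v_j(s) ds, and let J_n^{(j)} denote the iterated ordinary integrals built from f_1,…,f_n and v_j (J_0^{(j)}(t) = 1 and J_k^{(j)}(t) = ∫_0^t f_k(s) J_{k−1}^{(j)}(s) v_j(s) ds). Suppose w : [0,T] → ℝ is continuous, w_j(t) → w(t) as j → ∞ for every t ∈ [0,T], and there exists K > 0 with |w_j(t)| ≤ K for all j ≥ 1 and all t ∈ [0,T]. Then J_n^{(j)}(t) → Φ_n[w](t) as j → ∞ for every t ∈ [0,T]. -/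
open MeasureTheory Filter
open intervalIntegral

lemma prim_mul {T : ℝ} {a b a' b' : ℝ → ℝ}
    (ha' : IntegrableOn a' (Set.Icc 0 T))
    (hb' : IntegrableOn b' (Set.Icc 0 T))
    (ha : ∀ t ∈ Set.Icc (0:ℝ) T, a t = a 0 + ∫ s in (0:ℝ)..t, a' s)
    (hb : ∀ t ∈ Set.Icc (0:ℝ) T, b t = b 0 + ∫ s in (0:ℝ)..t, b' s)
    (hca : ContinuousOn a (Set.Icc 0 T)) (hcb : ContinuousOn b (Set.Icc 0 T)) :
    ∀ t ∈ Set.Icc (0:ℝ) T,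
      a t * b t = a 0 * b 0 + ∫ s in (0:ℝ)..t, (a s * b' s + a' s * b s) := by
  intro t ht
  obtain ⟨ht0, htT⟩ := ht
  have hcmp : IsCompact (Set.Icc (0:ℝ) T) := isCompact_Icc
  have hsub : Set.Ioc (0:ℝ) t ⊆ Set.Icc 0 T := fun x hx => ⟨hx.1.le, hx.2.trans htT⟩
  set μ : Measure ℝ := volume.restrict (Set.Ioc 0 t) with hμ
  have hA' : Integrable a' μ := (ha'.mono_set hsub)
  have hB' : Integrable b' μ := (hb'.mono_set hsub)
  have hab'T : IntegrableOn (fun s => a s * b' s) (Set.Icc 0 T) :=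
    IntegrableOn.continuousOn_mul hca hb' hcmp
  have ha'bT : IntegrableOn (fun s => a' s * b s) (Set.Icc 0 T) :=
    IntegrableOn.mul_continuousOn ha' hcb hcmp
  have hab' : Integrable (fun s => a s * b' s) μ := hab'T.mono_set hsub
  have ha'b : Integrable (fun s => a' s * b s) μ := ha'bT.mono_set hsub
  -- integrals of a', b'
  have hIa : ∫ x, a' x ∂μ = a t - a 0 := by
    rw [hμ, ← intervalIntegral.integral_of_le ht0]
    rw [ha t ⟨ht0, htT⟩]; ring
  have hIb : ∫ x, b' x ∂μ = b t - b 0 := by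
    rw [hμ, ← intervalIntegral.integral_of_le ht0]
    rw [hb t ⟨ht0, htT⟩]; ring
  -- the product integral
  set G : ℝ × ℝ → ℝ := fun p => a' p.1 * b' p.2 with hGdef
  have hG : Integrable G (μ.prod μ) := hA'.mul_prod hB'
  have hs : MeasurableSet {p : ℝ × ℝ | p.1 < p.2} :=
    measurableSet_lt measurable_fst measurable_snd
  have hGsplit : ∫ p, G p ∂(μ.prod μ)
      = (∫ p, Set.indicator {p : ℝ × ℝ | p.1 < p.2} G p ∂(μ.prod μ))
        + ∫ p, Set.indicator {p : ℝ × ℝ | p.1 < p.2}ᶜ G p ∂(μ.prod μ) := by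
    rw [← integral_add (hG.indicator hs) (hG.indicator hs.compl)]
    congr 1
    ext p
    exact (congrFun (Set.indicator_self_add_compl {p : ℝ × ℝ | p.1 < p.2} G) p).symm
  have hGmul : ∫ p, G p ∂(μ.prod μ) = (a t - a 0) * (b t - b 0) := by
    rw [hGdef, integral_prod_mul, hIa, hIb]
  -- Term 1 : region x < y
  have hT1 : (∫ p, Set.indicator {p : ℝ × ℝ | p.1 < p.2} G p ∂(μ.prod μ))
      = ∫ y, (a y - a 0) * b' y ∂μ := by
    rw [integral_prod_symm _ (hG.indicator hs)]
    refine setIntegral_congr_fun measurableSet_Ioc ?_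
    intro y hy
    have hinner : ∀ x, Set.indicator {p : ℝ × ℝ | p.1 < p.2} G (x, y)
        = Set.indicator (Set.Iio y) (fun x => a' x * b' y) x := by
      intro x
      simp [Set.indicator_apply, Set.mem_setOf_eq, Set.mem_Iio, hGdef]
    simp only [hinner]
    rw [MeasureTheory.integral_indicator measurableSet_Iio, Measure.restrict_restrict measurableSet_Iio]
    have hset : Set.Iio y ∩ Set.Ioc 0 t = Set.Ioo 0 y := by
      ext x
      simp only [Set.mem_inter_iff, Set.mem_Iio, Set.mem_Ioc, Set.mem_Ioo]
      exact ⟨fun h => ⟨h.2.1, h.1⟩, fun h => ⟨h.2, h.1, (h.2.le.trans hy.2)⟩⟩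
    rw [hset, MeasureTheory.integral_mul_const, ← integral_Ioc_eq_integral_Ioo,
      ← intervalIntegral.integral_of_le hy.1.le,
      ha y ⟨hy.1.le, hy.2.trans htT⟩]
    ring
  -- Term 2 : region y ≤ x
  have hT2 : (∫ p, Set.indicator {p : ℝ × ℝ | p.1 < p.2}ᶜ G p ∂(μ.prod μ))
      = ∫ x, a' x * (b x - b 0) ∂μ := by
    rw [integral_prod _ (hG.indicator hs.compl)]
    refine setIntegral_congr_fun measurableSet_Ioc ?_
    intro x hx
    have hinner : ∀ y, Set.indicator {p : ℝ × ℝ | p.1 < p.2}ᶜ G (x, y)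
        = Set.indicator (Set.Iic x) (fun y => a' x * b' y) y := by
      intro y
      simp only [Set.indicator_apply, Set.mem_compl_iff, Set.mem_setOf_eq, Set.mem_Iic, not_lt,
        hGdef]
    simp only [hinner]
    rw [MeasureTheory.integral_indicator measurableSet_Iic, Measure.restrict_restrict measurableSet_Iic]
    have hset : Set.Iic x ∩ Set.Ioc 0 t = Set.Ioc 0 x := by
      ext y
      simp only [Set.mem_inter_iff, Set.mem_Iic, Set.mem_Ioc]
      exact ⟨fun h => ⟨h.2.1, h.1⟩, fun h => ⟨h.2, h.1, h.2.trans hx.2⟩⟩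
    rw [hset, MeasureTheory.integral_const_mul, ← intervalIntegral.integral_of_le hx.1.le,
      hb x ⟨hx.1.le, hx.2.trans htT⟩]
    ring
  -- assemble
  have key : (a t - a 0) * (b t - b 0)
      = (∫ y, (a y - a 0) * b' y ∂μ) + ∫ x, a' x * (b x - b 0) ∂μ := by
    rw [← hT1, ← hT2, ← hGsplit, hGmul]
  have e1 : (∫ y, (a y - a 0) * b' y ∂μ) = (∫ y, a y * b' y ∂μ) - a 0 * (b t - b 0) := by
    have : (fun y => (a y - a 0) * b' y) = fun y => a y * b' y - a 0 * b' y := by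
      ext y; ring
    rw [this, integral_sub hab' (hB'.const_mul _), MeasureTheory.integral_const_mul, hIb]
  have e2 : (∫ x, a' x * (b x - b 0) ∂μ) = (∫ x, a' x * b x ∂μ) - (b 0) * (a t - a 0) := by
    have : (fun x => a' x * (b x - b 0)) = fun x => a' x * b x - b 0 * a' x := by
      ext x; ring
    rw [this, integral_sub ha'b (hA'.const_mul _), MeasureTheory.integral_const_mul, hIa]
  have hfin : ∫ s in (0:ℝ)..t, (a s * b' s + a' s * b s)
      = (∫ y, a y * b' y ∂μ) + ∫ x, a' x * b x ∂μ := by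
    rw [intervalIntegral.integral_of_le ht0, ← integral_add hab' ha'b]
  rw [hfin]
  rw [e1, e2] at key
  nlinarith [key]

lemma ii_of_icc {T t : ℝ} {g : ℝ → ℝ} (h : IntegrableOn g (Set.Icc 0 T))
    (ht : t ∈ Set.Icc (0:ℝ) T) : IntervalIntegrable g volume 0 t := by
  rw [intervalIntegrable_iff_integrableOn_Ioc_of_le ht.1]
  exact h.mono_set (fun x hx => ⟨hx.1.le, hx.2.trans ht.2⟩)

lemma prim_cont {T : ℝ} (hT : 0 ≤ T) {g : ℝ → ℝ} (h : IntegrableOn g (Set.Icc 0 T)) :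
    ContinuousOn (fun t => ∫ s in (0:ℝ)..t, g s) (Set.Icc 0 T) := by
  have : Set.Icc (0:ℝ) T = Set.uIcc 0 T := by
    rw [Set.uIcc_of_le hT]
  rw [this] at h ⊢
  exact intervalIntegral.continuousOn_primitive_interval h

lemma prim_pow {T : ℝ} (hT : 0 ≤ T) {v W : ℝ → ℝ} (hv : IntegrableOn v (Set.Icc 0 T))
    (hW : ∀ t, W t = ∫ s in (0:ℝ)..t, v s) :
    ∀ k : ℕ, ∀ t ∈ Set.Icc (0:ℝ) T,
      W t ^ (k+1) = ∫ s in (0:ℝ)..t, (((k:ℝ)+1) * W s ^ k * v s) := by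
  have hW0 : W 0 = 0 := by rw [hW, intervalIntegral.integral_same]
  have hWc : ContinuousOn W (Set.Icc 0 T) := by
    have := prim_cont hT hv
    exact this.congr (fun t _ => hW t)
  intro k
  induction k with
  | zero =>
    intro t ht
    rw [pow_one, hW t]
    refine intervalIntegral.integral_congr (fun s _ => ?_)
    norm_num
  | succ k ih =>
    intro t ht
    have hcWk : ContinuousOn (fun s => W s ^ (k+1)) (Set.Icc 0 T) := hWc.pow _
    have ha' : IntegrableOn (fun s => ((k:ℝ)+1) * W s ^ k * v s) (Set.Icc 0 T) := by
      have : ContinuousOn (fun s => ((k:ℝ)+1) * W s ^ k) (Set.Icc 0 T) :=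
        (continuousOn_const.mul (hWc.pow _))
      exact (IntegrableOn.continuousOn_mul this hv isCompact_Icc).congr_fun
        (fun s _ => by ring) isCompact_Icc.measurableSet
    have key := prim_mul ha' hv
      (a := fun t => W t ^ (k+1)) (b := W)
      (by intro t ht
          simp only [hW0, zero_pow, Nat.succ_ne_zero, ne_eq, not_false_iff]
          rw [zero_add]; exact ih t ht)
      (by intro t _; rw [hW0, zero_add]; exact hW t)
      hcWk hWc
    have := key t ht
    rw [hW0] at this
    simp only [mul_zero, zero_add] at this
    calc W t ^ (k+1+1) = W t ^ (k+1) * W t := by ring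
    _ = ∫ s in (0:ℝ)..t, (W s ^ (k+1) * v s + ((k:ℝ)+1) * W s ^ k * v s * W s) := this
    _ = ∫ s in (0:ℝ)..t, (((k:ℝ)+1+1) * W s ^ (k+1) * v s) := by
        refine intervalIntegral.integral_congr (fun s _ => ?_)
        push_cast; ring
    _ = ∫ s in (0:ℝ)..t, ((((k:ℕ)+1:ℕ):ℝ)+1) * W s ^ (k+1) * v s := by norm_num

lemma prim_ibp {T : ℝ} (hT : 0 ≤ T) {v W : ℝ → ℝ} (hv : IntegrableOn v (Set.Icc 0 T))
    (hW : ∀ t, W t = ∫ s in (0:ℝ)..t, v s)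
    {G G' : ℝ → ℝ} (hG' : IntegrableOn G' (Set.Icc 0 T))
    (hG : ∀ t ∈ Set.Icc (0:ℝ) T, G t = G 0 + ∫ s in (0:ℝ)..t, G' s)
    (hcG : ContinuousOn G (Set.Icc 0 T)) (k : ℕ) :
    ∀ t ∈ Set.Icc (0:ℝ) T,
      ∫ s in (0:ℝ)..t, G s * (W s ^ k / (Nat.factorial k : ℝ)) * v s
        = G t * (W t ^ (k+1) / (Nat.factorial (k+1) : ℝ))
          - ∫ s in (0:ℝ)..t, G' s * (W s ^ (k+1) / (Nat.factorial (k+1) : ℝ)) := by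
  intro t ht
  have hW0 : W 0 = 0 := by rw [hW, intervalIntegral.integral_same]
  have hWc : ContinuousOn W (Set.Icc 0 T) :=
    (prim_cont hT hv).congr (fun t _ => hW t)
  have hfacpos : (0:ℝ) < (Nat.factorial k : ℝ) := by
    exact_mod_cast Nat.factorial_pos k
  have hfacpos' : (0:ℝ) < (Nat.factorial (k+1) : ℝ) := by
    exact_mod_cast Nat.factorial_pos (k+1)
  have hfac : ((Nat.factorial (k+1)):ℝ) = ((k:ℝ)+1) * (Nat.factorial k : ℝ) := by
    rw [Nat.factorial_succ]; push_cast; ring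
  set b : ℝ → ℝ := fun t => W t ^ (k+1) / (Nat.factorial (k+1) : ℝ) with hbdef
  set b' : ℝ → ℝ := fun s => W s ^ k / (Nat.factorial k : ℝ) * v s with hb'def
  have hb'int : IntegrableOn b' (Set.Icc 0 T) := by
    exact IntegrableOn.continuousOn_mul ((hWc.pow _).div_const _) hv isCompact_Icc
  have hb0 : b 0 = 0 := by
    simp [hbdef, hW0, zero_pow (Nat.succ_ne_zero k)]
  have hb : ∀ t ∈ Set.Icc (0:ℝ) T, b t = b 0 + ∫ s in (0:ℝ)..t, b' s := by
    intro t ht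
    rw [hb0, zero_add]
    have hp := prim_pow hT hv hW k t ht
    have : ∫ s in (0:ℝ)..t, b' s
        = ∫ s in (0:ℝ)..t, (1 / (Nat.factorial (k+1) : ℝ)) * (((k:ℝ)+1) * W s ^ k * v s) := by
      refine intervalIntegral.integral_congr (fun s _ => ?_)
      have hne : (Nat.factorial k : ℝ) ≠ 0 := hfacpos.ne'
      simp only [hb'def]
      rw [hfac]
      field_simp
    rw [this, intervalIntegral.integral_const_mul, ← hp, hbdef]
    field_simp
  have hcb : ContinuousOn b (Set.Icc 0 T) := (hWc.pow _).div_const _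
  have key := prim_mul hG' hb'int hG hb hcG hcb t ht
  rw [hb0, mul_zero] at key
  have hsplit : ∫ s in (0:ℝ)..t, (G s * b' s + G' s * b s)
      = (∫ s in (0:ℝ)..t, G s * b' s) + ∫ s in (0:ℝ)..t, G' s * b s := by
    refine intervalIntegral.integral_add ?_ ?_
    · exact ii_of_icc (IntegrableOn.continuousOn_mul hcG hb'int isCompact_Icc) ht
    · exact ii_of_icc (IntegrableOn.mul_continuousOn hG' hcb isCompact_Icc) ht
  rw [hsplit, zero_add] at key
  have e : (∫ s in (0:ℝ)..t, G s * b' s)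
      = ∫ s in (0:ℝ)..t, G s * (W s ^ k / (Nat.factorial k : ℝ)) * v s := by
    refine intervalIntegral.integral_congr (fun s _ => ?_)
    simp only [hb'def]; ring
  rw [e] at key
  rw [key]
  ring

section helpers
variable {T : ℝ} {n : ℕ} {f : ℕ → ℝ → ℝ} {fd : ℕ → ℕ → ℝ → ℝ}

lemma Fcd (hT : 0 < T) (hf : ∀ i, 1 ≤ i → i ≤ n → ContDiffOn ℝ 1 (f i) (Set.Icc 0 T))
    {j k : ℕ} (hk1 : 1 ≤ k) (hkj : k ≤ j) (hjn : j ≤ n) :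
    ContDiffOn ℝ 1 (fun s => ∏ l ∈ Finset.Icc 1 k, f (j + 1 - l) s) (Set.Icc 0 T) := by
  have : ∀ u : Finset ℕ, u ⊆ Finset.Icc 1 k →
      ContDiffOn ℝ 1 (fun s => ∏ l ∈ u, f (j + 1 - l) s) (Set.Icc 0 T) := by
    intro u
    induction u using Finset.induction_on with
    | empty => intro _; simpa using contDiffOn_const
    | insert a u hnotmem ihu =>
      intro hsub
      have ha := hsub (Finset.mem_insert_self a u)
      rw [Finset.mem_Icc] at ha
      have h1 : 1 ≤ j + 1 - a := by omega
      have h2 : j + 1 - a ≤ n := by omega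
      have : (fun s => ∏ l ∈ insert a u, f (j + 1 - l) s)
          = fun s => f (j + 1 - a) s * ∏ l ∈ u, f (j + 1 - l) s := by
        ext s; rw [Finset.prod_insert hnotmem]
      rw [this]
      exact (hf _ h1 h2).mul (ihu (fun x hx => hsub (Finset.mem_insert_of_mem hx)))
  exact this _ (Finset.Subset.refl _)

lemma fd_cont (hT : 0 < T) (hf : ∀ i, 1 ≤ i → i ≤ n → ContDiffOn ℝ 1 (f i) (Set.Icc 0 T))
    (hfd : ∀ j k, 1 ≤ k → k ≤ j → j ≤ n → ∀ t ∈ Set.Icc (0:ℝ) T,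
      HasDerivWithinAt (fun s => ∏ l ∈ Finset.Icc 1 k, f (j + 1 - l) s)
        (fd j k t) (Set.Icc 0 T) t)
    {j k : ℕ} (hk1 : 1 ≤ k) (hkj : k ≤ j) (hjn : j ≤ n) :
    ContinuousOn (fd j k) (Set.Icc 0 T) := by
  have hUD : UniqueDiffOn ℝ (Set.Icc (0:ℝ) T) := uniqueDiffOn_Icc hT
  have hc : ContinuousOn
      (derivWithin (fun s => ∏ l ∈ Finset.Icc 1 k, f (j + 1 - l) s) (Set.Icc 0 T))
      (Set.Icc 0 T) :=
    (Fcd hT hf hk1 hkj hjn).continuousOn_derivWithin hUD le_rfl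
  refine hc.congr (fun t ht => ?_)
  exact ((hfd j k hk1 hkj hjn t ht).derivWithin (hUD t ht)).symm

lemma F_prim (hT : 0 < T) (hf : ∀ i, 1 ≤ i → i ≤ n → ContDiffOn ℝ 1 (f i) (Set.Icc 0 T))
    (hfd : ∀ j k, 1 ≤ k → k ≤ j → j ≤ n → ∀ t ∈ Set.Icc (0:ℝ) T,
      HasDerivWithinAt (fun s => ∏ l ∈ Finset.Icc 1 k, f (j + 1 - l) s)
        (fd j k t) (Set.Icc 0 T) t)
    {j k : ℕ} (hk1 : 1 ≤ k) (hkj : k ≤ j) (hjn : j ≤ n) :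
    ∀ t ∈ Set.Icc (0:ℝ) T,
      (∏ l ∈ Finset.Icc 1 k, f (j + 1 - l) t)
        = (∏ l ∈ Finset.Icc 1 k, f (j + 1 - l) (0:ℝ)) + ∫ s in (0:ℝ)..t, fd j k s := by
  intro t ht
  have hfdint : IntegrableOn (fd j k) (Set.Icc 0 T) :=
    (fd_cont hT hf hfd hk1 hkj hjn).integrableOn_Icc
  have h := intervalIntegral.integral_eq_sub_of_hasDeriv_right_of_le ht.1
    (((Fcd hT hf hk1 hkj hjn).continuousOn).mono
      (Set.Icc_subset_Icc le_rfl ht.2))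
    (fun x hx => (hfd j k hk1 hkj hjn x ⟨hx.1.le, hx.2.le.trans ht.2⟩).mono_of_mem_nhdsWithin
      (Icc_mem_nhdsGT_of_mem ⟨hx.1.le, lt_of_lt_of_le hx.2 ht.2⟩))
    (by
      rw [intervalIntegrable_iff_integrableOn_Ioc_of_le ht.1]
      exact hfdint.mono_set (fun x hx => ⟨hx.1.le, hx.2.trans ht.2⟩))
  rw [h]; ring
end helpers


lemma partA {T : ℝ} (hT : 0 < T) {n : ℕ}
    {f : ℕ → ℝ → ℝ}
    (hf : ∀ i, 1 ≤ i → i ≤ n → ContDiffOn ℝ 1 (f i) (Set.Icc 0 T))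
    {fd : ℕ → ℕ → ℝ → ℝ}
    (hfd : ∀ j k, 1 ≤ k → k ≤ j → j ≤ n → ∀ t ∈ Set.Icc (0:ℝ) T,
      HasDerivWithinAt (fun s => ∏ l ∈ Finset.Icc 1 k, f (j + 1 - l) s)
        (fd j k t) (Set.Icc 0 T) t)
    {Φ : (ℝ → ℝ) → ℕ → ℝ → ℝ}
    (hΦ0 : ∀ u t, Φ u 0 t = 1)
    (hΦ : ∀ u : ℝ → ℝ, ContinuousOn u (Set.Icc 0 T) →
      ∀ j, 1 ≤ j → j ≤ n → ∀ t ∈ Set.Icc (0:ℝ) T,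
      Φ u j t
        = (∑ k ∈ Finset.Icc 1 j,
            (-1 : ℝ) ^ (k + 1) * Φ u (j - k) t
              * (u t ^ k / (Nat.factorial k : ℝ))
              * ∏ l ∈ Finset.Icc 1 k, f (j + 1 - l) t)
        + ∑ k ∈ Finset.Icc 1 j,
            (-1 : ℝ) ^ k *
              ∫ s in (0:ℝ)..t,
                Φ u (j - k) s * (u s ^ k / (Nat.factorial k : ℝ)) * fd j k s)
    {vm : ℝ → ℝ} (hvm : IntegrableOn vm (Set.Icc 0 T))
    {Jm : ℕ → ℝ → ℝ}
    (hJm0 : ∀ t, Jm 0 t = 1)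
    (hJm : ∀ k, 1 ≤ k → k ≤ n → ∀ t,
      Jm k t = ∫ s in (0:ℝ)..t, f k s * Jm (k-1) s * vm s) :
    ∀ j, j ≤ n → ContinuousOn (Jm j) (Set.Icc 0 T) ∧
      ∀ t ∈ Set.Icc (0:ℝ) T, Jm j t = Φ (fun x => ∫ s in (0:ℝ)..x, vm s) j t := by
  have hT0 : (0:ℝ) ≤ T := hT.le
  set W : ℝ → ℝ := fun x => ∫ s in (0:ℝ)..x, vm s with hWdef
  have hW : ∀ x, W x = ∫ s in (0:ℝ)..x, vm s := fun x => rfl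
  have hW0 : W 0 = 0 := intervalIntegral.integral_same
  have hWc : ContinuousOn W (Set.Icc 0 T) := prim_cont hT0 hvm
  intro j
  induction j using Nat.strong_induction_on with
  | _ j ih =>
  intro hjn
  rcases Nat.eq_zero_or_pos j with hj0 | hj1
  · subst hj0
    refine ⟨continuousOn_const.congr (fun t _ => hJm0 t), fun t ht => ?_⟩
    rw [hJm0 t, hΦ0]
  replace hj1 : 1 ≤ j := hj1
  have hprev : ∀ i, i < j → ContinuousOn (Jm i) (Set.Icc 0 T) ∧
      ∀ t ∈ Set.Icc (0:ℝ) T, Jm i t = Φ W i t :=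
    fun i hi => ih i hi (by omega)
  have hΦcont : ∀ i, i < j → ContinuousOn (Φ W i) (Set.Icc 0 T) := fun i hi =>
    ((hprev i hi).1).congr (fun t ht => ((hprev i hi).2 t ht).symm)
  have hΦzero : ∀ i, 1 ≤ i → i < j → Φ W i 0 = 0 := by
    intro i h1 hij
    rw [← (hprev i hij).2 0 ⟨le_rfl, hT0⟩, hJm i h1 (by omega),
      intervalIntegral.integral_same]
  have hΦprim : ∀ i, 1 ≤ i → i < j → ∀ t ∈ Set.Icc (0:ℝ) T,
      Φ W i t = Φ W i 0 + ∫ s in (0:ℝ)..t, f i s * Φ W (i-1) s * vm s := by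
    intro i hi1 hij t ht
    rw [hΦzero i hi1 hij, zero_add, ← (hprev i hij).2 t ht, hJm i hi1 (by omega)]
    refine intervalIntegral.integral_congr (fun s hs => ?_)
    have hs' : s ∈ Set.Icc (0:ℝ) T := by
      rw [Set.uIcc_of_le ht.1] at hs; exact ⟨hs.1, hs.2.trans ht.2⟩
    rw [(hprev (i-1) (by omega)).2 s hs']
  -- continuity of `Jm j`
  have hJprevcont := (hprev (j-1) (by omega)).1
  have hintjd : IntegrableOn (fun s => f j s * Jm (j-1) s * vm s) (Set.Icc 0 T) :=
    IntegrableOn.continuousOn_mul (((hf j hj1 hjn).continuousOn).mul hJprevcont)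
      hvm isCompact_Icc
  have hcontJ : ContinuousOn (Jm j) (Set.Icc 0 T) :=
    (prim_cont hT0 hintjd).congr (fun t _ => hJm j hj1 hjn t)
  refine ⟨hcontJ, ?_⟩
  intro t ht
  -- telescoping identity
  set Xk : ℕ → ℝ := fun k =>
    Φ W (j-k) t * (W t ^ k / (Nat.factorial k : ℝ)) * (∏ l ∈ Finset.Icc 1 k, f (j+1-l) t)
    - ∫ s in (0:ℝ)..t, Φ W (j-k) s * (W s ^ k / (Nat.factorial k : ℝ)) * fd j k s
    with hXkdef
  set Tp : ℕ → ℝ := fun p =>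
    ∫ s in (0:ℝ)..t, ((∏ l ∈ Finset.Icc 1 p, f (j+1-l) s) * Φ W (j-p) s)
      * (W s ^ (p-1) / (Nat.factorial (p-1) : ℝ)) * vm s with hTpdef
  -- last step (p = j)
  have stepj : Tp j = Xk j := by
    have hGprim : ∀ r ∈ Set.Icc (0:ℝ) T,
        (∏ l ∈ Finset.Icc 1 j, f (j+1-l) r)
          = (∏ l ∈ Finset.Icc 1 j, f (j+1-l) (0:ℝ)) + ∫ s in (0:ℝ)..r, fd j j s :=
      F_prim hT hf hfd hj1 le_rfl hjn
    have hG'int : IntegrableOn (fd j j) (Set.Icc 0 T) :=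
      (fd_cont hT hf hfd hj1 le_rfl hjn).integrableOn_Icc
    have hcG : ContinuousOn (fun s => ∏ l ∈ Finset.Icc 1 j, f (j+1-l) s) (Set.Icc 0 T) :=
      (Fcd hT hf hj1 le_rfl hjn).continuousOn
    have hI := prim_ibp hT0 hvm hW hG'int hGprim hcG (j-1) t ht
    have hj' : j - 1 + 1 = j := by omega
    rw [hj'] at hI
    have e1 : Tp j = ∫ s in (0:ℝ)..t,
        (∏ l ∈ Finset.Icc 1 j, f (j+1-l) s)
          * (W s ^ (j-1) / (Nat.factorial (j-1) : ℝ)) * vm s := by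
      rw [hTpdef]
      refine intervalIntegral.integral_congr (fun s _ => ?_)
      simp only [Nat.sub_self, hΦ0]
      ring
    have e2 : Xk j = (∏ l ∈ Finset.Icc 1 j, f (j+1-l) t)
        * (W t ^ j / (Nat.factorial j : ℝ))
        - ∫ s in (0:ℝ)..t, fd j j s * (W s ^ j / (Nat.factorial j : ℝ)) := by
      rw [hXkdef]
      simp only [Nat.sub_self, hΦ0, one_mul]
      rw [show (∫ s in (0:ℝ)..t, W s ^ j / (Nat.factorial j : ℝ) * fd j j s)
          = ∫ s in (0:ℝ)..t, fd j j s * (W s ^ j / (Nat.factorial j : ℝ)) from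
        intervalIntegral.integral_congr (fun s _ => by ring)]
      ring
    rw [e1, e2, hI]
  have step : ∀ p, 1 ≤ p → p < j → Tp p = Xk p - Tp (p+1) := by
    intro p hp1 hpj
    have hsub1 : j - p - 1 = j - (p+1) := by omega
    have hjp1 : 1 ≤ j - p := by omega
    have hjpj : j - p < j := by omega
    have hjp1j : j - (p+1) < j := by omega
    have hFmul : ∀ s : ℝ, (∏ l ∈ Finset.Icc 1 (p+1), f (j+1-l) s)
        = (∏ l ∈ Finset.Icc 1 p, f (j+1-l) s) * f (j-p) s := by
      intro s
      rw [Finset.prod_Icc_succ_top (by omega : 1 ≤ p+1)]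
      congr 2
      omega
    -- the product F j p * Φ W (j-p) is a primitive
    have haprim : ∀ r ∈ Set.Icc (0:ℝ) T,
        (∏ l ∈ Finset.Icc 1 p, f (j+1-l) r)
          = (∏ l ∈ Finset.Icc 1 p, f (j+1-l) (0:ℝ)) + ∫ s in (0:ℝ)..r, fd j p s :=
      F_prim hT hf hfd hp1 hpj.le hjn
    have hfdpint : IntegrableOn (fd j p) (Set.Icc 0 T) :=
      (fd_cont hT hf hfd hp1 hpj.le hjn).integrableOn_Icc
    have hcF : ContinuousOn (fun s => ∏ l ∈ Finset.Icc 1 p, f (j+1-l) s) (Set.Icc 0 T) :=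
      (Fcd hT hf hp1 hpj.le hjn).continuousOn
    have hcF1 : ContinuousOn (fun s => ∏ l ∈ Finset.Icc 1 (p+1), f (j+1-l) s)
        (Set.Icc 0 T) := (Fcd hT hf (by omega) (by omega) hjn).continuousOn
    have hcΦ := hΦcont (j-p) hjpj
    have hcΦ1 := hΦcont (j-(p+1)) hjp1j
    have hcΦ1' : ContinuousOn (Φ W (j-p-1)) (Set.Icc 0 T) := by
      rw [hsub1]; exact hcΦ1
    have hcfjp : ContinuousOn (f (j-p)) (Set.Icc 0 T) :=
      (hf (j-p) hjp1 (by omega)).continuousOn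
    have hb'int : IntegrableOn (fun s => f (j-p) s * Φ W (j-p-1) s * vm s)
        (Set.Icc 0 T) :=
      IntegrableOn.continuousOn_mul (hcfjp.mul hcΦ1') hvm isCompact_Icc
    have hbprim : ∀ r ∈ Set.Icc (0:ℝ) T,
        Φ W (j-p) r = Φ W (j-p) 0 + ∫ s in (0:ℝ)..r, f (j-p) s * Φ W ((j-p)-1) s * vm s :=
      hΦprim (j-p) hjp1 hjpj
    have hGprim := prim_mul hfdpint hb'int haprim hbprim hcF hcΦ
    have hG'int : IntegrableOn (fun s =>
        ((∏ l ∈ Finset.Icc 1 p, f (j+1-l) s) * (f (j-p) s * Φ W (j-p-1) s * vm s)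
          + fd j p s * Φ W (j-p) s)) (Set.Icc 0 T) := by
      refine MeasureTheory.Integrable.add ?_ ?_
      · refine (IntegrableOn.continuousOn_mul
          (hcF.mul (hcfjp.mul hcΦ1')) hvm isCompact_Icc).congr_fun
          (fun s _ => by simp only [Pi.mul_apply]; ring) measurableSet_Icc
      · exact ((fd_cont hT hf hfd hp1 hpj.le hjn).mul hcΦ).integrableOn_Icc
    have hI := prim_ibp hT0 hvm hW hG'int hGprim (hcF.mul hcΦ) (p-1) t ht
    have hp' : p - 1 + 1 = p := by omega
    rw [hp'] at hI
    -- identify LHS with `Tp p`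
    have eL : Tp p = ∫ s in (0:ℝ)..t,
        (fun s => (∏ l ∈ Finset.Icc 1 p, f (j+1-l) s) * Φ W (j-p) s) s
          * (W s ^ (p-1) / (Nat.factorial (p-1) : ℝ)) * vm s := rfl
    -- split the RHS integral
    have hsplit : (∫ s in (0:ℝ)..t,
        (fun s => (∏ l ∈ Finset.Icc 1 p, f (j+1-l) s) * (f (j-p) s * Φ W (j-p-1) s * vm s)
          + fd j p s * Φ W (j-p) s) s * (W s ^ p / (Nat.factorial p : ℝ)))
        = (∫ s in (0:ℝ)..t, ((∏ l ∈ Finset.Icc 1 (p+1), f (j+1-l) s) * Φ W (j-(p+1)) s)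
            * (W s ^ ((p+1)-1) / (Nat.factorial ((p+1)-1) : ℝ)) * vm s)
          + ∫ s in (0:ℝ)..t,
              Φ W (j-p) s * (W s ^ p / (Nat.factorial p : ℝ)) * fd j p s := by
      rw [← intervalIntegral.integral_add
        (ii_of_icc (g := fun s => ((∏ l ∈ Finset.Icc 1 (p+1), f (j+1-l) s) * Φ W (j-(p+1)) s)
            * (W s ^ ((p+1)-1) / (Nat.factorial ((p+1)-1) : ℝ)) * vm s) ((IntegrableOn.continuousOn_mul
          ((hcF1.mul hcΦ1).mul ((hWc.pow ((p+1)-1)).div_const (Nat.factorial ((p+1)-1) : ℝ))) hvm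
            isCompact_Icc).congr_fun (fun s _ => by simp only [Pi.mul_apply, Pi.pow_apply]) measurableSet_Icc) ht)
        (ii_of_icc (g := fun s => Φ W (j-p) s * (W s ^ p / (Nat.factorial p : ℝ)) * fd j p s) (((hcΦ.mul ((hWc.pow _).div_const _)).mul
          (fd_cont hT hf hfd hp1 hpj.le hjn)).integrableOn_Icc) ht)]
      refine intervalIntegral.integral_congr (fun s _ => ?_)
      simp only [Nat.add_sub_cancel]
      rw [hFmul s, hsub1]
      ring
    rw [eL, hI, hsplit, hXkdef]
    have ebd : (fun s => (∏ l ∈ Finset.Icc 1 p, f (j+1-l) s) * Φ W (j-p) s) t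
        * (W t ^ p / (Nat.factorial p : ℝ))
        = Φ W (j-p) t * (W t ^ p / (Nat.factorial p : ℝ))
          * (∏ l ∈ Finset.Icc 1 p, f (j+1-l) t) := by ring
    rw [ebd, hTpdef]
    ring
  -- telescoping
  have tele : ∀ q, q < j → Tp (j - q) = ∑ k ∈ Finset.Icc (j-q) j, (-1:ℝ)^(k+(j-q)) * Xk k := by
    intro q
    induction q with
    | zero =>
      intro _
      simp only [Nat.sub_zero]
      rw [Finset.Icc_self, Finset.sum_singleton, stepj,
        Even.neg_one_pow ((⟨j, rfl⟩ : Even (j+j))), one_mul]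
    | succ q ihq =>
      intro hq
      have hrec := ihq (by omega)
      set p := j - (q+1) with hpdef
      have hp1 : 1 ≤ p := by omega
      have hpj : p < j := by omega
      have hpq : p + 1 = j - q := by omega
      have hstep := step p hp1 hpj
      rw [hstep, hpq, hrec]
      have hcons : Finset.Icc p j = Finset.cons p (Finset.Icc (p+1) j)
          (by simp [Finset.mem_Icc]) := by
        rw [Finset.Icc_eq_cons_Ioc hpj.le]
        congr 1
        exact (Finset.Icc_add_one_left_eq_Ioc p j).symm
      rw [← hpq, hcons, Finset.sum_cons, Even.neg_one_pow ((⟨p, rfl⟩ : Even (p+p))), one_mul]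
      have hsgn : ∀ k ∈ Finset.Icc (p+1) j,
          (-1:ℝ)^(k+(p+1)) * Xk k = -((-1:ℝ)^(k+p) * Xk k) := by
        intro k _
        rw [show k+(p+1) = (k+p)+1 from rfl, pow_succ]
        ring
      rw [Finset.sum_congr rfl hsgn, Finset.sum_neg_distrib]
      ring
  have hT1 : Tp 1 = ∑ k ∈ Finset.Icc 1 j, (-1:ℝ)^(k+1) * Xk k := by
    have := tele (j-1) (by omega)
    rw [show j-(j-1) = 1 by omega] at this
    exact this
  -- assemble
  have hJeq : Jm j t = Tp 1 := by
    rw [hJm j hj1 hjn t, hTpdef]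
    refine intervalIntegral.integral_congr (fun s hs => ?_)
    have hs' : s ∈ Set.Icc (0:ℝ) T := by
      rw [Set.uIcc_of_le ht.1] at hs; exact ⟨hs.1, hs.2.trans ht.2⟩
    rw [(hprev (j-1) (by omega)).2 s hs']
    simp [Nat.factorial]
  rw [hJeq, hT1, hΦ W hWc j hj1 hjn t ht]
  rw [← Finset.sum_add_distrib]
  refine Finset.sum_congr rfl (fun k hk => ?_)
  rw [hXkdef]
  simp only
  rw [pow_succ]
  ring

lemma abs_triple {a b c A B C : ℝ} (ha : |a| ≤ A) (hb : |b| ≤ B) (hc : |c| ≤ C) :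
    |a * b * c| ≤ A * B * C := by
  have h1 : (0:ℝ) ≤ A := (abs_nonneg a).trans ha
  have h2 : (0:ℝ) ≤ B := (abs_nonneg b).trans hb
  calc |a * b * c| = |a| * |b| * |c| := by rw [abs_mul, abs_mul]
  _ ≤ A * B * C := by
      apply mul_le_mul (mul_le_mul ha hb (abs_nonneg b) h1) hc (abs_nonneg c)
      positivity

lemma partB_bound {T : ℝ} (hT : 0 < T) {n : ℕ}
    {f : ℕ → ℝ → ℝ}
    (hf : ∀ i, 1 ≤ i → i ≤ n → ContDiffOn ℝ 1 (f i) (Set.Icc 0 T))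
    {fd : ℕ → ℕ → ℝ → ℝ}
    (hfd : ∀ j k, 1 ≤ k → k ≤ j → j ≤ n → ∀ t ∈ Set.Icc (0:ℝ) T,
      HasDerivWithinAt (fun s => ∏ l ∈ Finset.Icc 1 k, f (j + 1 - l) s)
        (fd j k t) (Set.Icc 0 T) t)
    {Φ : (ℝ → ℝ) → ℕ → ℝ → ℝ}
    (hΦ0 : ∀ u t, Φ u 0 t = 1)
    (hΦ : ∀ u : ℝ → ℝ, ContinuousOn u (Set.Icc 0 T) →
      ∀ j, 1 ≤ j → j ≤ n → ∀ t ∈ Set.Icc (0:ℝ) T,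
      Φ u j t
        = (∑ k ∈ Finset.Icc 1 j,
            (-1 : ℝ) ^ (k + 1) * Φ u (j - k) t
              * (u t ^ k / (Nat.factorial k : ℝ))
              * ∏ l ∈ Finset.Icc 1 k, f (j + 1 - l) t)
        + ∑ k ∈ Finset.Icc 1 j,
            (-1 : ℝ) ^ k *
              ∫ s in (0:ℝ)..t,
                Φ u (j - k) s * (u s ^ k / (Nat.factorial k : ℝ)) * fd j k s)
    {K : ℝ} (hK : 0 < K) :
    ∀ j, j ≤ n → ∃ C : ℝ, 0 ≤ C ∧ ∀ u : ℝ → ℝ, ContinuousOn u (Set.Icc 0 T) →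
      (∀ t ∈ Set.Icc (0:ℝ) T, |u t| ≤ K) →
      ContinuousOn (Φ u j) (Set.Icc 0 T) ∧ ∀ t ∈ Set.Icc (0:ℝ) T, |Φ u j t| ≤ C := by
  intro j
  induction j using Nat.strong_induction_on with
  | _ j ih =>
  intro hjn
  rcases Nat.eq_zero_or_pos j with hj0 | hj1
  · subst hj0
    refine ⟨1, zero_le_one, fun u hu hub => ⟨?_, fun t ht => by rw [hΦ0]; norm_num⟩⟩
    exact continuousOn_const.congr (fun t _ => hΦ0 u t)
  replace hj1 : 1 ≤ j := hj1
  have hCs : ∀ i : ℕ, ∃ C : ℝ, 0 ≤ C ∧ (i < j → ∀ u : ℝ → ℝ,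
      ContinuousOn u (Set.Icc 0 T) → (∀ t ∈ Set.Icc (0:ℝ) T, |u t| ≤ K) →
      ContinuousOn (Φ u i) (Set.Icc 0 T) ∧ ∀ t ∈ Set.Icc (0:ℝ) T, |Φ u i t| ≤ C) := by
    intro i
    by_cases hi : i < j
    · obtain ⟨C, hC0, hCP⟩ := ih i hi (by omega)
      exact ⟨C, hC0, fun _ => hCP⟩
    · exact ⟨0, le_rfl, fun h => absurd h hi⟩
  choose Cb hCb0 hCbP using hCs
  have hMs : ∀ k : ℕ, ∃ M : ℝ, 0 ≤ M ∧ (1 ≤ k → k ≤ j →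
      ∀ s ∈ Set.Icc (0:ℝ) T, |∏ l ∈ Finset.Icc 1 k, f (j+1-l) s| ≤ M ∧ |fd j k s| ≤ M) := by
    intro k
    by_cases hk : 1 ≤ k ∧ k ≤ j
    · obtain ⟨M1, hM1⟩ :=
        isCompact_Icc.exists_bound_of_continuousOn (Fcd hT hf hk.1 hk.2 hjn).continuousOn
      obtain ⟨M2, hM2⟩ :=
        isCompact_Icc.exists_bound_of_continuousOn (fd_cont hT hf hfd hk.1 hk.2 hjn)
      have h0 : (0:ℝ) ≤ max M1 M2 := by
        have := hM1 0 ⟨le_rfl, hT.le⟩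
        exact le_trans (norm_nonneg _) (this.trans (le_max_left _ _))
      refine ⟨max M1 M2, h0, fun _ _ s hs => ⟨?_, ?_⟩⟩
      · exact le_trans (le_of_eq (Real.norm_eq_abs _).symm) ((hM1 s hs).trans (le_max_left _ _))
      · exact le_trans (le_of_eq (Real.norm_eq_abs _).symm) ((hM2 s hs).trans (le_max_right _ _))
    · exact ⟨0, le_rfl, fun h1 h2 => absurd ⟨h1, h2⟩ hk⟩
  choose Mb hMb0 hMbP using hMs
  refine ⟨∑ k ∈ Finset.Icc 1 j,
      Cb (j-k) * (K ^ k / (Nat.factorial k : ℝ)) * Mb k * (1 + T), ?_, ?_⟩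
  · refine Finset.sum_nonneg (fun k _ => ?_)
    have h1 := hCb0 (j-k); have h2 := hMb0 k; have h3 := hT.le
    positivity
  intro u hu hub
  have hfa : ∀ k : ℕ, (0:ℝ) < (Nat.factorial k : ℝ) := fun k => by
    exact_mod_cast Nat.factorial_pos k
  have hupow : ∀ k : ℕ, ∀ s ∈ Set.Icc (0:ℝ) T,
      |u s ^ k / (Nat.factorial k : ℝ)| ≤ K ^ k / (Nat.factorial k : ℝ) := by
    intro k s hs
    rw [abs_div, abs_pow, abs_of_pos (hfa k)]
    have := pow_le_pow_left₀ (abs_nonneg (u s)) (hub s hs) k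
    gcongr
  have hΦprev : ∀ i, i < j → ContinuousOn (Φ u i) (Set.Icc 0 T) ∧
      ∀ t ∈ Set.Icc (0:ℝ) T, |Φ u i t| ≤ Cb i := fun i hi => hCbP i hi u hu hub
  constructor
  · -- continuity
    have hc : ContinuousOn (fun t =>
        (∑ k ∈ Finset.Icc 1 j,
            (-1 : ℝ) ^ (k + 1) * Φ u (j - k) t
              * (u t ^ k / (Nat.factorial k : ℝ))
              * ∏ l ∈ Finset.Icc 1 k, f (j + 1 - l) t)
        + ∑ k ∈ Finset.Icc 1 j,
            (-1 : ℝ) ^ k *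
              ∫ s in (0:ℝ)..t,
                Φ u (j - k) s * (u s ^ k / (Nat.factorial k : ℝ)) * fd j k s)
        (Set.Icc 0 T) := by
      refine ContinuousOn.add ?_ ?_
      · refine continuousOn_finset_sum _ (fun k hk => ?_)
        rw [Finset.mem_Icc] at hk
        exact ((continuousOn_const.mul (hΦprev (j-k) (by omega)).1).mul
          ((hu.pow k).div_const _)).mul (Fcd hT hf hk.1 hk.2 hjn).continuousOn
      · refine continuousOn_finset_sum _ (fun k hk => ?_)
        rw [Finset.mem_Icc] at hk
        refine continuousOn_const.mul (prim_cont hT.le ?_)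
        exact (((hΦprev (j-k) (by omega)).1.mul ((hu.pow k).div_const _)).mul
          (fd_cont hT hf hfd hk.1 hk.2 hjn)).integrableOn_Icc
    exact hc.congr (fun t ht => hΦ u hu j hj1 hjn t ht)
  · intro t ht
    rw [hΦ u hu j hj1 hjn t ht]
    have hb : ∀ k ∈ Finset.Icc 1 j,
        |(-1 : ℝ) ^ (k + 1) * Φ u (j - k) t
            * (u t ^ k / (Nat.factorial k : ℝ))
            * ∏ l ∈ Finset.Icc 1 k, f (j + 1 - l) t|
          ≤ Cb (j-k) * (K ^ k / (Nat.factorial k : ℝ)) * Mb k := by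
      intro k hk
      rw [Finset.mem_Icc] at hk
      have e : |(-1 : ℝ) ^ (k + 1) * Φ u (j - k) t| = |Φ u (j-k) t| := by
        rw [abs_mul, abs_pow, abs_neg, abs_one, one_pow, one_mul]
      refine abs_triple ?_ (hupow k t ht) ((hMbP k hk.1 hk.2 t ht).1)
      rw [e]
      exact (hΦprev (j-k) (by omega)).2 t ht
    have hi : ∀ k ∈ Finset.Icc 1 j,
        |(-1 : ℝ) ^ k * ∫ s in (0:ℝ)..t,
            Φ u (j - k) s * (u s ^ k / (Nat.factorial k : ℝ)) * fd j k s|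
          ≤ Cb (j-k) * (K ^ k / (Nat.factorial k : ℝ)) * Mb k * T := by
      intro k hk
      rw [Finset.mem_Icc] at hk
      rw [abs_mul, abs_pow, abs_neg, abs_one, one_pow, one_mul]
      have hle : ∀ x ∈ Set.uIoc (0:ℝ) t,
          ‖Φ u (j - k) x * (u x ^ k / (Nat.factorial k : ℝ)) * fd j k x‖
            ≤ Cb (j-k) * (K ^ k / (Nat.factorial k : ℝ)) * Mb k := by
        intro x hx
        rw [Set.uIoc_of_le ht.1] at hx
        have hx' : x ∈ Set.Icc (0:ℝ) T := ⟨hx.1.le, hx.2.trans ht.2⟩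
        rw [Real.norm_eq_abs]
        exact abs_triple ((hΦprev (j-k) (by omega)).2 x hx') (hupow k x hx')
          ((hMbP k hk.1 hk.2 x hx').2)
      have := intervalIntegral.norm_integral_le_of_norm_le_const hle
      rw [Real.norm_eq_abs] at this
      refine this.trans ?_
      rw [sub_zero]
      rw [abs_of_nonneg ht.1]
      have hnn : (0:ℝ) ≤ Cb (j-k) * (K ^ k / (Nat.factorial k : ℝ)) * Mb k := by
        have h1 := hCb0 (j-k); have h2 := hMb0 k; have h3 := (hfa k).le
        positivity
      exact mul_le_mul_of_nonneg_left ht.2 hnn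
    calc |∑ k ∈ Finset.Icc 1 j, (-1 : ℝ) ^ (k + 1) * Φ u (j - k) t
            * (u t ^ k / (Nat.factorial k : ℝ))
            * ∏ l ∈ Finset.Icc 1 k, f (j + 1 - l) t
          + ∑ k ∈ Finset.Icc 1 j, (-1 : ℝ) ^ k * ∫ s in (0:ℝ)..t,
              Φ u (j - k) s * (u s ^ k / (Nat.factorial k : ℝ)) * fd j k s|
        ≤ (∑ k ∈ Finset.Icc 1 j, Cb (j-k) * (K ^ k / (Nat.factorial k : ℝ)) * Mb k)
          + ∑ k ∈ Finset.Icc 1 j, Cb (j-k) * (K ^ k / (Nat.factorial k : ℝ)) * Mb k * T := by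
          refine (abs_add_le _ _).trans (add_le_add ?_ ?_)
          · exact (Finset.abs_sum_le_sum_abs _ _).trans (Finset.sum_le_sum hb)
          · exact (Finset.abs_sum_le_sum_abs _ _).trans (Finset.sum_le_sum hi)
    _ = ∑ k ∈ Finset.Icc 1 j,
          Cb (j-k) * (K ^ k / (Nat.factorial k : ℝ)) * Mb k * (1 + T) := by
        rw [← Finset.sum_add_distrib]
        exact Finset.sum_congr rfl (fun k _ => by ring)



/-- Pathwise content of the first assertion of Theorem 2.1 (hypotheses
(H1)-(H3)): if the primitives `w_j(t) = ∫₀ᵗ v_j` converge pointwise on `[0,T]`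
to a continuous `w` and are uniformly bounded by `K`, then
`J_n^{(j)}(t) → Φ_n[w](t)` for every `t ∈ [0,T]`. -/
theorem stmt10
    (T : ℝ) (hT : 0 < T) (n : ℕ) (hn : 1 ≤ n)
    (f : ℕ → ℝ → ℝ)
    (hf : ∀ i, 1 ≤ i → i ≤ n → ContDiffOn ℝ 1 (f i) (Set.Icc 0 T))
    (fd : ℕ → ℕ → ℝ → ℝ)
    (hfd : ∀ j k, 1 ≤ k → k ≤ j → j ≤ n → ∀ t ∈ Set.Icc (0:ℝ) T,
      HasDerivWithinAt (fun s => ∏ l ∈ Finset.Icc 1 k, f (j + 1 - l) s)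
        (fd j k t) (Set.Icc 0 T) t)
    (Φ : (ℝ → ℝ) → ℕ → ℝ → ℝ)
    (hΦ0 : ∀ u t, Φ u 0 t = 1)
    (hΦ : ∀ u : ℝ → ℝ, ContinuousOn u (Set.Icc 0 T) →
      ∀ j, 1 ≤ j → j ≤ n → ∀ t ∈ Set.Icc (0:ℝ) T,
      Φ u j t
        = (∑ k ∈ Finset.Icc 1 j,
            (-1 : ℝ) ^ (k + 1) * Φ u (j - k) t
              * (u t ^ k / (Nat.factorial k : ℝ))
              * ∏ l ∈ Finset.Icc 1 k, f (j + 1 - l) t)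
        + ∑ k ∈ Finset.Icc 1 j,
            (-1 : ℝ) ^ k *
              ∫ s in (0:ℝ)..t,
                Φ u (j - k) s * (u s ^ k / (Nat.factorial k : ℝ)) * fd j k s)
    (v : ℕ → ℝ → ℝ) (hv : ∀ j, IntegrableOn (v j) (Set.Icc 0 T))
    (J : ℕ → ℕ → ℝ → ℝ)
    (hJ0 : ∀ j t, J j 0 t = 1)
    (hJ : ∀ j k, 1 ≤ k → k ≤ n → ∀ t,
      J j k t = ∫ s in (0:ℝ)..t, f k s * J j (k - 1) s * v j s)
    (w : ℝ → ℝ) (hw : ContinuousOn w (Set.Icc 0 T))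
    (hconv : ∀ t ∈ Set.Icc (0:ℝ) T,
      Tendsto (fun j => ∫ s in (0:ℝ)..t, v j s) atTop (nhds (w t)))
    (K : ℝ) (hK : 0 < K)
    (hbound : ∀ j, ∀ t ∈ Set.Icc (0:ℝ) T, |∫ s in (0:ℝ)..t, v j s| ≤ K) :
    ∀ t ∈ Set.Icc (0:ℝ) T,
      Tendsto (fun j => J j n t) atTop (nhds (Φ w n t)) := by
  have hT0 : (0:ℝ) ≤ T := hT.le
  set Wf : ℕ → ℝ → ℝ := fun m x => ∫ s in (0:ℝ)..x, v m s with hWf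
  have hWfc : ∀ m, ContinuousOn (Wf m) (Set.Icc 0 T) := fun m => prim_cont hT0 (hv m)
  have hWfb : ∀ m, ∀ t ∈ Set.Icc (0:ℝ) T, |Wf m t| ≤ K := fun m => hbound m
  have hA : ∀ m j, j ≤ n → ContinuousOn (J m j) (Set.Icc 0 T) ∧
      ∀ t ∈ Set.Icc (0:ℝ) T, J m j t = Φ (Wf m) j t := fun m =>
    partA hT hf hfd hΦ0 hΦ (hv m) (hJ0 m) (fun k h1 h2 t => hJ m k h1 h2 t)
  have hB : ∀ j, j ≤ n → ∀ t ∈ Set.Icc (0:ℝ) T,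
      Tendsto (fun m => Φ (Wf m) j t) atTop (nhds (Φ w j t)) := by
    intro j
    induction j using Nat.strong_induction_on with
    | _ j ih =>
    intro hjn
    rcases Nat.eq_zero_or_pos j with hj0 | hj1
    · subst hj0
      intro t ht
      simp only [hΦ0]
      exact tendsto_const_nhds
    replace hj1 : 1 ≤ j := hj1
    intro t ht
    have hrw : ∀ m, Φ (Wf m) j t
        = (∑ k ∈ Finset.Icc 1 j,
            (-1 : ℝ) ^ (k + 1) * Φ (Wf m) (j - k) t
              * (Wf m t ^ k / (Nat.factorial k : ℝ))
              * ∏ l ∈ Finset.Icc 1 k, f (j + 1 - l) t)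
        + ∑ k ∈ Finset.Icc 1 j,
            (-1 : ℝ) ^ k *
              ∫ s in (0:ℝ)..t,
                Φ (Wf m) (j - k) s * (Wf m s ^ k / (Nat.factorial k : ℝ)) * fd j k s :=
      fun m => hΦ (Wf m) (hWfc m) j hj1 hjn t ht
    rw [hΦ w hw j hj1 hjn t ht]
    refine Tendsto.congr (fun m => (hrw m).symm) ?_
    refine Tendsto.add ?_ ?_
    · refine tendsto_finset_sum _ (fun k hk => ?_)
      rw [Finset.mem_Icc] at hk
      have ihk := ih (j-k) (by omega) (by omega) t ht
      have hpow : Tendsto (fun m => Wf m t ^ k / (Nat.factorial k : ℝ)) atTop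
          (nhds (w t ^ k / (Nat.factorial k : ℝ))) := ((hconv t ht).pow k).div_const _
      exact ((tendsto_const_nhds.mul ihk).mul hpow).mul tendsto_const_nhds
    · refine tendsto_finset_sum _ (fun k hk => ?_)
      rw [Finset.mem_Icc] at hk
      obtain ⟨C, hC0, hCP⟩ := partB_bound hT hf hfd hΦ0 hΦ hK (j-k) (by omega)
      refine Tendsto.const_mul _ ?_
      have hΙ : Set.uIoc (0:ℝ) t = Set.Ioc 0 t := Set.uIoc_of_le ht.1
      have hsub : Set.Ioc (0:ℝ) t ⊆ Set.Icc 0 T := fun x hx => ⟨hx.1.le, hx.2.trans ht.2⟩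
      have hfa : (0:ℝ) < (Nat.factorial k : ℝ) := by exact_mod_cast Nat.factorial_pos k
      refine intervalIntegral.tendsto_integral_filter_of_dominated_convergence
        (fun s => C * (K ^ k / (Nat.factorial k : ℝ)) * |fd j k s|) ?_ ?_ ?_ ?_
      · refine Filter.Eventually.of_forall (fun m => ?_)
        have hcont : ContinuousOn
            (fun s => Φ (Wf m) (j-k) s * (Wf m s ^ k / (Nat.factorial k : ℝ)) * fd j k s)
            (Set.Icc 0 T) :=
          ((hCP (Wf m) (hWfc m) (hWfb m)).1.mul (((hWfc m).pow k).div_const _)).mul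
            (fd_cont hT hf hfd hk.1 hk.2 hjn)
        exact (hcont.mono (by rw [hΙ]; exact hsub)).aestronglyMeasurable measurableSet_uIoc
      · refine Filter.Eventually.of_forall (fun m => ?_)
        refine MeasureTheory.ae_of_all _ (fun x hx => ?_)
        rw [hΙ] at hx
        have hx' : x ∈ Set.Icc (0:ℝ) T := hsub hx
        rw [Real.norm_eq_abs]
        refine abs_triple ((hCP (Wf m) (hWfc m) (hWfb m)).2 x hx') ?_ le_rfl
        rw [abs_div, abs_pow, abs_of_pos hfa]
        have := pow_le_pow_left₀ (abs_nonneg (Wf m x)) (hWfb m x hx') k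
        gcongr
      · refine ii_of_icc ?_ ht
        exact (continuousOn_const.mul
          (fd_cont hT hf hfd hk.1 hk.2 hjn).abs).integrableOn_Icc
      · refine MeasureTheory.ae_of_all _ (fun x hx => ?_)
        rw [hΙ] at hx
        have hx' : x ∈ Set.Icc (0:ℝ) T := hsub hx
        have ihx := ih (j-k) (by omega) (by omega) x hx'
        exact ((ihx.mul (((hconv x hx').pow k).div_const _)).mul tendsto_const_nhds)
  intro t ht
  exact (hB n le_rfl t ht).congr (fun m => ((hA m n le_rfl).2 t ht).symm)
end
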